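/- arXiv:2212.04978 — 11 statements merged into one kernel-verified Lean document; each statement's English description precedes it below -/
import Mathlib

section
/- Let K/F be a finite Galois extension of degree n with Galois group Aut(K/F) = {σ_1, ..., σ_n}. Then elements x_1, ..., x_n ∈ K are linearly independent over F if and only if the determinant of the n×n matrix whose (i,j) entry is σ_i(x_j) is nonzero. -/
/-- Let K/F be a finite Galois extension of degree n with Galois group
Aut(K/F) = {σ_1, ..., σ_n}. Then x_1, ..., x_n ∈ K are linearly independent over F
iff det[σ_i(x_j)] ≠ 0. -/
theorem stmt0 (F K : Type*) [Field F] [Field K] [Algebra F K]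
    [FiniteDimensional F K] [IsGalois F K]
    (n : ℕ) (hn : Module.finrank F K = n)
    (σ : Fin n ≃ (K ≃ₐ[F] K)) (x : Fin n → K) :
    LinearIndependent F x ↔ (Matrix.of fun i j : Fin n => σ i (x j)).det ≠ 0 := by
  open Matrix in
  rcases Nat.eq_zero_or_pos n with rfl | hpos
  · simpa [Matrix.det_isEmpty] using linearIndependent_empty_type
  haveI : Nonempty (Fin n) := ⟨⟨0, hpos⟩⟩
  set M : Matrix (Fin n) (Fin n) K := Matrix.of fun i j : Fin n => σ i (x j) with hM
  constructor
  · intro hli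
    -- x is a basis
    have hcard : Fintype.card (Fin n) = Module.finrank F K := by simp [hn]
    let b : Module.Basis (Fin n) F K := basisOfLinearIndependentOfCardEqFinrank hli hcard
    have hbx : ⇑b = x := coe_basisOfLinearIndependentOfCardEqFinrank hli hcard
    -- trace matrix has nonzero determinant
    have hdetT : (Algebra.traceMatrix F x).det ≠ 0 := by
      rw [← hbx, Algebra.traceMatrix_of_basis]
      rw [← Matrix.nondegenerate_iff_det_ne_zero]
      exact (traceForm_nondegenerate F K).toMatrix b
    -- Matrix.transpose M * M is the image of the trace matrix
    have key : Matrix.transpose M * M = (Algebra.traceMatrix F x).map (algebraMap F K) := by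
      ext i j
      simp only [Matrix.mul_apply, Matrix.transpose_apply, Matrix.map_apply,
        Algebra.traceMatrix_apply, Algebra.traceForm_apply, hM, Matrix.of_apply]
      rw [trace_eq_sum_automorphisms]
      rw [← σ.sum_comp]
      simp [_root_.map_mul]
    intro h0
    apply hdetT
    have : (Matrix.transpose M * M).det = 0 := by rw [Matrix.det_mul, Matrix.det_transpose, h0, mul_zero]
    rw [key, ← RingHom.mapMatrix_apply, ← RingHom.map_det] at this
    exact (FaithfulSMul.algebraMap_injective F K) (by simpa using this)
  · intro hdet
    rw [Fintype.linearIndependent_iff]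
    intro g hg j
    have hMv : M *ᵥ (fun j => algebraMap F K (g j)) = 0 := by
      funext i
      have := congrArg (σ i) hg
      simpa [Matrix.mulVec, dotProduct, hM, Algebra.smul_def, _root_.map_mul,
        Finset.mul_sum, mul_comm, AlgEquiv.commutes] using this
    have hv : (fun j => algebraMap F K (g j)) = 0 := by
      have hinv : IsUnit M.det := isUnit_iff_ne_zero.mpr hdet
      have := congrArg ((M⁻¹) *ᵥ ·) hMv
      simpa [Matrix.mulVec_mulVec, Matrix.nonsing_inv_mul M hinv] using this
    have := congrFun hv j
    exact (FaithfulSMul.algebraMap_injective F K) (by simpa using this)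
end

section
/- For every integer n ≥ 1 there exists a nonzero polynomial h ∈ ℤ[X_1, ..., X_n] with the following property: for every prime power q and every monic irreducible polynomial f = X^n + a_1 X^{n-1} + ... + a_n over the finite field F_q, if the image of h(a_1, ..., a_n) in F_q is nonzero, then f is normal over F_q, i.e., the n roots of f in F_{q^n} are linearly independent over F_q. -/
open Polynomial in
/-- The product over all permutations `π` of the determinant of the "circulant" matrix
`(X_{π(i+j)})_{i,j}`. -/
noncomputable def circProd (n : ℕ) : MvPolynomial (Fin n) ℤ :=
  ∏ π : Equiv.Perm (Fin n),
    Matrix.det (Matrix.of fun i j : Fin n => MvPolynomial.X (π (i + j)))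

lemma aeval_circProd {S : Type*} [CommRing S] (n : ℕ) (v : Fin n → S) :
    MvPolynomial.aeval v (circProd n) =
      ∏ π : Equiv.Perm (Fin n), Matrix.det (Matrix.of fun i j : Fin n => v (π (i + j))) := by
  rw [circProd, map_prod]
  refine Finset.prod_congr rfl fun π _ => ?_
  rw [AlgHom.map_det]
  congr 1
  ext i j
  simp

lemma circProd_isSymmetric (n : ℕ) : (circProd n).IsSymmetric := by
  intro e
  calc MvPolynomial.rename e (circProd n)
      = ∏ π : Equiv.Perm (Fin n),
          Matrix.det (Matrix.of fun i j : Fin n => MvPolynomial.X (R := ℤ) ((e * π) (i + j))) := by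
        rw [circProd, map_prod]
        refine Finset.prod_congr rfl fun π _ => ?_
        rw [AlgHom.map_det]
        congr 1
        ext i j
        simp [Equiv.Perm.mul_apply]
    _ = circProd n := by
        rw [circProd]
        exact Equiv.prod_comp (Equiv.mulLeft e)
          (fun π => Matrix.det (Matrix.of fun i j : Fin n => MvPolynomial.X (R := ℤ) (π (i + j))))

lemma circProd_ne_zero (n : ℕ) (hn : 1 ≤ n) : circProd n ≠ 0 := by
  haveI : NeZero n := ⟨by omega⟩
  rw [circProd]
  rw [Finset.prod_ne_zero_iff]
  intro π _ h0
  set z : Fin n := ⟨0, hn⟩ with hz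
  set pt : Fin n → ℤ := fun k => if k = z then 1 else 0 with hpt
  have hthis := congrArg (MvPolynomial.eval pt) h0
  rw [map_zero, RingHom.map_det] at hthis
  set σ : Equiv.Perm (Fin n) :=
    ⟨fun i => π⁻¹ z - i, fun i => π⁻¹ z - i, fun i => sub_sub_cancel _ _,
      fun i => sub_sub_cancel _ _⟩ with hσ
  have hiff : ∀ i j : Fin n, (π (i + j) = z) ↔ (j = σ i) := by
    intro i j
    rw [hσ]
    simp only [Equiv.coe_fn_mk]
    constructor
    · intro h
      have h2 : i + j = π⁻¹ z := by rw [← h]; simp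
      rw [← h2, add_sub_cancel_left]
    · intro h
      have h2 : i + j = π⁻¹ z := by rw [h, add_comm, sub_add_cancel]
      rw [h2]; simp
  have hmat : ((MvPolynomial.eval pt).mapMatrix
      (Matrix.of fun i j : Fin n => MvPolynomial.X (R := ℤ) (π (i + j)))) = σ.permMatrix ℤ := by
    ext i j
    rw [RingHom.mapMatrix_apply, Matrix.map_apply, Matrix.of_apply, MvPolynomial.eval_X]
    rw [Equiv.Perm.permMatrix, PEquiv.toMatrix_apply, Equiv.toPEquiv_apply]
    simp only [Option.mem_some_iff, hpt]
    exact if_congr ((hiff i j).trans eq_comm) rfl rfl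
  rw [hmat, Matrix.det_permutation] at hthis
  rcases Int.units_eq_one_or (Equiv.Perm.sign σ) with hc | hc <;>
    rw [hc] at hthis <;> norm_num at hthis

/-- For every n ≥ 1 there is a nonzero h ∈ ℤ[X_1,...,X_n] such that for every finite
field F_q and monic irreducible f = X^n + a_1 X^{n-1} + ⋯ + a_n over F_q, if the image
of h(a_1,...,a_n) in F_q is nonzero then the n roots r, r^q, ..., r^{q^{n-1}} of f in
F_{q^n} are linearly independent over F_q. -/
theorem stmt1 (n : ℕ) (hn : 1 ≤ n) :
    ∃ h : MvPolynomial (Fin n) ℤ, h ≠ 0 ∧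
      ∀ (F K : Type) [Field F] [Fintype F] [Field K] [Algebra F K],
        Module.finrank F K = n →
        ∀ f : Polynomial F, f.Monic → Irreducible f → f.natDegree = n →
        MvPolynomial.aeval (fun i : Fin n => f.coeff (n - 1 - (i : ℕ))) h ≠ 0 →
        ∀ r : K, Polynomial.aeval r f = 0 →
          LinearIndependent F (fun i : Fin n => r ^ (Fintype.card F) ^ (i : ℕ)) := by
  classical
  -- get the preimage of `circProd n` under the elementary symmetric algebra map
  obtain ⟨h₀, hh₀⟩ := MvPolynomial.esymmAlgHom_surjective (σ := Fin n) (R := ℤ) (n := n)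
    (by simp) ⟨circProd n, circProd_isSymmetric n⟩
  have hh₀' : MvPolynomial.aeval (fun i : Fin n => MvPolynomial.esymm (Fin n) ℤ ((i : ℕ) + 1)) h₀
      = circProd n := by
    have := congrArg Subtype.val hh₀
    rwa [MvPolynomial.esymmAlgHom_apply] at this
  set s : Fin n → MvPolynomial (Fin n) ℤ :=
    fun i => MvPolynomial.C ((-1 : ℤ) ^ ((i : ℕ) + 1)) * MvPolynomial.X i with hs
  refine ⟨MvPolynomial.bind₁ s h₀, ?_, ?_⟩
  · -- nonzero
    intro h0
    have hdouble : MvPolynomial.bind₁ s (MvPolynomial.bind₁ s h₀) = h₀ := by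
      rw [MvPolynomial.bind₁_bind₁]
      have : (fun i : Fin n => MvPolynomial.bind₁ s (s i)) = MvPolynomial.X := by
        funext i
        rw [hs]
        simp only [map_mul, MvPolynomial.bind₁_C_right, MvPolynomial.bind₁_X_right]
        rw [← mul_assoc, ← MvPolynomial.C_mul, ← pow_add]
        have : ((-1 : ℤ)) ^ (((i : ℕ) + 1) + ((i : ℕ) + 1)) = 1 :=
          Even.neg_one_pow ⟨(i : ℕ) + 1, rfl⟩
        rw [this, MvPolynomial.C_1, one_mul]
      rw [this, MvPolynomial.bind₁_X_left, AlgHom.id_apply]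
    rw [h0, map_zero] at hdouble
    apply circProd_ne_zero n hn
    rw [← hh₀', ← hdouble, map_zero]
  · intro F K _ _ _ _ hrank f hmon hirr hdeg hne r hroot
    have hnpos : 0 < n := hn
    haveI : FiniteDimensional F K := Module.finite_of_finrank_pos (by rw [hrank]; omega)
    haveI : Finite K := Module.finite_of_finite F
    haveI : Fintype K := Fintype.ofFinite K
    set q : ℕ := Fintype.card F with hqdef
    have hq1 : 1 < q := Fintype.one_lt_card
    -- characteristic
    set p : ℕ := ringChar F with hpdef
    haveI : CharP F p := ringChar.charP F
    obtain ⟨e, hp, hcard⟩ := FiniteField.card F p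
    haveI : Fact p.Prime := ⟨hp⟩
    haveI : CharP K p := charP_of_injective_algebraMap (algebraMap F K).injective p
    haveI : ExpChar K p := ExpChar.prime hp
    -- the Frobenius algebra homs
    have hfix : ∀ (m : ℕ) (a : F),
        iterateFrobenius K p ((e : ℕ) * m) (algebraMap F K a) = algebraMap F K a := by
      intro m a
      rw [iterateFrobenius_def, ← map_pow]
      congr 1
      rw [pow_mul, ← hcard, FiniteField.pow_card_pow]
    set Ψ : ℕ → (K →ₐ[F] K) := fun m => AlgHom.mk' (iterateFrobenius K p ((e : ℕ) * m))
      (fun c x => by rw [Algebra.smul_def, Algebra.smul_def, map_mul, hfix]) with hΨdef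
    have hΨ : ∀ (m : ℕ) (x : K), Ψ m x = x ^ q ^ m := by
      intro m x
      show iterateFrobenius K p ((e : ℕ) * m) x = x ^ q ^ m
      rw [iterateFrobenius_def, pow_mul, ← hcard]
    set v : Fin n → K := fun k => r ^ q ^ (k : ℕ) with hv
    -- cardinality of K
    have hcardK : Fintype.card K = q ^ n := by
      rw [Module.card_eq_pow_finrank (K := F) (V := K), hrank]
    -- wraparound
    have hwrap : ∀ m : ℕ, r ^ q ^ (m + n) = r ^ q ^ m := by
      intro m
      have : q ^ (m + n) = q ^ m * q ^ n := pow_add q m n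
      rw [this, pow_mul, ← hcardK, FiniteField.pow_card]
    have hmod : ∀ m : ℕ, r ^ q ^ m = r ^ q ^ (m % n) := by
      intro m
      induction m using Nat.strong_induction_on with
      | _ m ih =>
        rcases Nat.lt_or_ge m n with h | h
        · rw [Nat.mod_eq_of_lt h]
        · obtain ⟨k, rfl⟩ : ∃ k, m = k + n := ⟨m - n, by omega⟩
          rw [hwrap k, ih k (by omega), Nat.add_mod_right]
    have hΨv : ∀ (m : ℕ) (j : Fin n), Ψ m (v j) = r ^ q ^ ((m + (j : ℕ)) % n) := by
      intro m j
      rw [hΨ, hv]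
      simp only
      rw [← pow_mul, ← pow_add, hmod, Nat.add_comm]
    -- v's are roots of f
    have hint : IsIntegral F r := IsIntegral.of_finite F r
    have hmin : minpoly F r = f := (minpoly.eq_of_irreducible_of_monic hirr hroot hmon).symm
    have hvroot : ∀ i : Fin n, Polynomial.aeval (v i) f = 0 := by
      intro i
      have h1 : v i = Ψ (i : ℕ) r := (hΨ (i : ℕ) r).symm
      rw [h1, Polynomial.aeval_algHom_apply, hroot, map_zero]
    -- injectivity of v
    have hkey : ∀ d : ℕ, 0 < d → d < n → r ^ q ^ d ≠ r := by
      intro d hd0 hdn hrd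
      have hrmem : r ∈ AlgHom.equalizer (Ψ d) (AlgHom.id F K) := by
        rw [AlgHom.mem_equalizer, hΨ, AlgHom.id_apply, hrd]
      have htop : Algebra.adjoin F {r} = ⊤ := by
        have h1 : Module.finrank F (Algebra.adjoin F {r}) = n := by
          rw [(Algebra.adjoin.powerBasis hint).finrank, Algebra.adjoin.powerBasis_dim, hmin, hdeg]
        rw [← Algebra.toSubmodule_eq_top]
        apply Submodule.eq_top_of_finrank_eq
        rw [hrank]
        exact h1
      have hall : ∀ x : K, x ^ q ^ d = x := by
        intro x
        have hx : x ∈ AlgHom.equalizer (Ψ d) (AlgHom.id F K) := by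
          have hle : Algebra.adjoin F {r} ≤ AlgHom.equalizer (Ψ d) (AlgHom.id F K) :=
            Algebra.adjoin_le (Set.singleton_subset_iff.mpr hrmem)
          exact hle (htop ▸ Algebra.mem_top)
        rw [AlgHom.mem_equalizer, hΨ, AlgHom.id_apply] at hx
        exact hx
      have h2qd : 2 ≤ q ^ d := by
        calc 2 ≤ q := hq1
        _ = q ^ 1 := (pow_one q).symm
        _ ≤ q ^ d := Nat.pow_le_pow_right (by omega) hd0
      set P : Polynomial K := Polynomial.X ^ q ^ d - Polynomial.X with hP
      have hPdeg : P.natDegree = q ^ d := by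
        rw [hP]
        rw [Polynomial.natDegree_sub_eq_left_of_natDegree_lt]
        · exact Polynomial.natDegree_X_pow _
        · rw [Polynomial.natDegree_X_pow, Polynomial.natDegree_X]; omega
      have hPne : P ≠ 0 := fun hc => by
        rw [hc, Polynomial.natDegree_zero] at hPdeg; omega
      apply hPne
      apply Polynomial.eq_zero_of_natDegree_lt_card_of_eval_eq_zero' P Finset.univ
      · intro x _
        rw [hP]
        simp [hall x]
      · rw [hPdeg, Finset.card_univ, hcardK]
        exact Nat.pow_lt_pow_right hq1 hdn
    have hvinj : Function.Injective v := by
      have haux : ∀ i j : Fin n, (i : ℕ) < (j : ℕ) → v i ≠ v j := by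
        intro i j hij hc
        have h1 := congrArg (Ψ (n - (j : ℕ))) hc
        rw [hΨv, hΨv] at h1
        have hd1 : (n - (j : ℕ) + (i : ℕ)) % n = n - (j : ℕ) + (i : ℕ) := by
          have := j.isLt; apply Nat.mod_eq_of_lt; omega
        have hd2 : (n - (j : ℕ) + (j : ℕ)) % n = 0 := by
          have := j.isLt
          have : n - (j : ℕ) + (j : ℕ) = n := by omega
          rw [this, Nat.mod_self]
        rw [hd1, hd2, pow_zero, pow_one] at h1
        exact hkey (n - (j : ℕ) + (i : ℕ)) (by have := j.isLt; omega)
          (by have := j.isLt; omega) h1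
      intro i j hc
      by_contra hne'
      have hij : (i : ℕ) ≠ (j : ℕ) := fun hh => hne' (Fin.ext hh)
      rcases Nat.lt_or_ge (i : ℕ) (j : ℕ) with h | h
      · exact haux i j h hc
      · exact haux j i (by omega) hc.symm
    -- the factorization of f over K
    set fK : Polynomial K := f.map (algebraMap F K) with hfKdef
    have hfKmonic : fK.Monic := hmon.map _
    have hfKne : fK ≠ 0 := hfKmonic.ne_zero
    have hfKdeg : fK.natDegree = n := by rw [hfKdef, hmon.natDegree_map, hdeg]
    have hfKroot : ∀ i : Fin n, fK.IsRoot (v i) := by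
      intro i
      have := hvroot i
      rwa [Polynomial.aeval_def, ← Polynomial.eval_map] at this
    have hgmonic : (∏ i : Fin n, (Polynomial.X - Polynomial.C (v i))).Monic :=
      Polynomial.monic_prod_of_monic _ _ (fun i _ => Polynomial.monic_X_sub_C (v i))
    have hgdeg : (∏ i : Fin n, (Polynomial.X - Polynomial.C (v i))).natDegree = n := by
      rw [Polynomial.natDegree_prod _ _ (fun i _ => Polynomial.X_sub_C_ne_zero (v i))]
      simp
    have hdvd : (∏ i : Fin n, (Polynomial.X - Polynomial.C (v i))) ∣ fK := by
      apply Finset.prod_dvd_of_coprime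
      · intro a _ b hb hab
        exact Polynomial.pairwise_coprime_X_sub_C hvinj hab
      · intro i _
        exact Polynomial.dvd_iff_isRoot.mpr (hfKroot i)
    have hfK : fK = ∏ i : Fin n, (Polynomial.X - Polynomial.C (v i)) := by
      obtain ⟨u, hu⟩ := hdvd
      have hune : u ≠ 0 := by
        intro hc; rw [hc, mul_zero] at hu; exact hfKne hu
      have hudeg : u.natDegree = 0 := by
        have := Polynomial.natDegree_mul hgmonic.ne_zero hune
        rw [← hu, hfKdeg, hgdeg] at this
        omega
      obtain ⟨c, hc⟩ := Polynomial.natDegree_eq_zero.mp hudeg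
      have hlc : (1 : K) = c := by
        have h1 := hfKmonic.leadingCoeff
        rw [hu, Polynomial.leadingCoeff_mul, hgmonic.leadingCoeff, one_mul, ← hc,
          Polynomial.leadingCoeff_C] at h1
        exact h1.symm
      rw [hu, ← hc, ← hlc, Polynomial.C_1, mul_one]
    -- coefficient identity
    have hcoeff : ∀ i : Fin n, algebraMap F K (f.coeff (n - 1 - (i : ℕ))) =
        (-1 : K) ^ ((i : ℕ) + 1) *
          MvPolynomial.aeval v (MvPolynomial.esymm (Fin n) ℤ ((i : ℕ) + 1)) := by
      intro i
      rw [← Polynomial.coeff_map]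
      rw [← hfKdef, hfK]
      have hprod : (∏ i : Fin n, (Polynomial.X - Polynomial.C (v i))) =
          ((Finset.univ.val.map v).map (fun t => Polynomial.X - Polynomial.C t)).prod := by
        rw [Multiset.map_map]
        rfl
      rw [hprod]
      have hcardv : Multiset.card (Finset.univ.val.map v) = n := by
        rw [Multiset.card_map]
        simp
      have hle : n - 1 - (i : ℕ) ≤ Multiset.card (Finset.univ.val.map v) := by
        rw [hcardv]; omega
      rw [Multiset.prod_X_sub_C_coeff _ hle, hcardv]
      have hidx : n - (n - 1 - (i : ℕ)) = (i : ℕ) + 1 := by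
        have := i.isLt; omega
      rw [hidx, MvPolynomial.aeval_esymm_eq_multiset_esymm]
    -- main evaluation chain
    set w : Fin n → K := fun i => algebraMap F K (f.coeff (n - 1 - (i : ℕ))) with hw
    have hA0 : MvPolynomial.aeval w (MvPolynomial.bind₁ s h₀) ≠ 0 := by
      have heq : algebraMap F K
          (MvPolynomial.aeval (fun i : Fin n => f.coeff (n - 1 - (i : ℕ)))
            (MvPolynomial.bind₁ s h₀)) = MvPolynomial.aeval w (MvPolynomial.bind₁ s h₀) := by
        rw [MvPolynomial.map_aeval, MvPolynomial.aeval_def, MvPolynomial.coe_eval₂Hom]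
        congr 1
        exact Subsingleton.elim _ _
      intro hc
      apply hne
      apply (algebraMap F K).injective
      rw [map_zero, heq, hc]
    have hstep : MvPolynomial.aeval w (MvPolynomial.bind₁ s h₀) =
        ∏ π : Equiv.Perm (Fin n), Matrix.det (Matrix.of fun i j : Fin n => v (π (i + j))) := by
      rw [MvPolynomial.aeval_bind₁]
      have h1 : (fun i : Fin n => MvPolynomial.aeval w (s i)) =
          fun i : Fin n => MvPolynomial.aeval v (MvPolynomial.esymm (Fin n) ℤ ((i : ℕ) + 1)) := by
        funext i
        rw [hs]
        simp only [map_mul, MvPolynomial.aeval_C, MvPolynomial.aeval_X]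
        rw [hw]
        simp only
        rw [hcoeff i]
        have halg : algebraMap ℤ K ((-1 : ℤ) ^ ((i : ℕ) + 1)) = (-1 : K) ^ ((i : ℕ) + 1) := by
          rw [map_pow, map_neg, map_one]
        rw [halg, ← mul_assoc, ← mul_pow]
        norm_num
      rw [h1]
      have h2 : MvPolynomial.aeval
          (fun i : Fin n => MvPolynomial.aeval v (MvPolynomial.esymm (Fin n) ℤ ((i : ℕ) + 1))) h₀
          = MvPolynomial.aeval v (circProd n) := by
        rw [← hh₀']
        rw [show (MvPolynomial.aeval
            (fun i : Fin n => MvPolynomial.esymm (Fin n) ℤ ((i : ℕ) + 1)) h₀ : MvPolynomial (Fin n) ℤ) =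
          MvPolynomial.bind₁ (fun i : Fin n => MvPolynomial.esymm (Fin n) ℤ ((i : ℕ) + 1)) h₀ from rfl]
        rw [MvPolynomial.aeval_bind₁]
      rw [h2, aeval_circProd]
    have hdet : Matrix.det (Matrix.of fun i j : Fin n => v (i + j)) ≠ 0 := by
      intro h0
      apply hA0
      rw [hstep]
      apply Finset.prod_eq_zero (Finset.mem_univ (1 : Equiv.Perm (Fin n)))
      simpa using h0
    -- conclude linear independence
    rw [Fintype.linearIndependent_iff]
    intro g hg
    have hsum0 : ∑ j : Fin n, v j * algebraMap F K (g j) = 0 := by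
      rw [← hg]
      refine Finset.sum_congr rfl fun j _ => ?_
      rw [Algebra.smul_def, mul_comm]
    have hmv : (Matrix.of fun i j : Fin n => v (i + j)).mulVec
        (fun j => algebraMap F K (g j)) = 0 := by
      funext i
      show ∑ j, v (i + j) * algebraMap F K (g j) = 0
      have hterm : ∀ j : Fin n, v (i + j) * algebraMap F K (g j) =
          Ψ (i : ℕ) (v j * algebraMap F K (g j)) := by
        intro j
        rw [map_mul]
        congr 1
        · rw [hΨv]
          show r ^ q ^ ((i + j : Fin n) : ℕ) = r ^ q ^ (((i : ℕ) + (j : ℕ)) % n)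
          rw [Fin.val_add]
        · exact ((Ψ (i : ℕ)).commutes (g j)).symm
      rw [Finset.sum_congr rfl (fun j _ => hterm j), ← map_sum, hsum0, map_zero]
    have hz := Matrix.eq_zero_of_mulVec_eq_zero hdet hmv
    intro i
    apply (algebraMap F K).injective
    rw [map_zero]
    exact congrFun hz i
end

section
/- For every integer n ≥ 1 there exists a nonzero polynomial h ∈ ℤ[X_1, ..., X_n] with the following property: for every field F and every monic separable irreducible polynomial f = X^n + a_1 X^{n-1} + ... + a_n over F whose Galois group over F (the Galois group of its splitting field K over F) is cyclic of order n, if h(a_1, ..., a_n) ≠ 0 in F, then the n roots of f in K form a basis of K as an F-vector space (i.e., f is a normal polynomial over F). -/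
open MvPolynomial Polynomial

/-- For every n ≥ 1 there is a nonzero h ∈ ℤ[X_1,...,X_n] such that for every field F
and monic separable irreducible f = X^n + a_1 X^{n-1} + ⋯ + a_n over F whose Galois
group (of its splitting field K) is cyclic of order n, if h(a_1,...,a_n) ≠ 0 in F then
the n roots of f in K (the orbit of any root under a generator of the Galois group)
form a basis of K over F. -/
theorem stmt2 (n : ℕ) (hn : 1 ≤ n) :
    ∃ h : MvPolynomial (Fin n) ℤ, h ≠ 0 ∧
      ∀ (F K : Type) [Field F] [Field K] [Algebra F K],
        ∀ f : Polynomial F, f.Monic → Irreducible f → f.Separable → f.natDegree = n →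
        Polynomial.IsSplittingField F K f →
        IsCyclic (K ≃ₐ[F] K) → Nat.card (K ≃ₐ[F] K) = n →
        MvPolynomial.aeval (fun i : Fin n => f.coeff (n - 1 - (i : ℕ))) h ≠ 0 →
        ∀ r : K, Polynomial.aeval r f = 0 →
        ∀ σ : K ≃ₐ[F] K, (∀ τ : K ≃ₐ[F] K, τ ∈ Subgroup.zpowers σ) →
          LinearIndependent F (fun i : Fin n => (σ ^ (i : ℕ)) r) ∧
          Submodule.span F (Set.range fun i : Fin n => (σ ^ (i : ℕ)) r) = ⊤ := by
  haveI : NeZero n := ⟨by omega⟩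
  haveI : Nonempty (Fin n) := ⟨⟨0, by omega⟩⟩
  -- the circulant determinant polynomial
  set R : MvPolynomial (Fin n) ℤ :=
    (Matrix.of fun i j : Fin n => (MvPolynomial.X (i + j) : MvPolynomial (Fin n) ℤ)).det with hR
  have hR0 : R ≠ 0 := by
    intro h0
    have h1 := congrArg (MvPolynomial.eval (fun k : Fin n => if k = 0 then (1 : ℤ) else 0)) h0
    rw [map_zero, hR, RingHom.map_det] at h1
    have hmat : (MvPolynomial.eval (fun k : Fin n => if k = 0 then (1 : ℤ) else 0)).mapMatrix
        (Matrix.of fun i j : Fin n => (MvPolynomial.X (i + j) : MvPolynomial (Fin n) ℤ))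
        = Equiv.Perm.permMatrix ℤ (Equiv.neg (Fin n)) := by
      ext i j
      simp only [RingHom.mapMatrix_apply, Matrix.map_apply, Matrix.of_apply, MvPolynomial.eval_X,
        Equiv.Perm.permMatrix, PEquiv.toMatrix_apply, Equiv.toPEquiv_apply, Equiv.neg_apply,
        Option.mem_def, Option.some.injEq]
      by_cases h : -i = j
      · simp [h, show i + j = 0 by rw [← h]; simp]
      · have h2 : ¬(i + j = 0) := fun hc => h (by rw [neg_eq_iff_add_eq_zero]; exact hc)
        simp [h, h2]
    rw [hmat, Matrix.det_permutation] at h1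
    exact (Int.isUnit_iff.mp (Units.isUnit _)).elim
      (fun hu => by rw [hu] at h1; norm_num at h1)
      (fun hu => by rw [hu] at h1; norm_num at h1)
  -- symmetrization
  set Hs : MvPolynomial (Fin n) ℤ := ∏ w : Equiv.Perm (Fin n), MvPolynomial.rename w R with hHs
  have hHs0 : Hs ≠ 0 := by
    rw [hHs, Finset.prod_ne_zero_iff]
    intro w _ h0
    exact hR0 ((MvPolynomial.rename_injective _ w.injective) (by rw [h0, map_zero]))
  have hsym : Hs.IsSymmetric := by
    intro e
    rw [hHs, map_prod]
    simp_rw [rename_rename]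
    rw [← Equiv.prod_comp (Equiv.mulLeft e) (fun w : Equiv.Perm (Fin n) =>
      MvPolynomial.rename (⇑w) R)]
    apply Finset.prod_congr rfl
    intro w _
    rfl
  -- fundamental theorem of symmetric polynomials
  obtain ⟨P, hP⟩ := MvPolynomial.esymmAlgHom_surjective (σ := Fin n) ℤ (n := n)
    (by simp) ⟨Hs, hsym⟩
  have hPe : MvPolynomial.aeval (fun i : Fin n => esymm (Fin n) ℤ ((i : ℕ) + 1)) P = Hs := by
    have h2 := congrArg Subtype.val hP
    rwa [esymmAlgHom_apply] at h2
  -- the sign-twisting endomorphism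
  set T : MvPolynomial (Fin n) ℤ →ₐ[ℤ] MvPolynomial (Fin n) ℤ :=
    MvPolynomial.aeval (fun i : Fin n =>
      (MvPolynomial.C ((-1 : ℤ) ^ ((i : ℕ) + 1)) * MvPolynomial.X i)) with hT
  have hTT : ∀ q, T (T q) = q := by
    intro q
    induction q using MvPolynomial.induction_on with
    | C a => simp [hT]
    | add p q hp hq => rw [map_add, map_add, hp, hq]
    | mul_X p i hp =>
      rw [map_mul, map_mul, hp]
      congr 1
      have he : ((-1 : ℤ) ^ ((i : ℕ) + 1)) * ((-1 : ℤ) ^ ((i : ℕ) + 1)) = 1 := by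
        rw [← mul_pow]; norm_num
      simp only [hT, MvPolynomial.aeval_X, map_mul, MvPolynomial.aeval_C,
        MvPolynomial.algebraMap_eq]
      rw [← mul_assoc, ← MvPolynomial.C_mul, he, MvPolynomial.C_1, one_mul]
  refine ⟨T P, ?_, ?_⟩
  · intro h0
    have h1 : P = 0 := by rw [← hTT P, h0, map_zero]
    rw [h1, map_zero] at hPe
    exact hHs0 hPe.symm
  intro F K _ _ _ f hmon hirr hsep hdeg hsf hcyc hcard hane r hr σ hgen
  haveI := hsf
  haveI : FiniteDimensional F K := Polynomial.IsSplittingField.finiteDimensional K f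
  haveI : IsGalois F K := IsGalois.of_separable_splitting_field hsep
  have hfinrank : Module.finrank F K = n := by
    rw [← IsGalois.card_aut_eq_finrank, hcard]
  have htop : Subgroup.zpowers σ = ⊤ := by
    rw [Subgroup.eq_top_iff']; exact hgen
  have horder : orderOf σ = n := by
    rw [← Nat.card_zpowers, htop, ← hcard]
    exact Nat.card_congr Subgroup.topEquiv.toEquiv
  have hint : IsIntegral F r := IsIntegral.of_finite F r
  have hmin : minpoly F r = f := (minpoly.eq_of_irreducible_of_monic hirr hr hmon).symm
  have hadj : IntermediateField.adjoin F ({r} : Set K) = ⊤ := by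
    apply IntermediateField.eq_of_le_of_finrank_le le_top
    rw [IntermediateField.finrank_top', hfinrank,
      IntermediateField.adjoin.finrank hint, hmin, hdeg]
  have hfix : ∀ τ : K ≃ₐ[F] K, τ r = r → τ = 1 := by
    intro τ hτ
    ext x
    have hx : x ∈ IntermediateField.adjoin F ({r} : Set K) := by
      rw [hadj]; exact IntermediateField.mem_top
    show τ x = x
    refine IntermediateField.adjoin_induction F
      (fun z hz => ?_) (fun z => τ.commutes z)
      (fun z w _ _ hz hw => by rw [map_add, hz, hw])
      (fun z _ hz => by rw [map_inv₀, hz])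
      (fun z w _ _ hz hw => by rw [map_mul, hz, hw]) hx
    rw [Set.mem_singleton_iff] at hz
    rw [hz]; exact hτ
  set y : Fin n → K := fun k => (σ ^ (k : ℕ)) r with hy
  have hyinj : Function.Injective y := by
    intro i j hij
    have h1 : (σ ^ (-(i : ℤ)) * σ ^ ((i : ℕ) : ℤ)) r = (σ ^ (-(i : ℤ)) * σ ^ ((j : ℕ) : ℤ)) r := by
      have hij' : (σ ^ (i : ℕ)) r = (σ ^ (j : ℕ)) r := hij
      simp only [AlgEquiv.mul_apply, zpow_natCast]
      rw [hij']
    rw [← zpow_add, ← zpow_add, neg_add_cancel, zpow_zero, neg_add_eq_sub] at h1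
    have h2 : σ ^ ((j : ℤ) - (i : ℤ)) = 1 := hfix _ h1.symm
    have h3 : ((orderOf σ : ℤ)) ∣ ((j : ℤ) - (i : ℤ)) := orderOf_dvd_iff_zpow_eq_one.mpr h2
    rw [horder] at h3
    have h4 : ((j : ℤ) - (i : ℤ)) = 0 := by
      apply Int.eq_zero_of_abs_lt_dvd h3
      have hi := i.isLt; have hj := j.isLt
      rw [abs_lt]
      constructor <;> [skip; skip] <;> push_cast <;> omega
    have h5 : (i : ℤ) = (j : ℤ) := by omega
    exact Fin.ext (by exact_mod_cast h5)
  set fK := f.map (algebraMap F K) with hfK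
  have hfK0 : fK ≠ 0 := by
    rw [hfK, Polynomial.map_ne_zero_iff (algebraMap F K).injective]
    exact hmon.ne_zero
  have hdegK : fK.natDegree = n := by rw [hfK, natDegree_map, hdeg]
  have hsplits : fK.Splits := by
    rw [hfK]; exact Polynomial.IsSplittingField.splits (L := K) f
  have hcardroots : Multiset.card fK.roots = n := by
    rw [← hdegK]; exact splits_iff_card_roots.mp hsplits
  have hyroot : ∀ k : Fin n, y k ∈ fK.roots := by
    intro k
    rw [mem_roots hfK0, IsRoot.def, hfK, Polynomial.eval_map, ← Polynomial.aeval_def]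
    have h5 : (Polynomial.aeval ((σ ^ (k : ℕ)) r)) f = (σ ^ (k : ℕ)) ((Polynomial.aeval r) f) :=
      aeval_algHom_apply (σ ^ (k : ℕ) : K ≃ₐ[F] K) r f
    show (Polynomial.aeval ((σ ^ (k : ℕ)) r)) f = 0
    rw [h5, hr, map_zero]
  have hroots : fK.roots = Multiset.map y Finset.univ.val := by
    symm
    apply Multiset.eq_of_le_of_card_le
    · rw [Multiset.le_iff_subset (Multiset.Nodup.map hyinj Finset.univ.nodup)]
      intro x hx
      obtain ⟨k, _, rfl⟩ := Multiset.mem_map.mp hx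
      exact hyroot k
    · rw [hcardroots, Multiset.card_map]; simp
  have hcoeff : ∀ i : Fin n, algebraMap F K (f.coeff (n - 1 - (i : ℕ)))
      = (-1 : K) ^ ((i : ℕ) + 1) * (fK.roots.esymm ((i : ℕ) + 1)) := by
    intro i
    have hle : n - 1 - (i : ℕ) ≤ fK.natDegree := by rw [hdegK]; omega
    have h6 := Polynomial.coeff_eq_esymm_roots_of_card (hcardroots.trans hdegK.symm) hle
    rw [hdegK] at h6
    have hmonK : fK.Monic := hmon.map _
    rw [hmonK.leadingCoeff, one_mul] at h6
    have hsub : n - (n - 1 - (i : ℕ)) = (i : ℕ) + 1 := by have := i.isLt; omega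
    rw [hsub] at h6
    rw [hfK, Polynomial.coeff_map] at h6
    rw [hfK]
    exact h6
  -- commuting algebraMap with aeval over ℤ
  have hcomm : ∀ (q : MvPolynomial (Fin n) ℤ) (c : Fin n → F),
      algebraMap F K (MvPolynomial.aeval c q)
        = MvPolynomial.aeval (fun i => algebraMap F K (c i)) q := by
    intro q c
    rw [MvPolynomial.map_aeval]
    have h7 : (algebraMap F K).comp (algebraMap ℤ F) = algebraMap ℤ K :=
      Subsingleton.elim _ _
    rw [h7, MvPolynomial.aeval_def, ← MvPolynomial.coe_eval₂Hom]
  -- evaluating T P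
  have hTPeval : ∀ v : Fin n → K, MvPolynomial.aeval v (T P)
      = MvPolynomial.aeval (fun i : Fin n => ((-1 : K) ^ ((i : ℕ) + 1)) * v i) P := by
    intro v
    rw [hT]
    have h8 := congrFun (congrArg DFunLike.coe (MvPolynomial.comp_aeval
      (fun i : Fin n => (MvPolynomial.C ((-1 : ℤ) ^ ((i : ℕ) + 1)) * MvPolynomial.X i))
      (MvPolynomial.aeval v : MvPolynomial (Fin n) ℤ →ₐ[ℤ] K))) P
    rw [AlgHom.comp_apply] at h8
    rw [h8]
    have hfun : (fun i : Fin n => (MvPolynomial.aeval v)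
        (MvPolynomial.C ((-1 : ℤ) ^ ((i : ℕ) + 1)) * MvPolynomial.X i))
        = fun i : Fin n => ((-1 : K) ^ ((i : ℕ) + 1)) * v i := by
      funext i
      rw [map_mul, MvPolynomial.aeval_X, MvPolynomial.aeval_C, map_pow, map_neg, map_one]
    rw [hfun]
  have hHsne : MvPolynomial.aeval y Hs ≠ 0 := by
    intro h0
    apply hane
    apply (algebraMap F K).injective
    rw [map_zero, hcomm]
    rw [hTPeval]
    have h9 : (fun i : Fin n => ((-1 : K) ^ ((i : ℕ) + 1))
        * (algebraMap F K (f.coeff (n - 1 - (i : ℕ)))))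
        = fun i : Fin n => fK.roots.esymm ((i : ℕ) + 1) := by
      funext i
      rw [hcoeff i, ← mul_assoc, ← mul_pow]
      norm_num
    rw [h9]
    have h10 : (fun i : Fin n => fK.roots.esymm ((i : ℕ) + 1))
        = fun i : Fin n => MvPolynomial.aeval y (esymm (Fin n) ℤ ((i : ℕ) + 1)) := by
      funext i
      rw [MvPolynomial.aeval_esymm_eq_multiset_esymm, hroots]
    rw [h10]
    have h11 := congrFun (congrArg DFunLike.coe (MvPolynomial.comp_aeval
      (fun i : Fin n => esymm (Fin n) ℤ ((i : ℕ) + 1))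
      (MvPolynomial.aeval y : MvPolynomial (Fin n) ℤ →ₐ[ℤ] K))) P
    rw [AlgHom.comp_apply] at h11
    rw [← h11, hPe, h0]
  have hdet : (Matrix.of fun i j : Fin n => y (i + j)).det ≠ 0 := by
    intro h0
    apply hHsne
    rw [hHs, map_prod]
    apply Finset.prod_eq_zero (Finset.mem_univ (1 : Equiv.Perm (Fin n)))
    rw [aeval_rename]
    have h12 : (y ∘ ⇑(1 : Equiv.Perm (Fin n))) = y := rfl
    rw [h12, hR]
    rw [AlgHom.map_det]
    have h14 : (MvPolynomial.aeval y : MvPolynomial (Fin n) ℤ →ₐ[ℤ] K).mapMatrix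
        (Matrix.of fun i j : Fin n => (MvPolynomial.X (i + j) : MvPolynomial (Fin n) ℤ))
        = Matrix.of fun i j : Fin n => y (i + j) := by
      ext i j
      simp [AlgHom.mapMatrix_apply]
    rw [h14, h0]
  have hσn : σ ^ n = 1 := by rw [← horder]; exact pow_orderOf_eq_one σ
  have hpow : ∀ i j : Fin n, (σ ^ (((i + j : Fin n) : ℕ))) = σ ^ ((i : ℕ) + (j : ℕ)) := by
    intro i j
    have h := pow_mod_orderOf σ ((i : ℕ) + (j : ℕ))
    rw [horder] at h
    rw [Fin.val_add]
    exact h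
  have hLI : LinearIndependent F (fun i : Fin n => (σ ^ (i : ℕ)) r) := by
    rw [Fintype.linearIndependent_iff]
    intro g hg i
    have hmv : (Matrix.of fun i j : Fin n => y (i + j)).mulVec
        (fun j => algebraMap F K (g j)) = 0 := by
      funext j
      simp only [Matrix.mulVec, Matrix.of_apply, dotProduct, Pi.zero_apply]
      have h15 : ∀ k : Fin n, y (j + k) * algebraMap F K (g k)
          = (σ ^ (j : ℕ)) (g k • (σ ^ (k : ℕ)) r) := by
        intro k
        show (σ ^ (((j + k : Fin n) : ℕ))) r * algebraMap F K (g k) = _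
        rw [Algebra.smul_def, map_mul, AlgEquiv.commutes]
        rw [hpow j k, pow_add, AlgEquiv.mul_apply]
        ring
      simp_rw [h15]
      rw [← map_sum, hg, map_zero]
    have h16 := Matrix.eq_zero_of_mulVec_eq_zero hdet hmv
    have h17 := congrFun h16 i
    simp only [Pi.zero_apply] at h17
    exact (algebraMap F K).injective (by rw [h17, map_zero])
  refine ⟨hLI, hLI.span_eq_top_of_card_eq_finrank ?_⟩
  rw [Fintype.card_fin, hfinrank]
end

section
/- Let p be a prime and n ≥ 1 an integer. There exists a nonzero polynomial h ∈ F_p[X_1, ..., X_n] with the following property: for every power q of p and every monic irreducible polynomial f = X^n + a_1 X^{n-1} + ... + a_n over F_q, if h(a_1, ..., a_n) ≠ 0 in F_q, then f is normal over F_q, i.e., the n roots of f in F_{q^n} are linearly independent over F_q. -/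
open MvPolynomial Polynomial Finset in
/-- det of the matrix which is `x` on the anti-diagonal `i+j=c` and 0 elsewhere. -/
lemma det_if_add_eq {n : ℕ} [NeZero n] {L : Type*} [CommRing L] (x : L) (c : Fin n) :
    (Matrix.of fun i j : Fin n => if i + j = c then x else 0).det =
      ((Equiv.Perm.sign (Equiv.subLeft c)) : ℤ) * x ^ n := by
  have hM : (Matrix.of fun i j : Fin n => if i + j = c then x else 0) =
      x • (Equiv.Perm.permMatrix L (Equiv.subLeft c)) := by
    ext i j
    simp only [Matrix.of_apply, Matrix.smul_apply, Equiv.Perm.permMatrix,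
      PEquiv.toMatrix_apply, Equiv.toPEquiv_apply, Option.mem_some_iff, smul_ite, smul_eq_mul,
      mul_one, mul_zero, Equiv.subLeft_apply]
    rw [mul_ite, mul_one, mul_zero]
    congr 1
    rw [eq_iff_iff]
    constructor
    · intro h; rw [← h]; exact add_sub_cancel_left i j
    · intro h; rw [← h]; exact add_sub_cancel i c
  rw [hM, Matrix.det_smul, Matrix.det_permutation, Fintype.card_fin]
  ring

open MvPolynomial in
noncomputable def circPoly (p n : ℕ) [NeZero n] : MvPolynomial (Fin n) (ZMod p) :=
  (Matrix.of fun i j : Fin n => (X (i + j) : MvPolynomial (Fin n) (ZMod p))).det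

open MvPolynomial in
noncomputable def symPoly (p n : ℕ) [NeZero n] : MvPolynomial (Fin n) (ZMod p) :=
  ∏ σ : Equiv.Perm (Fin n), rename σ (circPoly p n)

open MvPolynomial in
lemma eval₂_circPoly {p n : ℕ} [NeZero n] {L : Type*} [CommRing L]
    (cast : ZMod p →+* L) (b : Fin n → L) :
    eval₂ cast b (circPoly p n) = (Matrix.of fun i j : Fin n => b (i + j)).det := by
  rw [circPoly, show eval₂ cast b = ⇑(eval₂Hom cast b) from rfl, RingHom.map_det]
  congr 1
  ext i j
  simp [Matrix.map_apply]

open MvPolynomial in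
lemma eval₂_symPoly {p n : ℕ} [NeZero n] {L : Type*} [CommRing L]
    (cast : ZMod p →+* L) (b : Fin n → L) :
    eval₂ cast b (symPoly p n) =
      ∏ σ : Equiv.Perm (Fin n), (Matrix.of fun i j : Fin n => b (σ (i + j))).det := by
  rw [symPoly, show eval₂ cast b = ⇑(eval₂Hom cast b) from rfl, map_prod]
  refine Finset.prod_congr rfl fun σ _ => ?_
  show eval₂ cast b _ = _
  rw [eval₂_rename, eval₂_circPoly]
  rfl

open MvPolynomial in
lemma symPoly_isSymmetric (p n : ℕ) [NeZero n] : (symPoly p n).IsSymmetric := by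
  intro τ
  rw [symPoly, map_prod]
  calc ∏ σ : Equiv.Perm (Fin n), rename ⇑τ (rename ⇑σ (circPoly p n))
      = ∏ σ : Equiv.Perm (Fin n), rename ⇑(τ * σ) (circPoly p n) := by
        refine Finset.prod_congr rfl fun σ _ => ?_
        rw [rename_rename, ← Equiv.Perm.coe_mul]
    _ = ∏ σ : Equiv.Perm (Fin n), rename ⇑σ (circPoly p n) :=
        Fintype.prod_equiv (Equiv.mulLeft τ) _ _ (fun σ => rfl)

open MvPolynomial Polynomial in
lemma symPoly_ne_zero (p n : ℕ) [Fact p.Prime] [NeZero n] : symPoly p n ≠ 0 := by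
  intro h0
  have h := eval₂_symPoly (L := Polynomial (ZMod p)) C
    (fun i : Fin n => if i = 0 then X else 0)
  rw [h0, MvPolynomial.eval₂_zero] at h
  have : ∀ σ : Equiv.Perm (Fin n),
      (Matrix.of fun i j : Fin n => if σ (i + j) = 0 then (X : Polynomial (ZMod p)) else 0).det
        ≠ 0 := by
    intro σ
    have : (Matrix.of fun i j : Fin n => if σ (i + j) = 0 then (X : Polynomial (ZMod p)) else 0)
        = Matrix.of fun i j : Fin n => if i + j = σ⁻¹ 0 then (X : Polynomial (ZMod p)) else 0 := by
      refine Matrix.ext fun i j => ?_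
      simp only [Matrix.of_apply]
      exact if_congr (by rw [Equiv.apply_eq_iff_eq_symm_apply]; rfl) rfl rfl
    rw [this, det_if_add_eq]
    rcases Int.units_eq_one_or (Equiv.Perm.sign (Equiv.subLeft (σ⁻¹ 0))) with hs | hs <;>
      rw [hs] <;> simp [pow_ne_zero n (Polynomial.X_ne_zero (R := ZMod p))]
  exact (Finset.prod_ne_zero_iff.mpr fun σ _ => this σ) h.symm

open MvPolynomial Polynomial

set_option maxHeartbeats 1000000 in
/-- Let p be a prime and n ≥ 1. There is a nonzero h ∈ F_p[X_1,...,X_n] such that for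
every finite field F_q of characteristic p and monic irreducible
f = X^n + a_1 X^{n-1} + ⋯ + a_n over F_q, if h(a_1,...,a_n) ≠ 0 in F_q then the n roots
of f in F_{q^n} are linearly independent over F_q. -/
theorem stmt3 (p : ℕ) (hp : p.Prime) (n : ℕ) (hn : 1 ≤ n) :
    ∃ h : MvPolynomial (Fin n) (ZMod p), h ≠ 0 ∧
      ∀ (F K : Type) [Field F] [Fintype F] [Field K] [Algebra F K] [CharP F p],
        Module.finrank F K = n →
        ∀ f : Polynomial F, f.Monic → Irreducible f → f.natDegree = n →
        MvPolynomial.eval₂ (ZMod.castHom dvd_rfl F)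
          (fun i : Fin n => f.coeff (n - 1 - (i : ℕ))) h ≠ 0 →
        ∀ r : K, Polynomial.aeval r f = 0 →
          LinearIndependent F (fun i : Fin n => r ^ (Fintype.card F) ^ (i : ℕ)) := by
  haveI : NeZero n := ⟨by omega⟩
  haveI : Fact p.Prime := ⟨hp⟩
  classical
  -- Fundamental theorem of symmetric polynomials applied to symPoly
  obtain ⟨H, hH⟩ := MvPolynomial.esymmAlgHom_surjective (σ := Fin n) (R := ZMod p) (n := n)
      (by simp) ⟨symPoly p n, symPoly_isSymmetric p n⟩
  have hHS : aeval (fun i : Fin n => esymm (Fin n) (ZMod p) ((i : ℕ) + 1)) H = symPoly p n := by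
    have := congrArg Subtype.val hH
    rwa [esymmAlgHom_apply] at this
  set g : Fin n → MvPolynomial (Fin n) (ZMod p) :=
    fun i => (-1) ^ ((i : ℕ) + 1) * X i with hg
  have hgg : ∀ φ : MvPolynomial (Fin n) (ZMod p), bind₁ g (bind₁ g φ) = φ := by
    intro φ
    rw [bind₁_bind₁]
    have hb : (fun i : Fin n => bind₁ g (g i)) = (X : Fin n → MvPolynomial (Fin n) (ZMod p)) := by
      funext i
      simp only [hg, map_mul, map_pow, map_neg, map_one, bind₁_X_right]
      rw [← mul_assoc, ← pow_add, Even.neg_one_pow ⟨(i : ℕ) + 1, by ring⟩, one_mul]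
    rw [hb, bind₁_X_left, AlgHom.id_apply]
  refine ⟨bind₁ g H, ?_, ?_⟩
  · intro h0
    apply symPoly_ne_zero p n
    rw [← hHS]
    have : H = 0 := by rw [← hgg H, h0, map_zero]
    rw [this, map_zero]
  intro F K _ _ _ _ _ hrank f hmonic hirr hdeg hhne r hroot
  haveI : FiniteDimensional F K := FiniteDimensional.of_finrank_pos (by rw [hrank]; omega)
  haveI : Finite K := Module.finite_of_finite F
  haveI : Fintype K := Fintype.ofFinite K
  haveI : CharP K p := charP_of_injective_algebraMap (algebraMap F K).injective p
  set q := Fintype.card F with hqdef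
  have hq1 : 1 < q := Fintype.one_lt_card
  obtain ⟨e, -, hcard⟩ := FiniteField.card F p
  -- the q^m-power Frobenius as an F-algebra endomorphism of K
  have hψ : ∀ m : ℕ, ∃ ψ : K →ₐ[F] K, ∀ x, ψ x = x ^ q ^ m := by
    intro m
    refine ⟨{ toFun := fun x => x ^ q ^ m,
              map_one' := one_pow _,
              map_mul' := fun x y => mul_pow x y _,
              map_zero' := zero_pow (by positivity),
              map_add' := fun x y => ?_,
              commutes' := fun c => ?_ }, fun x => rfl⟩
    · show (x + y) ^ q ^ m = x ^ q ^ m + y ^ q ^ m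
      rw [hqdef, hcard, ← pow_mul]
      exact add_pow_char_pow x y p ((e : ℕ) * m)
    · show (algebraMap F K c) ^ q ^ m = algebraMap F K c
      rw [← map_pow, FiniteField.pow_card_pow]
  have hr_int : IsIntegral F r := IsIntegral.of_finite F r
  have hmin : minpoly F r = f := (minpoly.eq_of_irreducible_of_monic hirr hroot hmonic).symm
  set ρ : Fin n → K := fun i => r ^ q ^ (i : ℕ) with hρ
  have hcardK : Fintype.card K = q ^ n := by
    rw [Module.card_eq_pow_finrank (K := F) (V := K), hrank]
  have hKr : r ^ q ^ n = r := by
    have := FiniteField.pow_card r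
    rwa [hcardK] at this
  have hstep : ∀ m : ℕ, r ^ q ^ (m + n) = r ^ q ^ m := by
    intro m
    rw [pow_add, mul_comm, pow_mul, hKr]
  have hmod : ∀ m : ℕ, r ^ q ^ (m % n) = r ^ q ^ m := by
    intro m
    induction m using Nat.strong_induction_on with
    | _ m ih =>
      rcases lt_or_ge m n with hm | hm
      · rw [Nat.mod_eq_of_lt hm]
      · rw [Nat.mod_eq_sub_mod hm, ih (m - n) (by omega)]
        have h2 := hstep (m - n)
        rw [(by omega : m - n + n = m)] at h2
        exact h2.symm
  have hconj : ∀ m : ℕ, (Polynomial.aeval (r ^ q ^ m)) f = 0 := by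
    intro m
    obtain ⟨ψ, hψm⟩ := hψ m
    rw [← hψm r, Polynomial.aeval_algHom_apply, hroot, map_zero]
  -- distinctness of the conjugates
  have hfix : ∀ m : ℕ, 1 ≤ m → m < n → r ^ q ^ m ≠ r := by
    intro m hm1 hmn hfixr
    obtain ⟨ψ, hψm⟩ := hψ m
    set L := IntermediateField.adjoin F ({r} : Set K) with hL
    have hLfix : ∀ x : K, x ∈ L → x ^ q ^ m = x := by
      intro x hx
      obtain ⟨u, v, rfl⟩ := (IntermediateField.mem_adjoin_simple_iff F x).mp hx
      rw [← hψm, map_div₀, ← Polynomial.aeval_algHom_apply, ← Polynomial.aeval_algHom_apply,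
        hψm, hfixr]
    haveI : Fintype L := Fintype.ofFinite L
    have hcardL : Fintype.card L = q ^ n := by
      rw [Module.card_eq_pow_finrank (K := F) (V := L), IntermediateField.adjoin.finrank hr_int,
        hmin, hdeg]
    have hzero : (Polynomial.X ^ q ^ m - Polynomial.X : Polynomial K) = 0 := by
      apply Polynomial.eq_zero_of_natDegree_lt_card_of_eval_eq_zero _
        (f := fun x : L => (x : K)) Subtype.val_injective
      · intro x
        simp only [Polynomial.eval_sub, Polynomial.eval_pow, Polynomial.eval_X]
        rw [hLfix (x : K) x.2, sub_self]
      · rw [hcardL]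
        calc (Polynomial.X ^ q ^ m - Polynomial.X : Polynomial K).natDegree
            ≤ max (Polynomial.X ^ q ^ m : Polynomial K).natDegree
              (Polynomial.X : Polynomial K).natDegree := Polynomial.natDegree_sub_le _ _
          _ ≤ q ^ m := by
              simp only [Polynomial.natDegree_X_pow, Polynomial.natDegree_X, max_le_iff]
              constructor
              · exact le_rfl
              · exact Nat.one_le_pow _ _ (by omega)
          _ < q ^ n := Nat.pow_lt_pow_right hq1 hmn
    have h1 : (1 : K) = 0 := by
      have := congrArg (fun P : Polynomial K => P.coeff (q ^ m)) hzero
      simp only [Polynomial.coeff_sub, Polynomial.coeff_X_pow, if_pos rfl,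
        Polynomial.coeff_zero] at this
      rw [Polynomial.coeff_X, if_neg (Nat.one_lt_pow (by omega) hq1).ne] at this
      simpa using this
    exact one_ne_zero h1
  have hinj : Function.Injective ρ := by
    have key : ∀ i j : Fin n, (i : ℕ) < (j : ℕ) → ρ i ≠ ρ j := by
      intro i j hij hE
      apply hfix ((i : ℕ) + n - (j : ℕ)) (by omega) (by omega)
      have hE' : r ^ q ^ (i : ℕ) = r ^ q ^ (j : ℕ) := hE
      have hE2 : (r ^ q ^ (i : ℕ)) ^ q ^ (n - (j : ℕ)) = (r ^ q ^ (j : ℕ)) ^ q ^ (n - (j : ℕ)) := by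
        rw [hE']
      rw [← pow_mul, ← pow_mul, ← pow_add, ← pow_add] at hE2
      have hj : (j : ℕ) + (n - (j : ℕ)) = n := by omega
      have hi : (i : ℕ) + (n - (j : ℕ)) = (i : ℕ) + n - (j : ℕ) := by omega
      rw [hj, hi, hKr] at hE2
      exact hE2
    intro i j hE
    by_contra hne'
    rcases lt_trichotomy ((i : ℕ)) ((j : ℕ)) with hlt | heq | hlt
    · exact key i j hlt hE
    · exact hne' (Fin.ext heq)
    · exact key j i hlt hE.symm
  -- f splits with roots exactly the ρ i
  have hsplit : Polynomial.map (algebraMap F K) f =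
      ∏ i : Fin n, (Polynomial.X - Polynomial.C (ρ i)) := by
    set fK := Polynomial.map (algebraMap F K) f with hfK
    set gK := ∏ i : Fin n, (Polynomial.X - Polynomial.C (ρ i)) with hgK
    have hmK : fK.Monic := hmonic.map _
    have hgm : gK.Monic := Polynomial.monic_prod_of_monic _ _
      (fun i _ => Polynomial.monic_X_sub_C _)
    have hdegf : fK.natDegree = n := by rw [hfK, hmonic.natDegree_map, hdeg]
    have hdegg : gK.natDegree = n := by
      rw [hgK, Polynomial.natDegree_prod_of_monic _ _
        (fun i _ => Polynomial.monic_X_sub_C _)]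
      simp
    by_contra hne'
    have hδ : fK - gK ≠ 0 := sub_ne_zero.mpr hne'
    have hδdeg : (fK - gK).natDegree < n := by
      have hdd : fK.degree = gK.degree := by
        rw [Polynomial.degree_eq_natDegree hmK.ne_zero,
          Polynomial.degree_eq_natDegree hgm.ne_zero, hdegf, hdegg]
      have h3 := Polynomial.degree_sub_lt hdd hmK.ne_zero
        (by rw [hmK.leadingCoeff, hgm.leadingCoeff])
      rw [Polynomial.degree_eq_natDegree hmK.ne_zero, hdegf] at h3
      exact (Polynomial.natDegree_lt_iff_degree_lt hδ).mpr h3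
    have : fK - gK = 0 := by
      apply Polynomial.eq_zero_of_natDegree_lt_card_of_eval_eq_zero _ hinj
      · intro i
        have h1 : fK.eval (ρ i) = 0 := by
          rw [hfK, Polynomial.eval_map, ← Polynomial.aeval_def]
          exact hconj (i : ℕ)
        have h2 : gK.eval (ρ i) = 0 := by
          rw [hgK, Polynomial.eval_prod]
          exact Finset.prod_eq_zero (Finset.mem_univ i)
            (by rw [Polynomial.eval_sub, Polynomial.eval_X, Polynomial.eval_C, sub_self])
        rw [Polynomial.eval_sub, h1, h2, sub_self]
      · rw [Fintype.card_fin]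
        exact hδdeg
    exact hδ this
  set castF : ZMod p →+* F := ZMod.castHom dvd_rfl F with hcastF
  set castK : ZMod p →+* K := (algebraMap F K).comp castF with hcastK
  set fK := Polynomial.map (algebraMap F K) f with hfK
  -- Vieta: the elementary symmetric functions of the ρ i are the coefficients of f
  have hvieta : ∀ i : Fin n,
      (Finset.univ.val.map ρ).esymm ((i : ℕ) + 1)
        = (-1) ^ ((i : ℕ) + 1) * algebraMap F K (f.coeff (n - 1 - (i : ℕ))) := by
    intro i
    have hile : (i : ℕ) + 1 ≤ n := i.2
    have hcards : Multiset.card (Finset.univ.val.map ρ) = n := by simp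
    have hV := Multiset.prod_X_sub_C_coeff (Finset.univ.val.map ρ)
      (k := n - 1 - (i : ℕ)) (by rw [hcards]; omega)
    have hprod : ((Finset.univ.val.map ρ).map
        (fun t => Polynomial.X - Polynomial.C t)).prod = fK := by
      rw [Multiset.map_map, hsplit]
      rfl
    rw [hprod, hcards] at hV
    have he : n - (n - 1 - (i : ℕ)) = (i : ℕ) + 1 := by omega
    rw [he] at hV
    calc (Finset.univ.val.map ρ).esymm ((i : ℕ) + 1)
        = (-1) ^ ((i : ℕ) + 1) *
            ((-1) ^ ((i : ℕ) + 1) * (Finset.univ.val.map ρ).esymm ((i : ℕ) + 1)) := by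
          rw [← mul_assoc, ← pow_add, Even.neg_one_pow ⟨(i : ℕ) + 1, by ring⟩, one_mul]
      _ = (-1) ^ ((i : ℕ) + 1) * algebraMap F K (f.coeff (n - 1 - (i : ℕ))) := by
          rw [show (algebraMap F K) (f.coeff (n - 1 - (i : ℕ)))
              = fK.coeff (n - 1 - (i : ℕ)) from (Polynomial.coeff_map _ _).symm, hV]
  -- the key identity: evaluating symPoly at the roots gives the value of h at the coefficients
  have hes : ∀ i : Fin n, eval₂ castK ρ (esymm (Fin n) (ZMod p) ((i : ℕ) + 1))
      = (Finset.univ.val.map ρ).esymm ((i : ℕ) + 1) := by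
    intro i
    rw [MvPolynomial.eval₂_eq_eval_map, MvPolynomial.map_esymm]
    exact MvPolynomial.aeval_esymm_eq_multiset_esymm (σ := Fin n) (R := K) ((i : ℕ) + 1) ρ
  have hmain : eval₂ castK ρ (symPoly p n)
      = algebraMap F K (eval₂ castF (fun i : Fin n => f.coeff (n - 1 - (i : ℕ))) (bind₁ g H)) := by
    rw [MvPolynomial.eval₂_comp_left (algebraMap F K) castF _ _]
    rw [← hHS]
    show (eval₂Hom castK ρ) (bind₁ _ H)
      = (eval₂Hom castK (fun i : Fin n => algebraMap F K (f.coeff (n - 1 - (i : ℕ))))) (bind₁ g H)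
    rw [MvPolynomial.eval₂Hom_bind₁, MvPolynomial.eval₂Hom_bind₁]
    have harg : (fun i : Fin n => (eval₂Hom castK ρ) (esymm (Fin n) (ZMod p) ((i : ℕ) + 1)))
        = fun i : Fin n => (eval₂Hom castK
            (fun i : Fin n => algebraMap F K (f.coeff (n - 1 - (i : ℕ))))) (g i) := by
      funext i
      rw [show (eval₂Hom castK ρ) (esymm (Fin n) (ZMod p) ((i : ℕ) + 1))
          = eval₂ castK ρ (esymm (Fin n) (ZMod p) ((i : ℕ) + 1)) from rfl, hes i, hvieta i, hg]
      simp only [map_mul, map_pow, map_neg, map_one, MvPolynomial.eval₂Hom_X']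
    rw [harg]
  have hval : eval₂ castK ρ (symPoly p n) ≠ 0 := by
    rw [hmain]
    intro h0
    exact hhne ((map_eq_zero_iff _ (algebraMap F K).injective).mp h0)
  have hD : (Matrix.of fun i j : Fin n => ρ (i + j)).det ≠ 0 := by
    intro hD0
    apply hval
    rw [eval₂_symPoly]
    refine Finset.prod_eq_zero (Finset.mem_univ (1 : Equiv.Perm (Fin n))) ?_
    simpa using hD0
  -- conclude linear independence via the nonvanishing circulant determinant
  rw [Fintype.linearIndependent_iff]
  intro gg hgg0
  have hc : ∀ k : Fin n, ∑ i : Fin n, ρ (k + i) * algebraMap F K (gg i) = 0 := by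
    intro k
    obtain ⟨ψ, hψm⟩ := hψ (k : ℕ)
    have h0 : ψ (∑ i : Fin n, gg i • ρ i) = 0 := by rw [hgg0, map_zero]
    rw [map_sum] at h0
    rw [← h0]
    refine Finset.sum_congr rfl fun i _ => ?_
    rw [map_smul ψ, hψm, Algebra.smul_def, mul_comm]
    congr 1
    show r ^ q ^ ((k + i : Fin n) : ℕ) = (r ^ q ^ (i : ℕ)) ^ q ^ (k : ℕ)
    rw [← pow_mul, ← pow_add, Fin.val_add, hmod, add_comm (k : ℕ) (i : ℕ)]
  have hmul : (Matrix.of fun k i : Fin n => ρ (k + i)).mulVec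
      (fun i => algebraMap F K (gg i)) = 0 := by
    funext k
    show ∑ i : Fin n, ρ (k + i) * algebraMap F K (gg i) = 0
    exact hc k
  have hU : IsUnit (Matrix.of fun k i : Fin n => ρ (k + i)) := by
    rw [Matrix.isUnit_iff_isUnit_det]
    exact isUnit_iff_ne_zero.mpr hD
  have hinj2 := Matrix.mulVec_injective_iff_isUnit.mpr hU
  have hz : (fun i => algebraMap F K (gg i)) = 0 := hinj2 (by rw [hmul, Matrix.mulVec_zero])
  intro i
  have hzi := congrFun hz i
  exact (algebraMap F K).injective (by simpa using hzi)
end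

section
/- Let n > 2 and let Ψ_n be the multivariate polynomial over ℂ in variables X_j indexed by j ∈ ℤ/nℤ defined by Ψ_n = ∏_{i ∈ (ℤ/nℤ)^×} (∑_{j ∈ ℤ/nℤ} ε_n^{ij} X_j), where ε_n = e^{2π√(-1)/n}. Let the symmetric group of ℤ/nℤ act on polynomials by permuting the variables. Then the stabilizer of Ψ_n under this action is exactly the group AGL(1, ℤ/nℤ) of affine permutations, i.e., a permutation σ of ℤ/nℤ fixes Ψ_n if and only if there exist a ∈ (ℤ/nℤ)^× and b ∈ ℤ/nℤ such that σ(x) = ax + b for all x ∈ ℤ/nℤ. -/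
open MvPolynomial


open Finset

namespace Stmt4Aux

set_option linter.unusedSectionVars false

variable {n : ℕ} [NeZero n] {ε : ℂ}

noncomputable def e (ε : ℂ) (u : ZMod n) : ℂ := ε ^ u.val

lemma e_zero : e ε (0 : ZMod n) = 1 := by simp [e]

lemma e_add (hp : IsPrimitiveRoot ε n) (u v : ZMod n) :
    e ε (u + v) = e ε u * e ε v := by
  have h1 : ε ^ n = 1 := hp.pow_eq_one
  rw [e, e, e, ZMod.val_add, ← pow_eq_pow_mod _ h1, pow_add]

lemma e_ne_zero (hp : IsPrimitiveRoot ε n) (u : ZMod n) : e ε u ≠ 0 :=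
  pow_ne_zero _ (hp.ne_zero (NeZero.ne n))

lemma e_inj (hp : IsPrimitiveRoot ε n) {u v : ZMod n} (h : e ε u = e ε v) : u = v :=
  ZMod.val_injective n (hp.pow_inj (ZMod.val_lt u) (ZMod.val_lt v) h)

lemma e_neg_mul (hp : IsPrimitiveRoot ε n) (u : ZMod n) : e ε (-u) * e ε u = 1 := by
  rw [← e_add hp, neg_add_cancel, e_zero]

lemma sum_e (hp : IsPrimitiveRoot ε n) (u : ZMod n) :
    ∑ j : ZMod n, e ε (u * j) = if u = 0 then (n : ℂ) else 0 := by
  split_ifs with h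
  · simp [h, e_zero, ZMod.card]
  · have key : e ε u * ∑ j : ZMod n, e ε (u * j) = ∑ j : ZMod n, e ε (u * j) := by
      rw [Finset.mul_sum]
      have h2 : ∀ j : ZMod n, e ε u * e ε (u * j) = e ε (u * (1 + j)) := by
        intro j; rw [mul_add, mul_one, e_add hp]
      rw [Finset.sum_congr rfl fun j _ => h2 j]
      exact Fintype.sum_equiv (Equiv.addLeft 1) _ _ fun j => rfl
    have hu : e ε u ≠ 1 := fun h1 => h (e_inj hp (h1.trans e_zero.symm))
    have h3 := sub_eq_zero.mpr key
    rw [← sub_one_mul] at h3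
    rcases mul_eq_zero.mp h3 with h' | h'
    · exact absurd (sub_eq_zero.mp h') hu
    · exact h'

end Stmt4Aux

namespace Stmt4Aux

variable {n : ℕ} [NeZero n] {ε : ℂ}

lemma ncast_ne : (n : ℂ) ≠ 0 := Nat.cast_ne_zero.mpr (NeZero.ne n)

lemma inner_delta (hp : IsPrimitiveRoot ε n) (i m : ZMod n) :
    (n:ℂ)⁻¹ * ∑ j : ZMod n, e ε (i*j) * e ε (-(m*j)) = if i = m then 1 else 0 := by
  have h1 : ∀ j : ZMod n, e ε (i*j) * e ε (-(m*j)) = e ε ((i-m)*j) := by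
    intro j
    rw [← e_add hp]
    congr 1
    ring
  rw [Finset.sum_congr rfl fun j _ => h1 j, sum_e hp]
  simp only [sub_eq_zero]
  split_ifs with h
  · exact inv_mul_cancel₀ ncast_ne
  · exact mul_zero _

lemma delta_sum (hp : IsPrimitiveRoot ε n) (i : ZMod n) (y : ZMod n → ℂ) :
    ∑ m : ZMod n, ((n:ℂ)⁻¹ * ∑ j : ZMod n, e ε (i*j) * e ε (-(m*j))) * y m = y i := by
  have : ∀ m : ZMod n, ((n:ℂ)⁻¹ * ∑ j : ZMod n, e ε (i*j) * e ε (-(m*j))) * y m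
      = if i = m then y m else 0 := by
    intro m
    rw [inner_delta hp]
    split_ifs <;> simp
  rw [Finset.sum_congr rfl fun m _ => this m]
  simp

lemma fourier_inv (hp : IsPrimitiveRoot ε n) (f : ZMod n → ℂ) (j : ZMod n) :
    ∑ m : ZMod n, ((n:ℂ)⁻¹ * ∑ k : ZMod n, f k * e ε (-(m*k))) * e ε (m*j) = f j := by
  have step1 : ∀ m : ZMod n, ((n:ℂ)⁻¹ * ∑ k : ZMod n, f k * e ε (-(m*k))) * e ε (m*j)
      = ∑ k : ZMod n, f k * ((n:ℂ)⁻¹ * e ε ((j-k)*m)) := by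
    intro m
    rw [Finset.mul_sum, Finset.sum_mul]
    refine Finset.sum_congr rfl fun k _ => ?_
    have h2 : e ε (-(m*k)) * e ε (m*j) = e ε ((j-k)*m) := by
      rw [← e_add hp]; congr 1; ring
    calc ((n:ℂ)⁻¹ * (f k * e ε (-(m*k)))) * e ε (m*j)
        = f k * ((n:ℂ)⁻¹ * (e ε (-(m*k)) * e ε (m*j))) := by ring
      _ = f k * ((n:ℂ)⁻¹ * e ε ((j-k)*m)) := by rw [h2]
  rw [Finset.sum_congr rfl fun m _ => step1 m, Finset.sum_comm]
  have step2 : ∀ k : ZMod n, ∑ m : ZMod n, f k * ((n:ℂ)⁻¹ * e ε ((j-k)*m))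
      = if j = k then f k else 0 := by
    intro k
    rw [← Finset.mul_sum, ← Finset.mul_sum, sum_e hp]
    simp only [sub_eq_zero]
    split_ifs with h
    · rw [inv_mul_cancel₀ ncast_ne, mul_one]
    · simp
  rw [Finset.sum_congr rfl fun k _ => step2 k]
  simp

end Stmt4Aux

namespace Stmt4Aux

variable {n : ℕ} [NeZero n] {ε : ℂ}

lemma row (a : ZMod n → ℂ) {p : ZMod n} (hap : a p ≠ 0)
    (key : ∀ y : ZMod n → ℂ, ∑ m : ZMod n, a m * y m = 0 →
      ∏ i : (ZMod n)ˣ, y (i : ZMod n) = 0) :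
    ∀ m : ZMod n, m ≠ p → a m = 0 := by
  intro q hq
  by_contra haq
  classical
  set c : ℂ := ∑ m ∈ (Finset.univ \ {p, q} : Finset (ZMod n)), a m with hc
  set s : ℂ := if a q + c = 0 then 2 else 1 with hs
  have hs0 : s ≠ 0 := by
    rw [hs]; split_ifs <;> norm_num
  have hqs : a q * s + c ≠ 0 := by
    rw [hs]; split_ifs with h
    · have : c = -a q := by linear_combination h
      rw [this]; intro h2
      exact haq (by linear_combination h2)
    · intro h2; exact h (by linear_combination h2)
  set y : ZMod n → ℂ := fun m => if m = p then -(a q * s + c) / a p else if m = q then s else 1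
    with hy
  have hsub : ({p, q} : Finset (ZMod n)) ⊆ Finset.univ := Finset.subset_univ _
  have hsum : ∑ m : ZMod n, a m * y m = 0 := by
    rw [← Finset.sum_sdiff hsub]
    have h1 : ∑ m ∈ (Finset.univ \ {p, q} : Finset (ZMod n)), a m * y m = c := by
      rw [hc]
      refine Finset.sum_congr rfl fun m hm => ?_
      simp only [Finset.mem_sdiff, Finset.mem_insert, Finset.mem_singleton, not_or] at hm
      rw [hy]; simp only [if_neg hm.2.1, if_neg hm.2.2, mul_one]
    have h2 : ∑ m ∈ ({p, q} : Finset (ZMod n)), a m * y m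
        = a p * (-(a q * s + c) / a p) + a q * s := by
      rw [Finset.sum_pair (Ne.symm hq)]
      simp only [hy]
      simp [hq]
    rw [h1, h2]
    field_simp
    ring
  have hprod := key y hsum
  rcases Finset.prod_eq_zero_iff.mp hprod with ⟨i, _, hi⟩
  rw [hy] at hi
  simp only at hi
  split_ifs at hi with h1 h2
  · rw [div_eq_zero_iff] at hi
    rcases hi with h | h
    · exact hqs (by linear_combination -h)
    · exact hap h
  · exact hs0 hi
  · exact one_ne_zero hi

end Stmt4Aux

namespace Stmt4Aux

variable {n : ℕ} [NeZero n] {ε : ℂ}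

lemma swap (c y : ZMod n → ℂ) :
    ∑ j : ZMod n, c j * ((n:ℂ)⁻¹ * ∑ m : ZMod n, y m * e ε (-(m*j)))
      = ∑ m : ZMod n, ((n:ℂ)⁻¹ * ∑ j : ZMod n, c j * e ε (-(m*j))) * y m := by
  calc ∑ j : ZMod n, c j * ((n:ℂ)⁻¹ * ∑ m : ZMod n, y m * e ε (-(m*j)))
      = ∑ j : ZMod n, ∑ m : ZMod n, (n:ℂ)⁻¹ * (c j * (y m * e ε (-(m*j)))) := by
        refine Finset.sum_congr rfl fun j _ => ?_
        rw [Finset.mul_sum, Finset.mul_sum]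
        exact Finset.sum_congr rfl fun m _ => by ring
    _ = ∑ m : ZMod n, ∑ j : ZMod n, (n:ℂ)⁻¹ * (c j * (y m * e ε (-(m*j)))) :=
        Finset.sum_comm
    _ = ∑ m : ZMod n, ((n:ℂ)⁻¹ * ∑ j : ZMod n, c j * e ε (-(m*j))) * y m := by
        refine Finset.sum_congr rfl fun m _ => ?_
        rw [Finset.mul_sum, Finset.sum_mul]
        exact Finset.sum_congr rfl fun j _ => by ring

lemma forward (hp : IsPrimitiveRoot ε n) (σ : Equiv.Perm (ZMod n))
    (H : ∀ x : ZMod n → ℂ,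
      ∏ i : (ZMod n)ˣ, ∑ j : ZMod n, e ε ((i : ZMod n) * j) * x (σ j)
        = ∏ i : (ZMod n)ˣ, ∑ j : ZMod n, e ε ((i : ZMod n) * j) * x j) :
    ∃ (a : (ZMod n)ˣ) (b : ZMod n), ∀ x : ZMod n, σ x = (a : ZMod n) * x + b := by
  classical
  -- reindexing of the permuted factor
  have reindex : ∀ (i : ZMod n) (x : ZMod n → ℂ),
      ∑ j : ZMod n, e ε (i * j) * x (σ j) = ∑ j : ZMod n, e ε (i * σ⁻¹ j) * x j := by
    intro i x
    have := Equiv.sum_comp σ (fun j => e ε (i * σ⁻¹ j) * x j)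
    simpa using this
  set A : (ZMod n)ˣ → ZMod n → ℂ :=
    fun i m => (n:ℂ)⁻¹ * ∑ j : ZMod n, e ε ((i : ZMod n) * σ⁻¹ j) * e ε (-(m*j)) with hA
  have Key : ∀ y : ZMod n → ℂ,
      ∏ i : (ZMod n)ˣ, (∑ m : ZMod n, A i m * y m) = ∏ i : (ZMod n)ˣ, y (i : ZMod n) := by
    intro y
    set x : ZMod n → ℂ := fun j => (n:ℂ)⁻¹ * ∑ m : ZMod n, y m * e ε (-(m*j)) with hx
    calc ∏ i : (ZMod n)ˣ, (∑ m : ZMod n, A i m * y m)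
        = ∏ i : (ZMod n)ˣ, ∑ j : ZMod n, e ε ((i : ZMod n) * j) * x (σ j) := by
          refine Finset.prod_congr rfl fun i _ => ?_
          rw [reindex, hx]
          exact (swap _ y).symm
      _ = ∏ i : (ZMod n)ˣ, ∑ j : ZMod n, e ε ((i : ZMod n) * j) * x j := H x
      _ = ∏ i : (ZMod n)ˣ, y (i : ZMod n) := by
          refine Finset.prod_congr rfl fun i _ => ?_
          rw [hx, swap _ y]
          exact delta_sum hp _ y
  set a : ZMod n → ℂ := A 1 with ha
  have key : ∀ y : ZMod n → ℂ, ∑ m : ZMod n, a m * y m = 0 →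
      ∏ i : (ZMod n)ˣ, y (i : ZMod n) = 0 := by
    intro y hy
    rw [← Key y]
    exact Finset.prod_eq_zero (Finset.mem_univ 1) hy
  have inv : ∀ j : ZMod n, ∑ m : ZMod n, a m * e ε (m * j) = e ε (σ⁻¹ j) := by
    intro j
    have := fourier_inv hp (fun k => e ε ((((1 : (ZMod n)ˣ) : ZMod n)) * σ⁻¹ k)) j
    simpa [ha, hA] using this
  -- find the nonzero entry
  have hsum0 : ∑ m : ZMod n, a m ≠ 0 := by
    intro h0
    have h2 := inv 0
    simp only [mul_zero, e_zero, mul_one] at h2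
    rw [h0] at h2
    exact e_ne_zero hp _ h2.symm
  obtain ⟨p, _, hap⟩ := Finset.exists_ne_zero_of_sum_ne_zero hsum0
  have hrow : ∀ m : ZMod n, m ≠ p → a m = 0 := row a hap key
  -- p is a unit
  have hup : IsUnit p := by
    by_contra hu
    set y : ZMod n → ℂ := fun m => if m = p then 0 else 1 with hy
    have hs : ∑ m : ZMod n, a m * y m = 0 := by
      refine Finset.sum_eq_zero fun m _ => ?_
      by_cases hm : m = p
      · simp [hy, hm]
      · rw [hrow m hm, zero_mul]
    rcases Finset.prod_eq_zero_iff.mp (key y hs) with ⟨i, _, hi⟩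
    rw [hy] at hi
    simp only at hi
    split_ifs at hi with h1
    · exact hu ⟨i, h1⟩
    · exact one_ne_zero hi
  obtain ⟨w, hw⟩ := hup
  -- the affine formula for σ⁻¹
  have hform : ∀ j : ZMod n, σ⁻¹ j = p * j + σ⁻¹ 0 := by
    have hsingle : ∀ j : ZMod n, ∑ m : ZMod n, a m * e ε (m * j) = a p * e ε (p * j) := by
      intro j
      exact Finset.sum_eq_single p (fun m _ hm => by rw [hrow m hm, zero_mul])
        (fun h => absurd (Finset.mem_univ p) h)
    have hap0 : a p = e ε (σ⁻¹ 0) := by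
      have := (inv 0).symm.trans (hsingle 0)
      simpa [e_zero] using this.symm
    intro j
    refine e_inj hp ?_
    rw [← inv j, hsingle j, hap0, ← e_add hp, add_comm]
  refine ⟨w⁻¹, -(((w⁻¹ : (ZMod n)ˣ) : ZMod n) * σ⁻¹ 0), fun x => ?_⟩
  have hx : x = p * σ x + σ⁻¹ 0 := by
    have := hform (σ x)
    rwa [← Equiv.Perm.mul_apply, inv_mul_cancel, Equiv.Perm.one_apply] at this
  have h1 : ((w⁻¹ : (ZMod n)ˣ) : ZMod n) * p = 1 := by
    rw [← hw]; exact w.inv_mul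
  linear_combination (-((w⁻¹ : (ZMod n)ˣ) : ZMod n)) * hx - σ x * h1

end Stmt4Aux

namespace Stmt4Aux

variable {n : ℕ} [NeZero n] {ε : ℂ}

lemma two_ne (hn : 2 < n) : (2 : ZMod n) ≠ 0 := by
  intro h
  have h2 : ((2 : ℕ) : ZMod n) = 0 := by exact_mod_cast h
  have := (ZMod.natCast_eq_zero_iff 2 n).mp h2
  exact absurd (Nat.le_of_dvd (by norm_num) this) (by omega)

lemma neg_ne (hn : 2 < n) (i : (ZMod n)ˣ) : -i ≠ i := by
  intro h
  have hval : (-(i : ZMod n)) = (i : ZMod n) := by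
    have := congrArg (fun u : (ZMod n)ˣ => (u : ZMod n)) h
    simpa using this
  have h1 : ((i⁻¹ : (ZMod n)ˣ) : ZMod n) * (i : ZMod n) = 1 := i.inv_mul
  have : (2 : ZMod n) = 0 := by linear_combination (-2 : ZMod n) * h1 - ((i⁻¹ : (ZMod n)ˣ) : ZMod n) * hval
  exact two_ne hn this

end Stmt4Aux

namespace Stmt4Aux

set_option linter.unusedSectionVars false

variable {n : ℕ} [NeZero n] {ε : ℂ}

lemma backward (hp : IsPrimitiveRoot ε n) (hn : 2 < n) (σ : Equiv.Perm (ZMod n))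
    (a : (ZMod n)ˣ) (b : ZMod n) (hσ : ∀ x : ZMod n, σ x = (a : ZMod n) * x + b)
    (x : ZMod n → ℂ) :
    ∏ i : (ZMod n)ˣ, ∑ j : ZMod n, e ε ((i : ZMod n) * j) * x (σ j)
      = ∏ i : (ZMod n)ˣ, ∑ j : ZMod n, e ε ((i : ZMod n) * j) * x j := by
  have haa : ((a : ZMod n)) * ((a⁻¹ : (ZMod n)ˣ) : ZMod n) = 1 := a.mul_inv
  have hinv : ∀ j : ZMod n, σ⁻¹ j = ((a⁻¹ : (ZMod n)ˣ) : ZMod n) * (j - b) := by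
    intro j
    have hs : σ (((a⁻¹ : (ZMod n)ˣ) : ZMod n) * (j - b)) = j := by
      rw [hσ]
      linear_combination (j - b) * haa
    calc σ⁻¹ j = σ⁻¹ (σ (((a⁻¹ : (ZMod n)ˣ) : ZMod n) * (j - b))) := by rw [hs]
      _ = ((a⁻¹ : (ZMod n)ˣ) : ZMod n) * (j - b) := σ.symm_apply_apply _
  have reindex : ∀ (i : ZMod n),
      ∑ j : ZMod n, e ε (i * j) * x (σ j) = ∑ j : ZMod n, e ε (i * σ⁻¹ j) * x j := by
    intro i
    have := Equiv.sum_comp σ (fun j => e ε (i * σ⁻¹ j) * x j)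
    simpa using this
  have factor : ∀ i : (ZMod n)ˣ,
      ∑ j : ZMod n, e ε ((i : ZMod n) * j) * x (σ j)
        = e ε (-((i : ZMod n) * ((a⁻¹ : (ZMod n)ˣ) : ZMod n) * b))
            * ∑ j : ZMod n, e ε (((i * a⁻¹ : (ZMod n)ˣ) : ZMod n) * j) * x j := by
    intro i
    rw [reindex, Finset.mul_sum]
    refine Finset.sum_congr rfl fun j _ => ?_
    have harg : (i : ZMod n) * σ⁻¹ j
        = ((i * a⁻¹ : (ZMod n)ˣ) : ZMod n) * j + -((i : ZMod n) * ((a⁻¹ : (ZMod n)ˣ) : ZMod n) * b) := by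
      rw [hinv, Units.val_mul]
      ring
    rw [harg, e_add hp]
    ring
  rw [Finset.prod_congr rfl fun i _ => factor i, Finset.prod_mul_distrib]
  have hsecond : ∏ i : (ZMod n)ˣ, ∑ j : ZMod n, e ε (((i * a⁻¹ : (ZMod n)ˣ) : ZMod n) * j) * x j
      = ∏ i : (ZMod n)ˣ, ∑ j : ZMod n, e ε ((i : ZMod n) * j) * x j :=
    Equiv.prod_comp (Equiv.mulRight a⁻¹) fun i => ∑ j : ZMod n, e ε ((i : ZMod n) * j) * x j
  have hfirst : ∏ i : (ZMod n)ˣ, e ε (-((i : ZMod n) * ((a⁻¹ : (ZMod n)ˣ) : ZMod n) * b)) = 1 := by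
    refine Finset.prod_ninvolution (fun i => -i) (fun i => ?_) (fun i h => ?_)
      (fun i => Finset.mem_univ _) (fun i => neg_neg i)
    · rw [← e_add hp]
      have : -((i : ZMod n) * ((a⁻¹ : (ZMod n)ˣ) : ZMod n) * b)
          + -(((-i : (ZMod n)ˣ) : ZMod n) * ((a⁻¹ : (ZMod n)ˣ) : ZMod n) * b) = 0 := by
        rw [Units.val_neg]; ring
      rw [this, e_zero]
    · exact neg_ne hn i
  rw [hsecond, hfirst, one_mul]

end Stmt4Aux


open Stmt4Aux in
/-- For n > 2, the stabilizer of Ψ_n = ∏_{i ∈ (ℤ/nℤ)^×} (∑_{j ∈ ℤ/nℤ} ε_n^{ij} X_j)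
under the permutation action on the variables is exactly AGL(1, ℤ/nℤ): a permutation σ
of ℤ/nℤ fixes Ψ_n iff σ(x) = ax + b for some a ∈ (ℤ/nℤ)^×, b ∈ ℤ/nℤ. -/
theorem stmt4 (n : ℕ) (hn : 2 < n) [NeZero n]
    (ε : ℂ) (hε : ε = Complex.exp (2 * Real.pi * Complex.I / n))
    (Ψ : MvPolynomial (ZMod n) ℂ)
    (hΨ : Ψ = ∏ i : (ZMod n)ˣ, ∑ j : ZMod n, C (ε ^ (((i : ZMod n) * j).val)) * X j)
    (σ : Equiv.Perm (ZMod n)) :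
    rename σ Ψ = Ψ ↔
      ∃ (a : (ZMod n)ˣ) (b : ZMod n), ∀ x : ZMod n, σ x = (a : ZMod n) * x + b := by
  have hp : IsPrimitiveRoot ε n := by
    rw [hε]; exact Complex.isPrimitiveRoot_exp n (NeZero.ne n)
  have heval : ∀ x : ZMod n → ℂ,
      MvPolynomial.eval x Ψ = ∏ i : (ZMod n)ˣ, ∑ j : ZMod n, e ε ((i : ZMod n) * j) * x j := by
    intro x
    rw [hΨ]
    simp [e, map_prod, map_sum]
  constructor
  · intro h
    apply forward hp σ
    intro x
    have h1 : MvPolynomial.eval x (MvPolynomial.rename σ Ψ) = MvPolynomial.eval x Ψ := by rw [h]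
    rw [MvPolynomial.eval_rename, heval, heval] at h1
    simpa [Function.comp] using h1
  · rintro ⟨a, b, hab⟩
    apply MvPolynomial.funext
    intro x
    rw [MvPolynomial.eval_rename, heval, heval]
    simpa [Function.comp] using backward hp hn σ a b hab x
end

section
/- Let m ∣ n with m > 2, and for i ∈ {0, ..., m-1} let Y_i = ∑_{j=0}^{n/m - 1} X_{i + mj}, a polynomial in the variables X_0, ..., X_{n-1}. Let Ψ_m = ∏_{i ∈ (ℤ/mℤ)^×} (∑_{j ∈ ℤ/mℤ} ε_m^{ij} X_j) over ℂ, where ε_m = e^{2π√(-1)/m}. Then a permutation α of {0, 1, ..., n-1} fixes the polynomial Ψ_m(Y_0, ..., Y_{m-1}) (acting by permuting the variables X_0, ..., X_{n-1}) if and only if there exists an affine permutation τ ∈ AGL(1, ℤ/mℤ) such that α(x) ≡ τ(x mod m) (mod m) for all x ∈ {0, ..., n-1}; that is, the stabilizer of Ψ_m(Y_0, ..., Y_{m-1}) is the wreath product Stab(Ψ_m) ≀ S_{n/m}, consisting of the permutations mapping each block I_i = {i + mj : 0 ≤ j ≤ n/m - 1} onto the block I_{τ(i)} for some τ in the stabilizer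 of Ψ_m. -/
open MvPolynomial

private lemma isUnit_eq_C {n : ℕ} (p : MvPolynomial (Fin n) ℂ) (hp : IsUnit p) :
    ∃ c : ℂ, p = C c := by
  induction n with
  | zero => exact (MvPolynomial.C_surjective (Fin 0) p).imp fun c h => h.symm
  | succ n ih =>
    have h2 : IsUnit (MvPolynomial.finSuccEquiv ℂ n p) := hp.map _
    rw [Polynomial.isUnit_iff] at h2
    obtain ⟨r, hr, hrp⟩ := h2
    obtain ⟨c, rfl⟩ := ih r hr
    refine ⟨c, ?_⟩
    have h3 := congrArg (MvPolynomial.finSuccEquiv ℂ n).symm hrp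
    rw [AlgEquiv.symm_apply_apply] at h3
    rw [← h3]
    have : (MvPolynomial.finSuccEquiv ℂ n) (C c : MvPolynomial (Fin (n+1)) ℂ)
        = Polynomial.C (C c) := by
      simp [MvPolynomial.finSuccEquiv_apply]
    rw [← this, AlgEquiv.symm_apply_apply]

private lemma coeff_linear {n : ℕ} (f : Fin n → ℂ) (y : Fin n) :
    coeff (Finsupp.single y 1) (∑ x : Fin n, C (f x) * X x) = f y := by
  rw [MvPolynomial.coeff_sum]
  simp only [coeff_C_mul, MvPolynomial.coeff_X']
  rw [Finset.sum_eq_single y]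
  · simp
  · intro b _ hb
    rw [if_neg, mul_zero]
    exact fun h => hb (by
      have := Finsupp.single_left_injective (α := Fin n) (one_ne_zero (α := ℕ)) h
      exact this)
  · simp

private lemma irreducible_linear {n : ℕ} (f : Fin (n+1) → ℂ) (h0 : f 0 ≠ 0) :
    Irreducible (∑ x : Fin (n+1), C (f x) * X x : MvPolynomial (Fin (n+1)) ℂ) := by
  rw [← MulEquiv.irreducible_iff (MvPolynomial.finSuccEquiv ℂ n)]
  have him : (MvPolynomial.finSuccEquiv ℂ n) (∑ x : Fin (n+1), C (f x) * X x)
      = Polynomial.C (C (f 0)) * Polynomial.X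
        + Polynomial.C (∑ j : Fin n, C (f j.succ) * X j) := by
    rw [map_sum, Fin.sum_univ_succ]
    simp [MvPolynomial.finSuccEquiv_X_zero, MvPolynomial.finSuccEquiv_X_succ,
      MvPolynomial.finSuccEquiv_apply, map_sum]
  rw [him]
  set v : MvPolynomial (Fin n) ℂ := ∑ j : Fin n, C (f j.succ) * X j with hv
  have hunit : IsUnit (Polynomial.C (C (f 0)) : Polynomial (MvPolynomial (Fin n) ℂ)) := by
    refine (Polynomial.isUnit_C).mpr ?_
    exact (isUnit_iff_ne_zero.mpr h0).map (MvPolynomial.C : ℂ →+* MvPolynomial (Fin n) ℂ)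
  have key : Polynomial.C (C (f 0)) * Polynomial.X + Polynomial.C v
      = Polynomial.C (C (f 0)) * (Polynomial.X - Polynomial.C (-(C (f 0)⁻¹) * v)) := by
    rw [mul_sub, ← Polynomial.C_mul]
    have : (C (f 0) : MvPolynomial (Fin n) ℂ) * (-(C (f 0)⁻¹) * v) = -v := by
      rw [← mul_assoc, mul_neg, ← C_mul, mul_inv_cancel₀ h0]
      simp
    rw [this, Polynomial.C_neg]
    ring
  rw [key]
  exact (associated_unit_mul_left _ _ hunit).symm.irreducible (Polynomial.irreducible_X_sub_C _)

private lemma pow_val_mod {m : ℕ} {ε : ℂ} (h1 : ε ^ m = 1) (j : ℕ) :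
    ε ^ (j % m) = ε ^ j := by
  conv_rhs => rw [← Nat.div_add_mod j m]
  rw [pow_add, pow_mul, h1, one_pow, one_mul]

private lemma chi_add {m : ℕ} [NeZero m] {ε : ℂ} (h1 : ε ^ m = 1) (s t : ZMod m) :
    ε ^ (s + t).val = ε ^ s.val * ε ^ t.val := by
  rw [ZMod.val_add, pow_val_mod h1, pow_add]

private lemma chi_inj {m : ℕ} [NeZero m] {ε : ℂ} (hε : IsPrimitiveRoot ε m) {s t : ZMod m}
    (h : ε ^ s.val = ε ^ t.val) : s = t :=
  ZMod.val_injective m (hε.pow_inj (ZMod.val_lt s) (ZMod.val_lt t) h)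

private lemma chi_sum {m : ℕ} [NeZero m] {ε : ℂ} (h1 : ε ^ m = 1) {ι : Type*} (s : Finset ι)
    (g : ι → ZMod m) : ∏ i ∈ s, ε ^ (g i).val = ε ^ (∑ i ∈ s, g i).val := by
  classical
  induction s using Finset.cons_induction with
  | empty => simp
  | cons a s ha ih => rw [Finset.prod_cons, Finset.sum_cons, chi_add h1, ih]

private lemma sum_units_zero {m : ℕ} [NeZero m] (hm : 2 < m) :
    ∑ i : (ZMod m)ˣ, (i : ZMod m) = 0 := by
  refine Finset.sum_ninvolution (fun a => -a) (fun a => ?_) (fun a _ => ?_)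
    (fun a => Finset.mem_univ _) (fun a => neg_neg a)
  · simp
  · intro h
    have h2 : (-1 : ZMod m) = 1 := by
      have := congrArg (fun u : (ZMod m)ˣ => (u : ZMod m) * (a⁻¹ : (ZMod m)ˣ)) h
      simpa [Units.val_neg, neg_mul, Units.mul_inv] using this
    have : Fact (2 < m) := ⟨hm⟩
    exact ZMod.neg_one_ne_one h2

/-- Let m ∣ n with m > 2, and Y_k = ∑_{x ≡ k (mod m)} X_x ∈ ℂ[X_0,...,X_{n-1}]. A
permutation α of {0,...,n-1} fixes Ψ_m(Y_0,...,Y_{m-1}) iff there is an affine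
permutation τ ∈ AGL(1, ℤ/mℤ) with α(x) ≡ τ(x mod m) (mod m) for all x; i.e. the
stabilizer is the wreath product Stab(Ψ_m) ≀ S_{n/m}. -/
theorem stmt5 (m n : ℕ) (hm : 2 < m) [NeZero m] (hmn : m ∣ n) (hn : 0 < n)
    (ε : ℂ) (hε : ε = Complex.exp (2 * Real.pi * Complex.I / m))
    (Y : ZMod m → MvPolynomial (Fin n) ℂ)
    (hY : ∀ k : ZMod m, Y k = ∑ x : Fin n, if ((x : ℕ) : ZMod m) = k then X x else 0)
    (P : MvPolynomial (Fin n) ℂ)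
    (hP : P = ∏ i : (ZMod m)ˣ, ∑ k : ZMod m, C (ε ^ (((i : ZMod m) * k).val)) * Y k)
    (α : Equiv.Perm (Fin n)) :
    rename α P = P ↔
      ∃ (a : (ZMod m)ˣ) (b : ZMod m),
        ∀ x : Fin n, (((α x : ℕ)) : ZMod m) = (a : ZMod m) * ((x : ℕ) : ZMod m) + b := by
  obtain ⟨N, rfl⟩ : ∃ N, n = N + 1 := ⟨n - 1, by omega⟩
  have hεprim : IsPrimitiveRoot ε m := by
    rw [hε]; exact Complex.isPrimitiveRoot_exp m (NeZero.ne m)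
  have h1 : ε ^ m = 1 := hεprim.pow_eq_one
  have hεne : ε ≠ 0 := hεprim.ne_zero (NeZero.ne m)
  have hχne : ∀ s : ZMod m, ε ^ s.val ≠ 0 := fun s => pow_ne_zero _ hεne
  set L : ZMod m → MvPolynomial (Fin (N+1)) ℂ :=
    fun i => ∑ x : Fin (N+1), C (ε ^ (i * ((x : ℕ) : ZMod m)).val) * X x with hLdef
  have hPL : P = ∏ i : (ZMod m)ˣ, L (i : ZMod m) := by
    rw [hP]
    refine Finset.prod_congr rfl fun i _ => ?_
    calc ∑ k : ZMod m, C (ε ^ ((i : ZMod m) * k).val) * Y k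
        = ∑ k : ZMod m, ∑ x : Fin (N+1),
            (if ((x : ℕ) : ZMod m) = k then C (ε ^ ((i : ZMod m) * k).val) * X x else 0) := by
          refine Finset.sum_congr rfl fun k _ => ?_
          rw [hY k, Finset.mul_sum]
          exact Finset.sum_congr rfl fun x _ => by rw [mul_ite, mul_zero]
      _ = ∑ x : Fin (N+1), ∑ k : ZMod m,
            (if ((x : ℕ) : ZMod m) = k then C (ε ^ ((i : ZMod m) * k).val) * X x else 0) :=
          Finset.sum_comm
      _ = L (i : ZMod m) := by
          refine Finset.sum_congr rfl fun x _ => ?_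
          rw [Finset.sum_ite_eq]
          simp
  have hrename : ∀ i : ZMod m, rename (⇑α) (L i)
      = ∑ y : Fin (N+1), C (ε ^ (i * ((α.symm y : ℕ) : ZMod m)).val) * X y := by
    intro i
    rw [hLdef, map_sum]
    simp only [map_mul, rename_C, rename_X]
    rw [← Equiv.sum_comp α (fun y => C (ε ^ (i * ((α.symm y : ℕ) : ZMod m)).val) * X y)]
    refine Finset.sum_congr rfl fun x _ => ?_
    rw [Equiv.symm_apply_apply]
  have hIrr : ∀ i : ZMod m, Irreducible (L i) :=
    fun i => irreducible_linear (fun x : Fin (N+1) => ε ^ (i * ((x : ℕ) : ZMod m)).val) (hχne _)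
  constructor
  · intro h
    have hdvd1 : L 1 ∣ P := by
      rw [hPL]
      have := Finset.dvd_prod_of_mem (fun i : (ZMod m)ˣ => L (i : ZMod m))
        (Finset.mem_univ (1 : (ZMod m)ˣ))
      simpa using this
    have hq : rename (⇑α) (L 1) ∣ P := by
      have h2 := map_dvd (rename (⇑α) : MvPolynomial (Fin (N+1)) ℂ →ₐ[ℂ] _) hdvd1
      rwa [h] at h2
    have hqirr : Irreducible (rename (⇑α) (L 1)) := by
      have heq : rename (⇑α) (L 1) = renameEquiv ℂ α (L 1) := rfl
      rw [heq, MulEquiv.irreducible_iff]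
      exact hIrr 1
    have hqprime : Prime (rename (⇑α) (L 1)) :=
      (UniqueFactorizationMonoid.irreducible_iff_prime).mp hqirr
    obtain ⟨a₀, -, hdvd2⟩ := hqprime.exists_mem_finset_dvd (hPL ▸ hq)
    have hassoc := hqirr.associated_of_dvd (hIrr (a₀ : ZMod m)) hdvd2
    obtain ⟨u, hu⟩ := hassoc
    obtain ⟨c, hc⟩ := isUnit_eq_C (u : MvPolynomial (Fin (N+1)) ℂ) u.isUnit
    rw [hc] at hu
    have key : ∀ y : Fin (N+1),
        ε ^ (((α.symm y : ℕ) : ZMod m)).val * c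
          = ε ^ ((a₀ : ZMod m) * ((y : ℕ) : ZMod m)).val := by
      intro y
      have h5 : (∑ z : Fin (N+1),
            C (ε ^ ((1 : ZMod m) * ((α.symm z : ℕ) : ZMod m)).val) * X z) * C c
          = ∑ z : Fin (N+1),
            C (ε ^ ((1 : ZMod m) * ((α.symm z : ℕ) : ZMod m)).val * c) * X z := by
        rw [Finset.sum_mul]
        exact Finset.sum_congr rfl fun z _ => by rw [C_mul]; ring
      have h3 := congrArg (coeff (Finsupp.single y 1)) hu
      rw [hrename 1, h5] at h3
      have h6 := coeff_linear
        (fun z : Fin (N+1) => ε ^ ((1 : ZMod m) * ((α.symm z : ℕ) : ZMod m)).val * c) y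
      have h7 := coeff_linear
        (fun z : Fin (N+1) => ε ^ ((a₀ : ZMod m) * ((z : ℕ) : ZMod m)).val) y
      rw [h6] at h3
      rw [hLdef] at h3
      rw [h7] at h3
      simpa using h3
    have hy0 := key 0
    have hy0' : ε ^ (((α.symm 0 : ℕ) : ZMod m)).val * c = 1 := by
      simpa using hy0
    set b₀ : ZMod m := ((α.symm 0 : ℕ) : ZMod m) with hb₀
    have habs : ∀ y : Fin (N+1),
        ((α.symm y : ℕ) : ZMod m) = (a₀ : ZMod m) * ((y : ℕ) : ZMod m) + b₀ := by
      intro y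
      refine chi_inj hεprim ?_
      rw [chi_add h1]
      calc ε ^ (((α.symm y : ℕ) : ZMod m)).val
          = ε ^ (((α.symm y : ℕ) : ZMod m)).val * (ε ^ b₀.val * c) := by
            rw [hy0']; ring
        _ = (ε ^ (((α.symm y : ℕ) : ZMod m)).val * c) * ε ^ b₀.val := by ring
        _ = ε ^ ((a₀ : ZMod m) * ((y : ℕ) : ZMod m)).val * ε ^ b₀.val := by rw [key y]
    refine ⟨a₀⁻¹, -((a₀⁻¹ : (ZMod m)ˣ) * b₀ : ZMod m), fun x => ?_⟩
    have h6 := habs (α x)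
    rw [Equiv.symm_apply_apply] at h6
    have hinv : ((a₀⁻¹ : (ZMod m)ˣ) : ZMod m) * (a₀ : ZMod m) = 1 := by
      rw [← Units.val_mul, inv_mul_cancel, Units.val_one]
    have h8 : ((α x : ℕ) : ZMod m)
        = ((a₀⁻¹ : (ZMod m)ˣ) : ZMod m) * (((x : ℕ) : ZMod m) - b₀) := by
      rw [h6]
      rw [add_sub_cancel_right, ← mul_assoc, hinv, one_mul]
    rw [h8]
    ring
  · rintro ⟨a, b, hab⟩
    have hinv : ((a⁻¹ : (ZMod m)ˣ) : ZMod m) * (a : ZMod m) = 1 := by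
      rw [← Units.val_mul, inv_mul_cancel, Units.val_one]
    have hsymm : ∀ y : Fin (N+1), ((α.symm y : ℕ) : ZMod m)
        = ((a⁻¹ : (ZMod m)ˣ) : ZMod m) * ((y : ℕ) : ZMod m)
          - ((a⁻¹ : (ZMod m)ˣ) : ZMod m) * b := by
      intro y
      have h2 := hab (α.symm y)
      rw [Equiv.apply_symm_apply] at h2
      rw [h2, mul_add, ← mul_assoc, hinv, one_mul]
      ring
    rw [hPL, map_prod]
    have hfac : ∀ i : (ZMod m)ˣ, rename (⇑α) (L (i : ZMod m))
        = C (ε ^ (((i : ZMod m) * (((a⁻¹ : (ZMod m)ˣ) : ZMod m) * -b)).val))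
          * L ((i : ZMod m) * ((a⁻¹ : (ZMod m)ˣ) : ZMod m)) := by
      intro i
      rw [hrename]
      have harg : ∀ y : Fin (N+1), (i : ZMod m) * ((α.symm y : ℕ) : ZMod m)
          = ((i : ZMod m) * ((a⁻¹ : (ZMod m)ˣ) : ZMod m)) * ((y : ℕ) : ZMod m)
            + (i : ZMod m) * (((a⁻¹ : (ZMod m)ˣ) : ZMod m) * -b) := by
        intro y
        rw [hsymm y]
        ring
      rw [hLdef, Finset.mul_sum]
      refine Finset.sum_congr rfl fun y _ => ?_
      rw [harg y, chi_add h1, C_mul]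
      ring
    rw [Finset.prod_congr rfl (fun i _ => hfac i), Finset.prod_mul_distrib]
    have hconst : (∏ i : (ZMod m)ˣ,
        C (ε ^ (((i : ZMod m) * (((a⁻¹ : (ZMod m)ˣ) : ZMod m) * -b)).val))
          : MvPolynomial (Fin (N+1)) ℂ) = 1 := by
      have hCp : (∏ i : (ZMod m)ˣ,
          C (ε ^ (((i : ZMod m) * (((a⁻¹ : (ZMod m)ˣ) : ZMod m) * -b)).val))
            : MvPolynomial (Fin (N+1)) ℂ)
          = C (∏ i : (ZMod m)ˣ, ε ^ (((i : ZMod m) * (((a⁻¹ : (ZMod m)ˣ) : ZMod m) * -b)).val)) :=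
        (map_prod (C : ℂ →+* MvPolynomial (Fin (N+1)) ℂ) _ Finset.univ).symm
      rw [hCp, chi_sum h1]
      have hz : ∑ i : (ZMod m)ˣ, (i : ZMod m) * (((a⁻¹ : (ZMod m)ˣ) : ZMod m) * -b) = 0 := by
        rw [← Finset.sum_mul, sum_units_zero hm, zero_mul]
      rw [hz]
      simp
    rw [hconst, one_mul]
    have hre : ∀ i : (ZMod m)ˣ,
        L ((i : ZMod m) * ((a⁻¹ : (ZMod m)ˣ) : ZMod m))
          = (fun j : (ZMod m)ˣ => L (j : ZMod m)) ((Equiv.mulRight a⁻¹) i) := by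
      intro i
      simp [Units.val_mul]
    rw [Finset.prod_congr rfl (fun i _ => hre i)]
    exact Equiv.prod_comp (Equiv.mulRight a⁻¹) (fun j : (ZMod m)ˣ => L (j : ZMod m))
end

section
/- Let Δ_n ∈ ℂ[X_0, ..., X_{n-1}] be the determinant of the n×n circulant matrix whose (i,j) entry is X_{j-i mod n}. Then Δ_n = ∏_{m ∣ n} Ψ_m(Z_0^{(m)}, Z_1^{(m)}, ..., Z_{m-1}^{(m)}), where the product is over all positive divisors m of n, Z_k^{(m)} = ∑_{0 ≤ j ≤ n-1, j ≡ k (mod m)} X_j, and Ψ_m = ∏_{i ∈ (ℤ/mℤ)^×} (∑_{j ∈ ℤ/mℤ} ε_m^{ij} X_j) with ε_m = e^{2π√(-1)/m}. -/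
set_option maxHeartbeats 1000000

open MvPolynomial

private lemma pow_congr_mod {ζ : ℂ} {n : ℕ} (hζ : ζ ^ n = 1) {a b : ℕ} (h : a ≡ b [MOD n]) :
    ζ ^ a = ζ ^ b := by
  have key : ∀ c : ℕ, ζ ^ c = ζ ^ (c % n) := by
    intro c
    conv_lhs => rw [← Nat.div_add_mod c n, pow_add, pow_mul, hζ, one_pow, one_mul]
  rw [key a, key b, h]

private lemma circulant_det_eq (n : ℕ) [NeZero n] :
    (Matrix.of fun i j : ZMod n => (X (j - i) : MvPolynomial (ZMod n) ℂ)).det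
      = ∏ t : ZMod n, ∑ u : ZMod n,
          C (Complex.exp (2 * Real.pi * Complex.I / n) ^ (u.val * t.val)) * X u := by
  set ζ : ℂ := Complex.exp (2 * Real.pi * Complex.I / n) with hζdef
  have hprim : IsPrimitiveRoot ζ n := Complex.isPrimitiveRoot_exp n (NeZero.ne n)
  have hone : ζ ^ n = 1 := hprim.pow_eq_one
  set A : Matrix (ZMod n) (ZMod n) (MvPolynomial (ZMod n) ℂ) :=
    Matrix.of fun i j : ZMod n => (X (j - i) : MvPolynomial (ZMod n) ℂ) with hA
  set W0 : Matrix (ZMod n) (ZMod n) ℂ :=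
    Matrix.of fun i t : ZMod n => ζ ^ (i.val * t.val) with hW0def
  set D : Matrix (ZMod n) (ZMod n) (MvPolynomial (ZMod n) ℂ) :=
    Matrix.diagonal fun t => ∑ u : ZMod n, C (ζ ^ (u.val * t.val)) * X u with hD
  have hAW : A * W0.map C = W0.map C * D := by
    refine Matrix.ext fun i t => ?_
    rw [Matrix.mul_apply, Matrix.mul_diagonal]
    have : ∀ u : ZMod n, X u * C (ζ ^ ((i + u).val * t.val))
        = C (ζ ^ (i.val * t.val)) * (C (ζ ^ (u.val * t.val)) * X u) := by
      intro u
      have hc : ζ ^ ((i + u).val * t.val) = ζ ^ (i.val * t.val + u.val * t.val) := by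
        apply pow_congr_mod hone
        calc (i + u).val * t.val ≡ (i.val + u.val) * t.val [MOD n] := by
              rw [ZMod.val_add]; exact (Nat.mod_modEq _ n).mul_right t.val
          _ = i.val * t.val + u.val * t.val := add_mul _ _ _
      rw [hc, pow_add, C_mul]; ring
    calc ∑ j : ZMod n, A i j * (W0.map C) j t
        = ∑ u : ZMod n, X u * C (ζ ^ ((i + u).val * t.val)) := by
          have hcan : ∀ x : ZMod n, i + (x - i) = x := fun x => by ring
          refine Fintype.sum_equiv (Equiv.subRight i) _ _ fun x => ?_
          simp [hA, hW0def, Matrix.map_apply, Equiv.subRight_apply, hcan x]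
      _ = ∑ u : ZMod n, C (ζ ^ (i.val * t.val)) * (C (ζ ^ (u.val * t.val)) * X u) := by
          exact Finset.sum_congr rfl fun u _ => this u
      _ = (W0.map C) i t * ∑ u : ZMod n, C (ζ ^ (u.val * t.val)) * X u := by
          rw [Finset.mul_sum]; simp [hW0def, Matrix.map_apply]
  have hW0 : W0.det ≠ 0 := by
    let e : Fin n ≃ ZMod n :=
      ⟨fun i => ((i : ℕ) : ZMod n), fun t => ⟨t.val, t.val_lt⟩,
        fun i => by ext; simp [ZMod.val_natCast_of_lt i.isLt],
        fun t => by simp [ZMod.natCast_zmod_val]⟩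
    rw [← Matrix.det_submatrix_equiv_self e W0]
    have : W0.submatrix e e = Matrix.vandermonde (fun i : Fin n => ζ ^ (i : ℕ)) := by
      ext i j
      simp only [Matrix.submatrix_apply, hW0def, Matrix.of_apply, Matrix.vandermonde]
      rw [show (e i).val = (i : ℕ) from ZMod.val_natCast_of_lt i.isLt,
        show (e j).val = (j : ℕ) from ZMod.val_natCast_of_lt j.isLt, pow_mul]
    rw [this, Matrix.det_vandermonde]
    refine Finset.prod_ne_zero_iff.2 fun i _ => Finset.prod_ne_zero_iff.2 fun j hj => ?_
    rw [Finset.mem_Ioi] at hj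
    refine sub_ne_zero.2 fun hEq => ?_
    exact absurd (hprim.pow_inj j.isLt i.isLt hEq) (by omega)
  have hCW0 : (C W0.det : MvPolynomial (ZMod n) ℂ) ≠ 0 := by
    simpa using hW0
  have hmapdet := ((MvPolynomial.C : ℂ →+* MvPolynomial (ZMod n) ℂ).map_det W0).symm
  rw [RingHom.mapMatrix_apply] at hmapdet
  have hdet := congrArg Matrix.det hAW
  rw [Matrix.det_mul, Matrix.det_mul, hmapdet] at hdet
  have : C W0.det * A.det = C W0.det * D.det := by
    rw [mul_comm] at hdet; rw [hdet, mul_comm]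
  have hAD : A.det = D.det := mul_left_cancel₀ hCW0 this
  rw [hAD, hD, Matrix.det_diagonal]

private lemma factor_eq (n m : ℕ) [NeZero n] (hm : m ∣ n) (hm0 : 0 < m) (i : ℕ) :
    (∑ k ∈ Finset.range m,
        C (Complex.exp (2 * Real.pi * Complex.I / m) ^ (i * k)) *
          ∑ x : ZMod n, if x.val % m = k then (X x : MvPolynomial (ZMod n) ℂ) else 0)
      = ∑ u : ZMod n,
          C (Complex.exp (2 * Real.pi * Complex.I / n) ^
              (u.val * ((i * (n / m) : ℕ) : ZMod n).val)) * X u := by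
  set ζ : ℂ := Complex.exp (2 * Real.pi * Complex.I / n) with hζdef
  set ε : ℂ := Complex.exp (2 * Real.pi * Complex.I / m) with hεdef
  have hn0 : (n : ℂ) ≠ 0 := Nat.cast_ne_zero.2 (NeZero.ne n)
  have hm0' : (m : ℂ) ≠ 0 := Nat.cast_ne_zero.2 hm0.ne'
  have hone : ζ ^ n = 1 := (Complex.isPrimitiveRoot_exp n (NeZero.ne n)).pow_eq_one
  have hεζ : ε = ζ ^ (n / m) := by
    rw [hεdef, hζdef, ← Complex.exp_nat_mul]
    congr 1
    rw [Nat.cast_div hm hm0']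
    field_simp
  have key : ∀ x : ZMod n,
      ε ^ (i * (x.val % m)) = ζ ^ (x.val * ((i * (n / m) : ℕ) : ZMod n).val) := by
    intro x
    rw [hεζ, ← pow_mul, ZMod.val_natCast]
    apply pow_congr_mod hone
    have h1 : x.val * (i * (n / m) % n) ≡ x.val * (i * (n / m)) [MOD n] :=
      (Nat.mod_modEq _ n).mul_left x.val
    have h2 : (x.val % m * i) * (n / m) ≡ (x.val * i) * (n / m) [MOD n] := by
      have := ((Nat.mod_modEq x.val m).mul_right i).mul_right' (n / m)
      rwa [Nat.mul_div_cancel' hm] at this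
    calc n / m * (i * (x.val % m)) = (x.val % m * i) * (n / m) := by ring
      _ ≡ (x.val * i) * (n / m) [MOD n] := h2
      _ = x.val * (i * (n / m)) := by ring
      _ ≡ x.val * (i * (n / m) % n) [MOD n] := h1.symm
  calc (∑ k ∈ Finset.range m, C (ε ^ (i * k)) *
          ∑ x : ZMod n, if x.val % m = k then (X x : MvPolynomial (ZMod n) ℂ) else 0)
      = ∑ k ∈ Finset.range m, ∑ x : ZMod n,
          (if x.val % m = k then C (ε ^ (i * k)) * X x else 0) := by
        refine Finset.sum_congr rfl fun k _ => ?_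
        rw [Finset.mul_sum]
        exact Finset.sum_congr rfl fun x _ => by rw [mul_ite, mul_zero]
    _ = ∑ x : ZMod n, ∑ k ∈ Finset.range m,
          (if x.val % m = k then C (ε ^ (i * k)) * X x else 0) := Finset.sum_comm
    _ = ∑ x : ZMod n, C (ε ^ (i * (x.val % m))) * X x := by
        refine Finset.sum_congr rfl fun x _ => ?_
        rw [Finset.sum_ite_eq]
        simp [Nat.mod_lt _ hm0]
    _ = ∑ u : ZMod n, C (ζ ^ (u.val * ((i * (n / m) : ℕ) : ZMod n).val)) * X u := by
        exact Finset.sum_congr rfl fun x _ => by rw [key x]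

private lemma prod_reindex {M : Type*} [CommMonoid M] (n : ℕ) [NeZero n] (hn : 0 < n)
    (G : ZMod n → M) :
    (∏ t : ZMod n, G t)
      = ∏ m ∈ n.divisors, ∏ i ∈ (Finset.range m).filter (fun i => Nat.Coprime i m),
          G (((i * (n / m) : ℕ) : ZMod n)) := by
  rw [Finset.prod_sigma']
  refine (Finset.prod_nbij' (fun p : (_ : ℕ) × ℕ => (((p.2 * (n / p.1) : ℕ) : ZMod n)))
    (fun t : ZMod n => ⟨n / Nat.gcd t.val n, t.val / Nat.gcd t.val n⟩)
    (fun _ _ => Finset.mem_univ _) ?_ ?_ ?_ (fun _ _ => rfl)).symm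
  · intro t _
    have hg : 0 < Nat.gcd t.val n := Nat.gcd_pos_of_pos_right _ hn
    rw [Finset.mem_sigma]
    constructor
    · exact Nat.mem_divisors.2 ⟨Nat.div_dvd_of_dvd (Nat.gcd_dvd_right _ _), hn.ne'⟩
    · rw [Finset.mem_filter, Finset.mem_range]
      exact ⟨Nat.div_lt_div_of_lt_of_dvd (Nat.gcd_dvd_right _ _) t.val_lt,
        Nat.coprime_div_gcd_div_gcd hg⟩
  · rintro ⟨m, i⟩ hp
    rw [Finset.mem_sigma, Nat.mem_divisors, Finset.mem_filter, Finset.mem_range] at hp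
    dsimp only at hp ⊢
    obtain ⟨⟨hmn, -⟩, hilt, hico⟩ := hp
    have hm0 : 0 < m := Nat.pos_of_dvd_of_pos hmn hn
    have hnm : 0 < n / m := Nat.div_pos (Nat.le_of_dvd hn hmn) hm0
    have hlt : i * (n / m) < n := by
      calc i * (n / m) < m * (n / m) := (Nat.mul_lt_mul_right hnm).2 hilt
        _ = n := Nat.mul_div_cancel' hmn
    have hval : (((i * (n / m) : ℕ) : ZMod n)).val = i * (n / m) :=
      ZMod.val_natCast_of_lt hlt
    have hgcd : Nat.gcd (i * (n / m)) n = n / m := by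
      calc Nat.gcd (i * (n / m)) n = Nat.gcd (i * (n / m)) (m * (n / m)) := by
            rw [Nat.mul_div_cancel' hmn]
        _ = Nat.gcd i m * (n / m) := Nat.gcd_mul_right i (n / m) m
        _ = n / m := by rw [Nat.Coprime.gcd_eq_one hico, one_mul]
    rw [hval, hgcd, Nat.div_div_self hmn hn.ne', Nat.mul_div_cancel _ hnm]
  · intro t _
    have h1 : n / (n / Nat.gcd t.val n) = Nat.gcd t.val n :=
      Nat.div_div_self (Nat.gcd_dvd_right _ _) hn.ne'
    simp only [h1]
    rw [Nat.div_mul_cancel (Nat.gcd_dvd_left _ _), ZMod.natCast_zmod_val]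

/-- The circulant determinant Δ_n = det[X_{j-i mod n}] factors as
Δ_n = ∏_{m ∣ n} Ψ_m(Z_0^{(m)}, ..., Z_{m-1}^{(m)}) where
Z_k^{(m)} = ∑_{j ≡ k (mod m)} X_j and Ψ_m = ∏_{i ∈ (ℤ/mℤ)^×} ∑_{j ∈ ℤ/mℤ} ε_m^{ij} X_j. -/
theorem stmt7 (n : ℕ) (hn : 0 < n) [NeZero n] :
    (Matrix.of fun i j : ZMod n => (X (j - i) : MvPolynomial (ZMod n) ℂ)).det
      = ∏ m ∈ n.divisors,
          ∏ i ∈ (Finset.range m).filter (fun i => Nat.Coprime i m),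
            ∑ k ∈ Finset.range m,
              C (Complex.exp (2 * Real.pi * Complex.I / m) ^ (i * k)) *
                ∑ x : ZMod n, if x.val % m = k then X x else 0 := by
  rw [circulant_det_eq n, prod_reindex n hn]
  refine Finset.prod_congr rfl fun m hm => Finset.prod_congr rfl fun i _ => ?_
  have hmn := (Nat.mem_divisors.1 hm).1
  exact (factor_eq n m hmn (Nat.pos_of_dvd_of_pos hmn hn) i).symm
end

section
/- Let p be a prime, e ≥ 0 and m ≥ 1 with p ∤ m, and set n = p^e m. In the polynomial ring F_p[X_0, ..., X_{n-1}], the circulant determinant Δ_n(X_0, ..., X_{n-1}) = det[X_{j-i mod n}] satisfies Δ_n(X_0, ..., X_{n-1}) = Δ_m(Y_0, ..., Y_{m-1})^{p^e}, where Y_j = ∑_{k=0}^{p^e - 1} X_{j + km} for 0 ≤ j ≤ m-1 and Δ_m is the m×m circulant determinant det[X_{j-i mod m}]. -/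
open Matrix Polynomial

section NilpotentDet

variable {ι : Type*} [DecidableEq ι] [Fintype ι]

lemma det_one_add_isNilpotent {R : Type*} [CommRing R] [IsDomain R]
    {Q : Matrix ι ι R} (hQ : IsNilpotent Q) : (1 + Q).det = 1 := by
  have h1 : Q.charpolyRev = 1 := by
    obtain ⟨r, hr, hCr⟩ := Polynomial.isUnit_iff.mp (Matrix.isUnit_charpolyRev_of_isNilpotent hQ)
    have hr1 : r = 1 := by
      have h := Matrix.eval_charpolyRev (M := Q)
      rw [← hCr] at h; simpa using h
    rw [← hCr, hr1, Polynomial.C_1]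
  have h2 := congrArg (Polynomial.eval (-1 : R)) h1
  rw [Matrix.charpolyRev, ← Polynomial.coe_evalRingHom, RingHom.map_det] at h2
  have h3 : (1 - (X : R[X]) • Q.map Polynomial.C).map (Polynomial.evalRingHom (-1 : R)) = 1 + Q := by
    ext i j
    by_cases h : i = j <;>
      simp [h, Matrix.one_apply, Matrix.map_apply, sub_eq_add_neg]
  rw [RingHom.mapMatrix_apply, h3] at h2
  simpa using h2

lemma det_add_isNilpotent_of_unit {R : Type*} [CommRing R] [IsDomain R]
    {A Q : Matrix ι ι R} (hA : IsUnit A.det) (h : Commute A Q) (hQ : IsNilpotent Q) :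
    (A + Q).det = A.det := by
  have h1 : A⁻¹ * A = 1 := Matrix.nonsing_inv_mul A hA
  have h2 : A * A⁻¹ = 1 := Matrix.mul_nonsing_inv A hA
  have hc : Commute A⁻¹ Q := by
    calc A⁻¹ * Q = A⁻¹ * Q * (A * A⁻¹) := by rw [h2, mul_one]
    _ = A⁻¹ * (Q * A) * A⁻¹ := by noncomm_ring
    _ = A⁻¹ * (A * Q) * A⁻¹ := by rw [h.eq]
    _ = (A⁻¹ * A) * (Q * A⁻¹) := by noncomm_ring
    _ = Q * A⁻¹ := by rw [h1, one_mul]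
  have hd : A + Q = A * (1 + A⁻¹ * Q) := by
    rw [mul_add, mul_one, ← Matrix.mul_assoc, h2, one_mul]
  have hnil : IsNilpotent (A⁻¹ * Q) := by
    obtain ⟨k, hk⟩ := hQ
    exact ⟨k, by rw [hc.mul_pow, hk, mul_zero]⟩
  rw [hd, Matrix.det_mul, det_one_add_isNilpotent hnil, mul_one]

lemma det_add_isNilpotent_of_commute_field {K : Type*} [Field K]
    (A Q : Matrix ι ι K) (h : Commute A Q) (hQ : IsNilpotent Q) : (A + Q).det = A.det := by
  by_cases hA : IsUnit A.det
  · exact det_add_isNilpotent_of_unit hA h hQ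
  · by_cases hAQ : IsUnit (A + Q).det
    · have h2 : Commute (A + Q) (-Q) := by
        have : Commute (A + Q) Q := (h.add_left (Commute.refl Q))
        exact this.neg_right
      have := det_add_isNilpotent_of_unit hAQ h2 hQ.neg
      simpa using this.symm
    · rw [isUnit_iff_ne_zero, not_not] at hA hAQ
      rw [hA, hAQ]

lemma det_add_isNilpotent_of_commute {R : Type*} [CommRing R] [IsDomain R]
    (A Q : Matrix ι ι R) (h : Commute A Q) (hQ : IsNilpotent Q) : (A + Q).det = A.det := by
  let K := FractionRing R
  let f : R →+* K := algebraMap R K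
  have hf : Function.Injective f := IsFractionRing.injective R K
  apply hf
  rw [RingHom.map_det, RingHom.map_det]
  rw [map_add]
  exact det_add_isNilpotent_of_commute_field _ _
    (by have hh := congrArg f.mapMatrix h.eq; simp only [_root_.map_mul] at hh; exact hh)
    (by obtain ⟨k, hk⟩ := hQ; exact ⟨k, by rw [← map_pow, hk, map_zero]⟩)

end NilpotentDet

section Circ

variable {R : Type*} [CommRing R] {G : Type*} [AddCommGroup G] [Fintype G] [DecidableEq G]

/-- The "group element" matrix: entry `(i,j)` is 1 iff `i - j = g`. -/
def Cmat (R : Type*) [CommRing R] {G : Type*} [AddCommGroup G] [Fintype G] [DecidableEq G]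
    (g : G) : Matrix G G R :=
  Matrix.circulant (fun d => if d = g then (1 : R) else 0)

lemma Cmat_apply (g : G) (i j : G) : Cmat R g i j = if i - j = g then (1 : R) else 0 := rfl

lemma Cmat_zero : Cmat R (0 : G) = 1 := by
  ext i j
  by_cases h : i = j <;> simp [Cmat_apply, Matrix.one_apply, h, sub_eq_zero]

lemma Cmat_mul (g h : G) : Cmat R g * Cmat R h = Cmat R (g + h) := by
  ext i j
  rw [Matrix.mul_apply]
  have key : ∀ k : G, Cmat R g i k * Cmat R h k j
      = if k = i - g then (if i - j = g + h then (1:R) else 0) else 0 := by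
    intro k
    by_cases hk : k = i - g
    · subst hk
      have h1 : i - (i - g) = g := by abel
      have h2 : (i - g) - j = h ↔ i - j = g + h := by
        constructor <;> intro hh
        · rw [← hh]; abel
        · have h3 : i - g - j = (i - j) - g := by abel
          rw [h3, hh]; abel
      simp [Cmat_apply, h1, h2]
    · have h1 : ¬ (i - k = g) := fun hc => hk (by rw [← hc]; abel)
      simp [Cmat_apply, h1, hk]
  simp only [key]
  rw [Finset.sum_ite_eq' Finset.univ (i - g)]
  simp [Cmat_apply]

lemma Cmat_pow (g : G) (k : ℕ) : (Cmat R g) ^ k = Cmat R (k • g) := by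
  induction k with
  | zero => simpa using Cmat_zero.symm
  | succ k ih =>
    rw [pow_succ, ih, Cmat_mul, succ_nsmul]

/-- A matrix is circulant. -/
def IsCirc (M : Matrix G G R) : Prop := ∃ v, M = Matrix.circulant v

lemma IsCirc.commute {M N : Matrix G G R} (hM : IsCirc M) (hN : IsCirc N) : Commute M N := by
  obtain ⟨v, rfl⟩ := hM; obtain ⟨w, rfl⟩ := hN
  exact Matrix.circulant_mul_comm v w

lemma isCirc_Cmat (g : G) : IsCirc (Cmat R g) := ⟨_, rfl⟩

lemma isCirc_one : IsCirc (1 : Matrix G G R) := ⟨_, Cmat_zero.symm⟩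

lemma IsCirc.add {M N : Matrix G G R} (hM : IsCirc M) (hN : IsCirc N) : IsCirc (M + N) := by
  obtain ⟨v, rfl⟩ := hM; obtain ⟨w, rfl⟩ := hN
  exact ⟨v + w, (Matrix.circulant_add v w).symm⟩

lemma IsCirc.mul {M N : Matrix G G R} (hM : IsCirc M) (hN : IsCirc N) : IsCirc (M * N) := by
  obtain ⟨v, rfl⟩ := hM; obtain ⟨w, rfl⟩ := hN
  exact ⟨_, Matrix.circulant_mul v w⟩

lemma IsCirc.sub {M N : Matrix G G R} (hM : IsCirc M) (hN : IsCirc N) : IsCirc (M - N) := by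
  obtain ⟨v, rfl⟩ := hM; obtain ⟨w, rfl⟩ := hN
  exact ⟨v - w, (Matrix.circulant_sub v w).symm⟩

lemma IsCirc.smul {M : Matrix G G R} (hM : IsCirc M) (r : R) : IsCirc (r • M) := by
  obtain ⟨v, rfl⟩ := hM
  exact ⟨r • v, (Matrix.circulant_smul r v).symm⟩

lemma IsCirc.pow {M : Matrix G G R} (hM : IsCirc M) (k : ℕ) : IsCirc (M ^ k) := by
  induction k with
  | zero => simpa using isCirc_one
  | succ k ih => rw [pow_succ]; exact ih.mul hM

lemma IsCirc.sum {s : Finset ι'} {f : ι' → Matrix G G R} (hf : ∀ i ∈ s, IsCirc (f i)) :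
    IsCirc (∑ i ∈ s, f i) := by
  classical
  induction s using Finset.induction_on with
  | empty => exact ⟨0, by simp⟩
  | @insert a s h ih =>
    rw [Finset.sum_insert h]
    exact (hf _ (Finset.mem_insert_self _ _)).add
      (ih fun i hi => hf i (Finset.mem_insert_of_mem hi))

end Circ

section Decomp

variable {R : Type*} [CommRing R] [IsDomain R]

/-- Core identity: determinant of a sum of group-element matrices over
`ZMod (p^e) × ZMod m'` in characteristic `p` collapses along the first factor. -/
lemma det_circsum (p : ℕ) [hp : Fact p.Prime] [CharP R p] (e : ℕ) {m' : ℕ} [NeZero m']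
    [NeZero (p ^ e)] (c : ZMod (p ^ e) × ZMod m' → R) :
    (∑ g : ZMod (p ^ e) × ZMod m', c g • Cmat R (-g)).det
      = ((Matrix.of fun b d : ZMod m' =>
          ∑ r : ZMod (p ^ e), c (r, d - b)).det) ^ (p ^ e) := by
  classical
  haveI : Nonempty (ZMod (p ^ e) × ZMod m') := ⟨0⟩
  set u0 : Matrix (ZMod (p ^ e) × ZMod m') (ZMod (p ^ e) × ZMod m') R :=
    Cmat R (-((1 : ZMod (p ^ e)), (0 : ZMod m'))) with hu0def
  have hu0circ : IsCirc u0 := by rw [hu0def]; exact isCirc_Cmat _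
  have hu0pow : ∀ k : ℕ, u0 ^ k = Cmat R (-(((k : ZMod (p ^ e)), (0 : ZMod m')))) := by
    intro k
    rw [hu0def, Cmat_pow]
    have h1 : k • (((1 : ZMod (p ^ e)), (0 : ZMod m')))
        = (((k : ZMod (p ^ e)), (0 : ZMod m'))) := by
      simp [Prod.ext_iff, nsmul_eq_mul]
    rw [← h1]
    simp
  have hu0q : u0 ^ (p ^ e) = 1 := by
    rw [hu0pow, ZMod.natCast_self]
    refine (congrArg (Cmat R) ?_).trans (Cmat_zero : Cmat R (0 : ZMod (p ^ e) × ZMod m') = 1)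
    ext <;> simp
  haveI : CharP (Matrix (ZMod (p ^ e) × ZMod m') (ZMod (p ^ e) × ZMod m') R) p :=
    inferInstance
  have hNq : (u0 - 1) ^ (p ^ e) = 0 := by
    rw [sub_pow_char_pow_of_commute p e (Commute.one_right u0), hu0q, one_pow, sub_self]
  have hNcirc : IsCirc (u0 - 1) := hu0circ.sub isCirc_one
  have hgeom : ∀ k : ℕ, u0 ^ k = 1 + (u0 - 1) * ∑ i ∈ Finset.range k, u0 ^ i := by
    intro k
    have hc : Commute (u0 - 1) (∑ i ∈ Finset.range k, u0 ^ i) :=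
      IsCirc.commute hNcirc (IsCirc.sum fun i _ => hu0circ.pow i)
    rw [hc.eq, geom_sum_mul]
    abel
  set D : Matrix (ZMod (p ^ e) × ZMod m') (ZMod (p ^ e) × ZMod m') R :=
    ∑ s : ZMod m', (∑ r : ZMod (p ^ e), c (r, s)) • Cmat R (-((0 : ZMod (p ^ e)), s)) with hDdef
  set B : Matrix (ZMod (p ^ e) × ZMod m') (ZMod (p ^ e) × ZMod m') R :=
    ∑ g : ZMod (p ^ e) × ZMod m', c g •
      (Cmat R (-((0 : ZMod (p ^ e)), g.2)) * ∑ i ∈ Finset.range g.1.val, u0 ^ i) with hBdef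
  have hDcirc : IsCirc D := by
    rw [hDdef]; exact IsCirc.sum fun s _ => (isCirc_Cmat _).smul _
  have hBcirc : IsCirc B := by
    rw [hBdef]
    exact IsCirc.sum fun g _ =>
      (((isCirc_Cmat _).mul (IsCirc.sum fun i _ => hu0circ.pow i)).smul _)
  have hsplit : ∑ g : ZMod (p ^ e) × ZMod m', c g • Cmat R (-g) = D + (u0 - 1) * B := by
    have hterm : ∀ g : ZMod (p ^ e) × ZMod m', c g • Cmat R (-g)
        = c g • Cmat R (-((0 : ZMod (p ^ e)), g.2))
          + (u0 - 1) * (c g • (Cmat R (-((0 : ZMod (p ^ e)), g.2))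
              * ∑ i ∈ Finset.range g.1.val, u0 ^ i)) := by
      intro g
      have h1 : Cmat R (-g) = Cmat R (-((0 : ZMod (p ^ e)), g.2)) * u0 ^ g.1.val := by
        rw [hu0pow, Cmat_mul]
        refine congrArg (Cmat R) ?_
        simp [Prod.ext_iff, ZMod.natCast_val, ZMod.cast_id]
      have h2 : Commute (Cmat R (-((0 : ZMod (p ^ e)), g.2))) (u0 - 1) :=
        IsCirc.commute (isCirc_Cmat _) hNcirc
      calc c g • Cmat R (-g)
          = c g • (Cmat R (-((0 : ZMod (p ^ e)), g.2))
              * (1 + (u0 - 1) * ∑ i ∈ Finset.range g.1.val, u0 ^ i)) := by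
            rw [h1, ← hgeom]
        _ = c g • Cmat R (-((0 : ZMod (p ^ e)), g.2))
            + c g • (Cmat R (-((0 : ZMod (p ^ e)), g.2))
              * ((u0 - 1) * ∑ i ∈ Finset.range g.1.val, u0 ^ i)) := by
            rw [mul_add, mul_one, smul_add]
        _ = c g • Cmat R (-((0 : ZMod (p ^ e)), g.2))
            + (u0 - 1) * (c g • (Cmat R (-((0 : ZMod (p ^ e)), g.2))
              * ∑ i ∈ Finset.range g.1.val, u0 ^ i)) := by
            rw [mul_smul_comm]
            congr 2
            rw [← mul_assoc, h2.eq, mul_assoc]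
    rw [Finset.sum_congr rfl (fun g _ => hterm g), Finset.sum_add_distrib, ← Finset.mul_sum]
    congr 1
    rw [hDdef, Fintype.sum_prod_type, Finset.sum_comm]
    exact Finset.sum_congr rfl fun s _ => by rw [Finset.sum_smul]
  have hcNB : Commute (u0 - 1) B := IsCirc.commute hNcirc hBcirc
  have hdet1 : (∑ g : ZMod (p ^ e) × ZMod m', c g • Cmat R (-g)).det = D.det := by
    rw [hsplit]
    refine det_add_isNilpotent_of_commute D ((u0 - 1) * B) ?_ ?_
    · exact IsCirc.commute hDcirc (hNcirc.mul hBcirc)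
    · exact ⟨p ^ e, by rw [hcNB.mul_pow, hNq, zero_mul]⟩
  have hDentry : ∀ (i j : ZMod (p ^ e) × ZMod m'),
      D i j = if i.1 = j.1 then ∑ r : ZMod (p ^ e), c (r, j.2 - i.2) else 0 := by
    intro i j
    rw [hDdef, Matrix.sum_apply]
    have hterm : ∀ s : ZMod m',
        ((∑ r : ZMod (p ^ e), c (r, s)) • Cmat R (-((0 : ZMod (p ^ e)), s))) i j
        = if s = j.2 - i.2 then (if i.1 = j.1 then ∑ r : ZMod (p ^ e), c (r, j.2 - i.2) else 0)
          else 0 := by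
      intro s
      rw [Matrix.smul_apply, Cmat_apply]
      by_cases hs : s = j.2 - i.2
      · subst hs
        by_cases h2 : i.1 = j.1
        · have hij : i - j = -(((0 : ZMod (p ^ e)), j.2 - i.2)) := by
            have h5 : (i - j).1 = (-(((0 : ZMod (p ^ e)), j.2 - i.2))).1 := by
              simpa [sub_eq_zero] using h2
            have h6 : (i - j).2 = (-(((0 : ZMod (p ^ e)), j.2 - i.2))).2 := by
              simp [neg_sub]
            exact Prod.ext h5 h6
          rw [if_pos hij, if_pos rfl, if_pos h2, smul_eq_mul, mul_one]
        · have hij : ¬ (i - j = -(((0 : ZMod (p ^ e)), j.2 - i.2))) := by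
            intro hc2
            apply h2
            have h3 := congrArg Prod.fst hc2
            simpa [sub_eq_zero] using h3
          rw [if_neg hij, if_pos rfl, if_neg h2, smul_zero]
      · have hij : ¬ (i - j = -(((0 : ZMod (p ^ e)), s))) := by
          intro hc2
          apply hs
          have h3 := congrArg Prod.snd hc2
          simp only [Prod.snd_sub, Prod.snd_neg] at h3
          rw [← neg_neg s, ← h3, neg_sub]
        rw [if_neg hij, if_neg hs, smul_zero]
    rw [Finset.sum_congr rfl fun s _ => hterm s, Finset.sum_ite_eq' Finset.univ (j.2 - i.2)]
    simp
  have hDdet : D.det = ((Matrix.of fun b d : ZMod m' =>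
      ∑ r : ZMod (p ^ e), c (r, d - b)).det) ^ (p ^ e) := by
    rw [← Matrix.det_submatrix_equiv_self (Equiv.prodComm (ZMod m') (ZMod (p ^ e))) D]
    have hblock : D.submatrix (Equiv.prodComm (ZMod m') (ZMod (p ^ e)))
        (Equiv.prodComm (ZMod m') (ZMod (p ^ e)))
        = Matrix.blockDiagonal (fun _ : ZMod (p ^ e) =>
            Matrix.of fun b d : ZMod m' => ∑ r : ZMod (p ^ e), c (r, d - b)) := by
      refine Matrix.ext fun x y => ?_
      obtain ⟨b, a⟩ := x
      obtain ⟨d, c'⟩ := y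
      rw [Matrix.submatrix_apply]
      simp only [Equiv.prodComm_apply, Prod.swap_prod_mk]
      rw [hDentry]
      rw [Matrix.blockDiagonal_apply]
      simp
    rw [hblock, Matrix.det_blockDiagonal, Finset.prod_const, Finset.card_univ, ZMod.card]
  rw [hdet1, hDdet]

end Decomp

open MvPolynomial

/-- Let p be prime, e ≥ 0, m ≥ 1 with p ∤ m, and n = p^e m. In F_p[X_0,...,X_{n-1}],
the circulant determinant satisfies Δ_n(X_0,...,X_{n-1}) = Δ_m(Y_0,...,Y_{m-1})^{p^e},
where Y_j = ∑_{k=0}^{p^e-1} X_{j+km}. -/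
theorem stmt8 (p : ℕ) (hp : p.Prime) (e m : ℕ) (hm : 0 < m) (hpm : ¬ p ∣ m)
    (n : ℕ) (hn : n = p ^ e * m) [NeZero n] [NeZero m] :
    (Matrix.of fun i j : ZMod n => (X (j - i) : MvPolynomial (ZMod n) (ZMod p))).det
      = ((Matrix.of fun i j : ZMod m =>
          ∑ k ∈ Finset.range (p ^ e),
            (X ((((j - i).val + k * m : ℕ) : ZMod n)) :
              MvPolynomial (ZMod n) (ZMod p))).det) ^ (p ^ e) := by
  classical
  haveI : Fact p.Prime := ⟨hp⟩
  subst hn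
  haveI : NeZero (p ^ e) := ⟨pow_ne_zero e hp.ne_zero⟩
  have hco : Nat.Coprime (p ^ e) m :=
    Nat.Coprime.pow_left e ((Nat.Prime.coprime_iff_not_dvd hp).mpr hpm)
  let ψ : ZMod (p ^ e * m) ≃+* ZMod (p ^ e) × ZMod m := ZMod.chineseRemainder hco
  have hψnat : ∀ a : ℕ, ψ ((a : ZMod (p ^ e * m)))
      = ((a : ZMod (p ^ e)), (a : ZMod m)) := fun a => by
    exact (map_natCast (ψ : ZMod (p ^ e * m) →+* ZMod (p ^ e) × ZMod m) a).trans rfl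
  -- step 1 : reindex by the CRT isomorphism
  have e1 : (Matrix.of fun i j : ZMod (p ^ e * m) =>
        (X (j - i) : MvPolynomial (ZMod (p ^ e * m)) (ZMod p))).det
      = (Matrix.of fun u v : ZMod (p ^ e) × ZMod m =>
        (X (ψ.symm (v - u)) : MvPolynomial (ZMod (p ^ e * m)) (ZMod p))).det := by
    rw [← Matrix.det_submatrix_equiv_self ψ.symm.toEquiv
      (Matrix.of fun i j : ZMod (p ^ e * m) =>
        (X (j - i) : MvPolynomial (ZMod (p ^ e * m)) (ZMod p)))]
    congr 1
    refine Matrix.ext fun u v => ?_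
    show (X (ψ.symm v - ψ.symm u) : MvPolynomial (ZMod (p ^ e * m)) (ZMod p))
      = X (ψ.symm (v - u))
    rw [map_sub]
  -- step 2 : the reindexed matrix as a sum of group-element matrices
  have e2 : (Matrix.of fun u v : ZMod (p ^ e) × ZMod m =>
        (X (ψ.symm (v - u)) : MvPolynomial (ZMod (p ^ e * m)) (ZMod p)))
      = ∑ g : ZMod (p ^ e) × ZMod m,
          (X (ψ.symm g) : MvPolynomial (ZMod (p ^ e * m)) (ZMod p)) •
            Cmat (MvPolynomial (ZMod (p ^ e * m)) (ZMod p)) (-g) := by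
    refine Matrix.ext fun u v => ?_
    rw [Matrix.sum_apply]
    have hterm : ∀ g : ZMod (p ^ e) × ZMod m,
        ((X (ψ.symm g) : MvPolynomial (ZMod (p ^ e * m)) (ZMod p)) •
            Cmat (MvPolynomial (ZMod (p ^ e * m)) (ZMod p)) (-g)) u v
        = if g = v - u then X (ψ.symm (v - u)) else 0 := by
      intro g
      rw [Matrix.smul_apply, Cmat_apply]
      by_cases hg : g = v - u
      · subst hg
        rw [if_pos (neg_sub v u).symm, if_pos rfl, smul_eq_mul, mul_one]
      · rw [if_neg ?_, if_neg hg, smul_zero]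
        intro hc
        apply hg
        rw [← neg_neg g, ← hc, neg_sub]
    rw [Finset.sum_congr rfl fun g _ => hterm g, Finset.sum_ite_eq' Finset.univ (v - u)]
    simp
  have e3 := det_circsum (R := MvPolynomial (ZMod (p ^ e * m)) (ZMod p)) p e
    (c := fun g : ZMod (p ^ e) × ZMod m =>
      (X (ψ.symm g) : MvPolynomial (ZMod (p ^ e * m)) (ZMod p)))
  -- the Y values agree with the statement's sums
  have hYsum : ∀ s : ZMod m,
      (∑ r : ZMod (p ^ e), (X (ψ.symm (r, s)) : MvPolynomial (ZMod (p ^ e * m)) (ZMod p)))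
      = ∑ k ∈ Finset.range (p ^ e),
          (X (((s.val + k * m : ℕ) : ZMod (p ^ e * m))) :
            MvPolynomial (ZMod (p ^ e * m)) (ZMod p)) := by
    intro s
    have hsm : ∀ k : ℕ, (((s.val + k * m : ℕ) : ZMod m)) = s := by
      intro k
      push_cast
      simp [ZMod.natCast_self, ZMod.natCast_zmod_val]
    have keyA : ∀ k : ℕ, ψ (((s.val + k * m : ℕ) : ZMod (p ^ e * m)))
        = ((((s.val + k * m : ℕ)) : ZMod (p ^ e)), s) := by
      intro k
      rw [hψnat]
      exact Prod.ext rfl (hsm k)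
    have hsymm : ∀ k : ℕ, ψ.symm ((((s.val + k * m : ℕ)) : ZMod (p ^ e)), s)
        = (((s.val + k * m : ℕ)) : ZMod (p ^ e * m)) := by
      intro k
      rw [← keyA k, RingEquiv.symm_apply_apply]
    refine (Finset.sum_bij' (i := fun (k : ℕ) (_ : k ∈ Finset.range (p ^ e)) =>
        (((s.val + k * m : ℕ)) : ZMod (p ^ e)))
      (j := fun (r : ZMod (p ^ e)) (_ : r ∈ Finset.univ) => (ψ.symm (r, s)).val / m)
      ?_ ?_ ?_ ?_ ?_).symm
    · intro k hk
      exact Finset.mem_univ _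
    · intro r hr
      rw [Finset.mem_range]
      exact (Nat.div_lt_iff_lt_mul hm).mpr (ZMod.val_lt _)
    · intro k hk
      have hk' : k < p ^ e := Finset.mem_range.mp hk
      have hsv : s.val < m := ZMod.val_lt s
      have hlt : s.val + k * m < p ^ e * m := by
        calc s.val + k * m < m + k * m := by omega
        _ = (k + 1) * m := by ring
        _ ≤ p ^ e * m := Nat.mul_le_mul_right m hk'
      have hval : ((( (s.val + k * m : ℕ)) : ZMod (p ^ e * m))).val = s.val + k * m :=
        ZMod.val_natCast_of_lt hlt
      rw [hsymm k, hval, Nat.add_mul_div_right _ _ hm, Nat.div_eq_of_lt hsv, Nat.zero_add]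
    · intro r hr
      have ha : ((ψ.symm (r, s)).val : ZMod (p ^ e * m)) = ψ.symm (r, s) :=
        ZMod.natCast_zmod_val _
      have hψa : ((((ψ.symm (r, s)).val : ℕ) : ZMod (p ^ e)),
            (((ψ.symm (r, s)).val : ℕ) : ZMod m)) = (r, s) := by
        rw [← hψnat, ha, RingEquiv.apply_symm_apply]
      have h2 : (((ψ.symm (r, s)).val : ℕ) : ZMod m) = s := congrArg Prod.snd hψa
      have hmod : (ψ.symm (r, s)).val % m = s.val := by
        have h3 := congrArg ZMod.val h2
        rwa [ZMod.val_natCast] at h3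
      have hrec : s.val + ((ψ.symm (r, s)).val / m) * m = (ψ.symm (r, s)).val := by
        rw [← hmod]
        exact Nat.mod_add_div' _ _
      rw [hrec]
      exact congrArg Prod.fst hψa
    · intro k hk
      exact congrArg X (hsymm k).symm
  have e4 : (Matrix.of fun b d : ZMod m =>
        ∑ r : ZMod (p ^ e),
          (X (ψ.symm (r, d - b)) : MvPolynomial (ZMod (p ^ e * m)) (ZMod p)))
      = Matrix.of (fun i j : ZMod m => ∑ k ∈ Finset.range (p ^ e),
          (X ((((j - i).val + k * m : ℕ) : ZMod (p ^ e * m))) :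
            MvPolynomial (ZMod (p ^ e * m)) (ZMod p))) := by
    refine Matrix.ext fun b d => ?_
    simpa using hYsum (d - b)
  rw [e1, e2, e3, e4]
end

section
/- Let q be a power of a prime p and let n = p^e for some e ≥ 1. Let f = X^n + a_1 X^{n-1} + ... + a_n be a monic irreducible polynomial of degree n over F_q, and let r be a root of f in F_{q^n}. Then the roots r, r^q, ..., r^{q^{n-1}} of f are linearly independent over F_q if and only if a_1 ≠ 0. -/
open Polynomial

/-- Let q be a power of the prime p and n = p^e, e ≥ 1. A monic irreducible polynomial
f = X^n + a_1 X^{n-1} + ⋯ + a_n over F_q with root r ∈ F_{q^n} has linearly independent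
roots r, r^q, ..., r^{q^{n-1}} over F_q iff a_1 ≠ 0. -/
theorem stmt10 (p e : ℕ) (hp : p.Prime) (he : 1 ≤ e)
    (F K : Type*) [Field F] [Fintype F] [CharP F p] [Field K] [Algebra F K]
    (n : ℕ) (hn : n = p ^ e) (hrank : Module.finrank F K = n)
    (f : Polynomial F) (hmonic : f.Monic) (hirr : Irreducible f) (hdeg : f.natDegree = n)
    (r : K) (hr : Polynomial.aeval r f = 0) :
    LinearIndependent F (fun i : Fin n => r ^ (Fintype.card F) ^ (i : ℕ)) ↔
      f.coeff (n - 1) ≠ 0 := by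
  classical
  haveI : Fact p.Prime := ⟨hp⟩
  haveI : CharP K p := charP_of_injective_algebraMap (algebraMap F K).injective p
  haveI : ExpChar K p := .prime hp
  obtain ⟨m, -, hqm⟩ := FiniteField.card F p
  set q := Fintype.card F with hq
  have hq1 : 1 < q := Fintype.one_lt_card
  have hn0 : 0 < n := hn ▸ pow_pos hp.pos e
  haveI : FiniteDimensional F K := FiniteDimensional.of_finrank_pos (hrank ▸ hn0)
  haveI : Finite K := Module.finite_of_finite F
  haveI : Fintype K := Fintype.ofFinite K
  have hKcard : Fintype.card K = q ^ n := by
    rw [Module.card_eq_pow_finrank (K := F) (V := K), hrank]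
  have hpowK : ∀ x : K, x ^ q ^ n = x := by
    intro x
    have := FiniteField.pow_card x
    rwa [hKcard] at this
  -- the q-power Frobenius as an F-algebra endomorphism
  have hcF : ∀ c : F, c ^ q = c := fun c => FiniteField.pow_card c
  let φA : K →ₐ[F] K := AlgHom.mk' (iterateFrobenius K p m) (fun c x => by
    simp only [iterateFrobenius_def, Algebra.smul_def, mul_pow, ← map_pow, ← hqm, hcF])
  have hφA : ∀ x : K, φA x = x ^ q := fun x => by
    show iterateFrobenius K p m x = x ^ q
    rw [iterateFrobenius_def, hqm]
  let φ : Module.End F K := φA.toLinearMap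
  have hφ : ∀ x : K, φ x = x ^ q := hφA
  have hφpow : ∀ (i : ℕ) (x : K), (φ ^ i) x = x ^ q ^ i := by
    intro i
    induction i with
    | zero => intro x; simp
    | succ i ih =>
      intro x
      rw [pow_succ, Module.End.mul_apply, hφ, ih, ← pow_mul, ← pow_succ']
  have hφn : φ ^ n = 1 := by
    refine LinearMap.ext fun x => ?_
    rw [hφpow]
    exact hpowK x
  haveI : Nontrivial (Module.End F K) :=
    ⟨⟨0, 1, fun h => by simpa using LinearMap.congr_fun h (1 : K)⟩⟩
  haveI : CharP (Module.End F K) p := charP_of_injective_algebraMap' (A := Module.End F K) F p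
  have hT : (φ - 1) ^ n = 0 := by
    rw [hn, sub_pow_char_pow_of_commute p e (Commute.one_right φ), ← hn, hφn, one_pow, sub_self]
  -- geometric series identity in F[X]
  have hX1ne : ((X : F[X]) - 1) ≠ 0 := by
    have := X_sub_C_ne_zero (1 : F)
    simpa using this
  have hgeom : ((X : F[X]) - 1) ^ (n - 1) = ∑ i ∈ Finset.range n, (X : F[X]) ^ i := by
    have h1 : ((X : F[X]) - 1) ^ n = X ^ n - 1 := by
      rw [hn, sub_pow_char_pow (p := p) (n := e), one_pow]
    have h2 : (∑ i ∈ Finset.range n, (X : F[X]) ^ i) * ((X : F[X]) - 1) = X ^ n - 1 :=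
      geom_sum_mul X n
    apply mul_right_cancel₀ hX1ne
    rw [h2, ← h1, ← pow_succ]
    congr 1
    omega
  -- the "trace" endomorphism
  have htrace : ((φ - 1) ^ (n - 1)) r = ∑ i ∈ Finset.range n, r ^ q ^ i := by
    have h := congrArg (fun g : F[X] => (aeval φ g) r) hgeom
    simp only [map_pow, map_sub, map_sum, aeval_X, map_one, LinearMap.sum_apply] at h
    simpa only [hφpow] using h
  -- the set of fixed points of φ is exactly the image of F
  have hfix : ∀ x : K, x ^ q = x → x ∈ Set.range (algebraMap F K) := by
    intro x hx
    have hQne : ((X : K[X]) ^ q - X) ≠ 0 := FiniteField.X_pow_card_sub_X_ne_zero K hq1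
    have hQdeg : ((X : K[X]) ^ q - X).natDegree = q :=
      FiniteField.X_pow_card_sub_X_natDegree_eq K hq1
    set T : Finset K := Finset.univ.image (algebraMap F K) with hTdef
    have hTcard : T.card = q := by
      rw [hTdef, Finset.card_image_of_injective _ (algebraMap F K).injective, Finset.card_univ]
    by_contra hxr
    have hxT : x ∉ T := by
      intro hxT
      obtain ⟨c, -, rfl⟩ := Finset.mem_image.mp hxT
      exact hxr ⟨c, rfl⟩
    have hsub : (insert x T).val ≤ ((X : K[X]) ^ q - X).roots := by
      rw [Multiset.le_iff_subset (insert x T).nodup]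
      intro y hy
      rw [Finset.mem_val] at hy
      refine mem_roots'.mpr ⟨hQne, ?_⟩
      rcases Finset.mem_insert.mp hy with rfl | hyT
      · simp [hx]
      · obtain ⟨c, -, rfl⟩ := Finset.mem_image.mp hyT
        simp only [IsRoot, eval_sub, eval_pow, eval_X, ← map_pow, hcF, sub_self]
    have hc1 := Multiset.card_le_card hsub
    have hc2 := card_roots' ((X : K[X]) ^ q - X)
    have hc3 : (insert x T).val.card = q + 1 := by
      rw [← Finset.card_def, Finset.card_insert_of_notMem hxT, hTcard]
    omega
  -- the polynomial P = ∏ (X - C r^{q^i})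
  haveI : NeZero n := ⟨hn0.ne'⟩
  set v : Fin n → K := fun i => r ^ q ^ (i : ℕ) with hv
  set P : K[X] := ∏ i : Fin n, (X - C (v i)) with hP
  have hvsucc : ∀ i : Fin n, φA (v i) = v (i + 1) := by
    intro i
    rw [hv]
    simp only
    rw [hφA, ← pow_mul, ← pow_succ]
    have hval : ((i + 1 : Fin n) : ℕ) = ((i : ℕ) + 1) % n := by
      rw [Fin.val_add, Fin.val_one']
      congr 1
      have hn1 : 1 < n := hn ▸ Nat.one_lt_pow (by omega) hp.one_lt
      rw [Nat.mod_eq_of_lt hn1]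
    by_cases hi : (i : ℕ) + 1 = n
    · rw [hval, hi, Nat.mod_self, pow_zero, pow_one]
      exact hpowK r
    · rw [hval, Nat.mod_eq_of_lt (by omega)]
  have hdeg1 : ((X : F[X]) - 1).natDegree = 1 := by
    simpa using natDegree_X_sub_C (1 : F)
  -- P is fixed by the Frobenius coefficientwise
  have hPmap : P.map (φA : K →+* K) = P := by
    rw [hP, Polynomial.map_prod]
    simp only [Polynomial.map_sub, map_X, map_C, RingHom.coe_coe]
    have h4 := Equiv.prod_comp (Equiv.addRight (1 : Fin n)) (fun j => (X : K[X]) - C (v j))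
    simp only [Equiv.coe_addRight] at h4
    rw [← h4]
    exact Finset.prod_congr rfl fun i _ => by rw [hvsucc i]
  have hPco : ∀ k, P.coeff k ∈ Set.range (algebraMap F K) := by
    intro k
    refine hfix _ ?_
    rw [← hφA]
    calc φA (P.coeff k) = (P.map (φA : K →+* K)).coeff k := (coeff_map _ _).symm
      _ = P.coeff k := by rw [hPmap]
  have hPmonic : P.Monic := monic_prod_of_monic _ _ fun i _ => monic_X_sub_C _
  have hPdeg : P.natDegree = n := by
    rw [hP, natDegree_prod_of_monic _ _ fun i _ => monic_X_sub_C _]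
    simp [natDegree_X_sub_C]
  obtain ⟨g0, hg0map, hg0deg, hg0monic⟩ :=
    lifts_and_natDegree_eq_and_monic ((lifts_iff_coeff_lifts P).mpr fun k => hPco k) hPmonic
  have hg0r : aeval r g0 = 0 := by
    rw [aeval_def, ← eval_map, hg0map, hP, eval_prod]
    refine Finset.prod_eq_zero (Finset.mem_univ (0 : Fin n)) ?_
    simp [hv]
  have hfg : f = g0 := by
    have hmin : minpoly F r = f := (minpoly.eq_of_irreducible_of_monic hirr hr hmonic).symm
    have hdvd : f ∣ g0 := hmin ▸ minpoly.dvd F r hg0r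
    obtain ⟨c, hc⟩ := hdvd
    have hg0ne : g0 ≠ 0 := hg0monic.ne_zero
    have hcne : c ≠ 0 := by rintro rfl; rw [mul_zero] at hc; exact hg0ne hc
    have hgn : g0.natDegree = n := by rw [hg0deg, hPdeg]
    rw [hc, natDegree_mul hmonic.ne_zero hcne, hdeg] at hgn
    have hcdeg : c.natDegree = 0 := by omega
    obtain ⟨a, rfl⟩ := natDegree_eq_zero.mp hcdeg
    have h2 := hg0monic
    rw [hc, Monic, leadingCoeff_mul, hmonic.leadingCoeff, one_mul, leadingCoeff_C] at h2
    rw [hc, h2, map_one, mul_one]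
  have hScoeff : algebraMap F K (f.coeff (n - 1)) = -∑ i : Fin n, v i := by
    have h1 : (f.map (algebraMap F K)).coeff (n - 1) = P.coeff (n - 1) := by
      rw [hfg, hg0map]
    rw [← coeff_map, h1]
    have h2 := prod_X_sub_C_nextCoeff (s := (Finset.univ : Finset (Fin n))) v
    rw [← hP, nextCoeff_of_natDegree_pos (hPdeg ▸ hn0), hPdeg] at h2
    exact h2
  have hSiff : f.coeff (n - 1) = 0 ↔ (∑ i : Fin n, v i) = 0 := by
    constructor
    · intro h
      rw [← neg_eq_zero, ← hScoeff, h, map_zero]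
    · intro h
      apply (algebraMap F K).injective
      rw [hScoeff, map_zero, h, neg_zero]
  rw [ne_eq, hSiff]
  constructor
  · intro hLI hS0
    have h0 := Fintype.linearIndependent_iff.mp hLI (fun _ => (1 : F)) (by simpa using hS0)
    simpa using h0 ⟨0, hn0⟩
  · intro hS
    rw [Fintype.linearIndependent_iff]
    intro c hc
    set g : F[X] := ∑ i : Fin n, c i • (X : F[X]) ^ (i : ℕ) with hgdef
    have hgr : (aeval φ g) r = 0 := by
      have h5 : aeval φ g = ∑ i : Fin n, c i • φ ^ (i : ℕ) := by
        rw [hgdef, map_sum]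
        refine Finset.sum_congr rfl fun i _ => ?_
        rw [map_smul, map_pow, aeval_X]
      rw [h5, LinearMap.sum_apply, ← hc]
      refine Finset.sum_congr rfl fun i _ => ?_
      simp only [LinearMap.smul_apply, hφpow, hv]
    have hgzero : g = 0 := by
      by_contra hgne
      have hgdegn : g.natDegree < n := by
        have h6 : g.natDegree ≤ n - 1 := by
          rw [hgdef]
          refine natDegree_sum_le_of_forall_le _ _ fun i _ => ?_
          refine le_trans (natDegree_smul_le _ _) ?_
          rw [natDegree_X_pow]
          omega
        omega
      set d := EuclideanDomain.gcd g (((X : F[X]) - 1) ^ n) with hd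
      have hdg : d ∣ g := EuclideanDomain.gcd_dvd_left _ _
      have hdX : d ∣ ((X : F[X]) - 1) ^ n := EuclideanDomain.gcd_dvd_right _ _
      have hprime : Prime ((X : F[X]) - 1) := by
        simpa using prime_X_sub_C (1 : F)
      obtain ⟨k, hkn, hassoc⟩ := (dvd_prime_pow hprime n).mp hdX
      have hXkg : ((X : F[X]) - 1) ^ k ∣ g := (hassoc.symm.dvd).trans hdg
      have hkdeg : k ≤ g.natDegree := by
        have h1 := natDegree_le_of_dvd hXkg hgne
        rwa [natDegree_pow, hdeg1, mul_one] at h1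
      have hkn' : k < n := lt_of_le_of_lt hkdeg hgdegn
      have haevalXn : aeval φ (((X : F[X]) - 1) ^ n) = (φ - 1) ^ n := by
        rw [map_pow, map_sub, aeval_X, map_one]
      have hdr : (aeval φ d) r = 0 := by
        rw [hd, EuclideanDomain.gcd_eq_gcd_ab g (((X : F[X]) - 1) ^ n),
          mul_comm g, mul_comm (((X : F[X]) - 1) ^ n), map_add, map_mul, map_mul,
          LinearMap.add_apply, Module.End.mul_apply, Module.End.mul_apply, hgr, map_zero,
          haevalXn, hT, LinearMap.zero_apply, map_zero, add_zero]
      have hkr : ((φ - 1) ^ k) r = 0 := by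
        obtain ⟨u, hu⟩ := hassoc
        have h3 : (aeval φ (((X : F[X]) - 1) ^ k)) r = 0 := by
          rw [← hu, mul_comm, map_mul, Module.End.mul_apply, hdr, map_zero]
        rwa [map_pow, map_sub, aeval_X, map_one] at h3
      have hS0 : ((φ - 1) ^ (n - 1)) r = 0 := by
        have hsplit : n - 1 = (n - 1 - k) + k := by omega
        rw [hsplit, pow_add, Module.End.mul_apply, hkr, map_zero]
      apply hS
      have h7 : (∑ i : Fin n, v i) = ((φ - 1) ^ (n - 1)) r := by
        rw [htrace, hv]
        exact Fin.sum_univ_eq_sum_range (fun i => r ^ q ^ i) n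
      rw [h7, hS0]
    intro i
    have hco : g.coeff (i : ℕ) = c i := by
      rw [hgdef, finset_sum_coeff, Finset.sum_eq_single i]
      · rw [coeff_smul, coeff_X_pow, if_pos rfl, smul_eq_mul, mul_one]
      · intro j _ hji
        have hne : ((i : ℕ)) ≠ (j : ℕ) := fun h => hji (Fin.ext h.symm)
        rw [coeff_smul, coeff_X_pow, if_neg hne, smul_zero]
      · intro h
        exact absurd (Finset.mem_univ i) h
    rw [← hco, hgzero, coeff_zero]
end

section
/- Let q be a prime power of characteristic p, and let n be a prime different from p such that q generates the multiplicative group (ℤ/nℤ)^× (i.e., the order of q modulo n is n-1). Let f = X^n + a_1 X^{n-1} + ... + a_n be a monic irreducible polynomial of degree n over F_q, and let r be a root of f in F_{q^n}. Then the roots r, r^q, ..., r^{q^{n-1}} of f are linearly independent over F_q if and only if a_1 ≠ 0. -/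
open Polynomial

-- Lemma A: if K is generated over F by r and r is fixed by the m-th Frobenius power,
-- then K is small.
lemma auxA_card_le (p : ℕ) (hp : p.Prime) {F K : Type*} [Field F] [Fintype F] [CharP F p]
    [Field K] [Algebra F K] [Fintype K] (m : ℕ) (hm : 0 < m)
    (r : K) (hgen : Algebra.adjoin F {r} = (⊤ : Subalgebra F K))
    (hfix : r ^ Fintype.card F ^ m = r) : Fintype.card K ≤ Fintype.card F ^ m := by
  haveI : CharP K p := charP_of_injective_algebraMap (algebraMap F K).injective p
  haveI : ExpChar K p := ExpChar.prime hp
  obtain ⟨a, -, ha⟩ := FiniteField.card F p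
  set q := Fintype.card F with hq
  have hq1 : 1 < q := Fintype.one_lt_card
  have hqm : q ^ m = p ^ ((a : ℕ) * m) := by rw [ha, pow_mul]
  have hS : ∀ x : K, x ^ q ^ m = x := by
    intro x
    have hx : x ∈ Algebra.adjoin F {r} := by rw [hgen]; trivial
    induction hx using Algebra.adjoin_induction with
    | mem y hy => rw [Set.mem_singleton_iff] at hy; rw [hy]; exact hfix
    | algebraMap c =>
        rw [← map_pow]
        congr 1
        exact FiniteField.pow_card_pow m c
    | add x y hx hy ihx ihy =>
        have := map_add (iterateFrobenius K p (a * m)) x y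
        simpa only [iterateFrobenius_def, ← hqm, ihx, ihy] using this
    | mul x y hx hy ihx ihy =>
        rw [mul_pow, ihx, ihy]
  by_contra hlt
  push_neg at hlt
  have h1qm : 1 < q ^ m := one_lt_pow₀ hq1 hm.ne'
  have hne : (X ^ (q ^ m) - X : K[X]) ≠ 0 := FiniteField.X_pow_card_sub_X_ne_zero K h1qm
  apply hne
  apply Polynomial.eq_zero_of_natDegree_lt_card_of_eval_eq_zero _ (Function.injective_id)
  · intro x
    simp [hS x]
  · rwa [FiniteField.X_pow_card_sub_X_natDegree_eq K h1qm]

-- Lemma B: cyclotomic polynomial irreducibility over a finite field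
lemma auxB_cyclotomic_irreducible (p n : ℕ) (hp : p.Prime) (hnp : n.Prime) (hne : n ≠ p)
    (F : Type*) [Field F] [Fintype F] [CharP F p]
    (horder : orderOf ((Fintype.card F : ZMod n)) = n - 1) :
    Irreducible (Polynomial.cyclotomic n F) := by
  haveI : Fact n.Prime := ⟨hnp⟩
  set q := Fintype.card F with hq
  have hpn : ¬ (p ∣ n) := by
    intro hdvd
    rcases (Nat.Prime.eq_one_or_self_of_dvd hnp p hdvd) with h | h
    · exact hp.one_lt.ne' h
    · exact hne h.symm
  haveI hnz : NeZero ((n : ℕ) : F) := ⟨by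
    rw [Ne, CharP.cast_eq_zero_iff F p n]; exact hpn⟩
  set N : ℕ+ := ⟨n, hnp.pos⟩ with hN
  haveI : NeZero (((N : ℕ) : F)) := hnz
  set L := CyclotomicField N F with hL
  haveI : FiniteDimensional F L := by
    unfold L
    unfold CyclotomicField
    exact IsCyclotomicExtension.finiteDimensional {(N : ℕ)} F (CyclotomicField N F)
  obtain ⟨ζ, hζ⟩ := IsCyclotomicExtension.exists_isPrimitiveRoot F L (Set.mem_singleton (N : ℕ)) N.ne_zero
  have hζn : IsPrimitiveRoot ζ n := hζ
  have hint : IsIntegral F ζ := IsIntegral.of_finite F ζ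
  set d := (minpoly F ζ).natDegree with hd
  have hdpos : 0 < d := minpoly.natDegree_pos hint
  have hdvd_min : minpoly F ζ ∣ cyclotomic n F := by
    apply minpoly.dvd
    rw [aeval_def, ← eval_map, map_cyclotomic]
    exact hζn.isRoot_cyclotomic hnp.pos
  have hdle : d ≤ n - 1 := by
    have := Polynomial.natDegree_le_of_dvd hdvd_min (cyclotomic_ne_zero n F)
    rwa [natDegree_cyclotomic, Nat.totient_prime hnp] at this
  -- now the lower bound
  set E := IntermediateField.adjoin F ({ζ} : Set L) with hE
  haveI : FiniteDimensional F E := inferInstance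
  have hfr : Module.finrank F E = d := by
    rw [hd, hE]
    exact IntermediateField.adjoin.finrank hint
  haveI : Finite L := Module.finite_of_finite F
  haveI : Fintype E := Fintype.ofFinite E
  classical
  have hcardE : Fintype.card E = q ^ d := by
    rw [← hfr]; exact Module.card_eq_pow_finrank
  set ζ' : E := IntermediateField.AdjoinSimple.gen F ζ with hζ'def
  have hζ' : IsPrimitiveRoot ζ' n := by
    apply IsPrimitiveRoot.of_map_of_injective (f := algebraMap E L)
    · exact hζn
    · exact (algebraMap E L).injective
  have hunit : IsUnit ζ' := hζ'.isUnit hnp.ne_zero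
  obtain ⟨u, hu⟩ := hunit
  have hord : orderOf u = n := by
    have h1 : orderOf ζ' = n := (hζ'.eq_orderOf).symm
    rw [← orderOf_units, hu, h1]
  have hdvdcard : n ∣ q ^ d - 1 := by
    have := orderOf_dvd_card (x := u)
    rwa [hord, Fintype.card_units, hcardE] at this
  have hpow1 : ((q : ZMod n)) ^ d = 1 := by
    have hge : 1 ≤ q ^ d := Nat.one_le_pow _ _ Fintype.card_pos
    have : ((q ^ d - 1 : ℕ) : ZMod n) = 0 := (ZMod.natCast_eq_zero_iff _ _).2 hdvdcard
    rw [Nat.cast_sub hge, Nat.cast_pow, Nat.cast_one, sub_eq_zero] at this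
    exact this.symm ▸ rfl
  have hled : n - 1 ≤ d := by
    have := orderOf_dvd_of_pow_eq_one hpow1
    rw [horder] at this
    exact Nat.le_of_dvd hdpos this
  have heq : cyclotomic n F = minpoly F ζ := by
    apply Polynomial.eq_of_monic_of_dvd_of_natDegree_le (minpoly.monic hint)
      (cyclotomic.monic n F) hdvd_min
    rw [natDegree_cyclotomic, Nat.totient_prime hnp]; exact hled
  rw [heq]
  exact minpoly.irreducible hint



/-- Let q be a prime power of characteristic p and n a prime ≠ p such that q generates
(ℤ/nℤ)^×. A monic irreducible polynomial f = X^n + a_1 X^{n-1} + ⋯ + a_n over F_q with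
root r ∈ F_{q^n} has linearly independent roots r, r^q, ..., r^{q^{n-1}} over F_q iff
a_1 ≠ 0. -/
theorem stmt11 (p n : ℕ) (hp : p.Prime) (hnp : n.Prime) (hne : n ≠ p)
    (F K : Type*) [Field F] [Fintype F] [CharP F p] [Field K] [Algebra F K]
    (horder : orderOf ((Fintype.card F : ZMod n)) = n - 1)
    (hrank : Module.finrank F K = n)
    (f : Polynomial F) (hmonic : f.Monic) (hirr : Irreducible f) (hdeg : f.natDegree = n)
    (r : K) (hr : Polynomial.aeval r f = 0) :
    LinearIndependent F (fun i : Fin n => r ^ (Fintype.card F) ^ (i : ℕ)) ↔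
      f.coeff (n - 1) ≠ 0 := by
  classical
  set q := Fintype.card F with hq
  have hn1 : 1 < n := hnp.one_lt
  have hq1 : 1 < q := Fintype.one_lt_card
  haveI : Fact n.Prime := ⟨hnp⟩
  haveI : FiniteDimensional F K := Module.finite_of_finrank_pos (by rw [hrank]; exact hnp.pos)
  haveI : Finite K := Module.finite_of_finite F
  haveI : Fintype K := Fintype.ofFinite K
  haveI : CharP K p := charP_of_injective_algebraMap (algebraMap F K).injective p
  haveI : ExpChar K p := ExpChar.prime hp
  obtain ⟨a, -, hpa⟩ := FiniteField.card F p
  have hcardK : Fintype.card K = q ^ n := by rw [← hrank]; exact Module.card_eq_pow_finrank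
  have hfm : minpoly F r = f := (minpoly.eq_of_irreducible_of_monic hirr hr hmonic).symm
  have hrint : IsIntegral F r := IsIntegral.of_finite F r
  have hrq : r ^ q ^ n = r := by
    have := FiniteField.pow_card r
    rwa [hcardK] at this
  -- r generates K
  have htop : IntermediateField.adjoin F ({r} : Set K) = ⊤ := by
    have h1 : Module.finrank F (IntermediateField.adjoin F ({r} : Set K)) = n := by
      rw [IntermediateField.adjoin.finrank hrint, hfm, hdeg]
    have h2 : Subalgebra.toSubmodule (IntermediateField.adjoin F ({r} : Set K)).toSubalgebra
        = (⊤ : Submodule F K) := by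
      apply Submodule.eq_top_of_finrank_eq
      rw [← hrank] at h1
      exact h1
    apply IntermediateField.toSubalgebra_injective
    apply Subalgebra.toSubmodule_injective
    rw [h2]
    rfl
  have hgen : Algebra.adjoin F ({r} : Set K) = ⊤ := by
    rw [← IntermediateField.adjoin_simple_toSubalgebra_of_isAlgebraic hrint.isAlgebraic, htop]
    rfl
  -- fixed by a proper Frobenius power is impossible
  have hfix : ∀ m : ℕ, 0 < m → m < n → r ^ q ^ m = r → False := by
    intro m hm0 hmn hfixm
    have hle := auxA_card_le p hp m hm0 r hgen hfixm
    rw [hcardK] at hle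
    exact absurd hle (not_le.2 (Nat.pow_lt_pow_right hq1 hmn))
  set v : Fin n → K := fun i => r ^ q ^ (i : ℕ) with hv
  -- injectivity of conjugates
  have hinj : Function.Injective v := by
    have key : ∀ i j : Fin n, (i : ℕ) < (j : ℕ) → v i = v j → False := by
      intro i j hlt hij
      have hjn : (j : ℕ) < n := j.isLt
      have h2 : r ^ q ^ ((i : ℕ) + (n - (j : ℕ))) = r := by
        have h3 := congrArg (fun x : K => x ^ q ^ (n - (j : ℕ))) hij
        simp only [hv, ← pow_mul, ← pow_add] at h3
        have h4 : (j : ℕ) + (n - (j : ℕ)) = n := by omega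
        rw [h4] at h3
        rw [h3, hrq]
      exact hfix _ (by omega) (by omega) h2
    intro i j hij
    by_contra hnej
    rcases lt_or_gt_of_ne (fun h : (i : ℕ) = (j : ℕ) => hnej (Fin.ext h)) with h | h
    · exact key i j h hij
    · exact key j i h hij.symm
  -- conjugates are roots
  have hφq : ∀ x : K, iterateFrobenius K p a x = x ^ q := by
    intro x; rw [iterateFrobenius_def, ← hpa]
  have hψsmul : ∀ (c : F) (x : K), iterateFrobenius K p a (c • x) = c • iterateFrobenius K p a x := by
    intro c x
    rw [hφq, hφq, Algebra.smul_def, Algebra.smul_def, mul_pow, ← map_pow, FiniteField.pow_card]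
  set ψ : K →ₐ[F] K := AlgHom.mk' (iterateFrobenius K p a) hψsmul with hψ
  have hψx : ∀ x : K, ψ x = x ^ q := hφq
  have hrootN : ∀ m : ℕ, Polynomial.aeval (r ^ q ^ m) f = 0 := by
    intro m
    induction m with
    | zero => simpa using hr
    | succ k ih =>
      have h1 : r ^ q ^ (k + 1) = ψ (r ^ q ^ k) := by
        rw [hψx, ← pow_mul, pow_succ]
      rw [h1, Polynomial.aeval_algHom_apply, ih, map_zero]
  -- the product formula / sum of conjugates
  set fK := f.map (algebraMap F K) with hfK
  have hfKmonic : fK.Monic := hmonic.map _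
  have hfKdeg : fK.natDegree = n := by rw [hfK, natDegree_map, hdeg]
  have hfK0 : fK ≠ 0 := hfKmonic.ne_zero
  set s : Multiset K := (Finset.univ : Finset (Fin n)).val.map v with hs
  have hsnodup : s.Nodup := (Finset.univ : Finset (Fin n)).nodup.map hinj
  have hscard : Multiset.card s = n := by simp [hs]
  have hsle : s ≤ fK.roots := by
    rw [Multiset.le_iff_count]
    intro x
    by_cases hx : x ∈ s
    · have h1 : s.count x = 1 := Multiset.count_eq_one_of_mem hsnodup hx
      rw [h1, count_roots]
      obtain ⟨i, -, rfl⟩ := Multiset.mem_map.1 hx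
      refine Nat.one_le_iff_ne_zero.2 (fun h0 => ?_)
      have h2 : fK.IsRoot (v i) := by
        rw [IsRoot, hfK, eval_map, ← aeval_def]
        exact hrootN i
      exact absurd ((rootMultiplicity_pos hfK0).2 h2) (by omega)
    · rw [Multiset.count_eq_zero_of_notMem hx]; exact Nat.zero_le _
  have hdvd2 : (s.map fun a => X - C a).prod ∣ fK :=
    (Multiset.prod_dvd_prod_of_le (Multiset.map_le_map hsle)).trans fK.prod_multiset_X_sub_C_dvd
  have hprodmonic : ((s.map fun a => X - C a).prod).Monic :=
    monic_multiset_prod_of_monic _ _ (fun a _ => monic_X_sub_C a)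
  have hproddeg : ((s.map fun a => X - C a).prod).natDegree = n := by
    rw [natDegree_multiset_prod_of_monic]
    · simp only [Multiset.map_map, Function.comp]
      have : ∀ x ∈ s, natDegree (X - C x) = 1 := fun x _ => natDegree_X_sub_C x
      rw [Multiset.map_congr rfl (fun x hx => natDegree_X_sub_C x)]
      simp [hscard]
    · intro h hh
      obtain ⟨b, -, rfl⟩ := Multiset.mem_map.1 hh
      exact monic_X_sub_C b
  have hprodeq : fK = (s.map fun a => X - C a).prod :=
    eq_of_monic_of_dvd_of_natDegree_le hprodmonic hfKmonic hdvd2 (by rw [hfKdeg, hproddeg])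
  have hsum : ∑ i : Fin n, v i = - algebraMap F K (f.coeff (n - 1)) := by
    have h1 := multiset_prod_X_sub_C_nextCoeff s
    rw [← hprodeq] at h1
    have h2 : fK.nextCoeff = algebraMap F K (f.coeff (n - 1)) := by
      rw [nextCoeff_of_natDegree_pos (by rw [hfKdeg]; omega), hfKdeg, hfK, coeff_map]
    have h3 : s.sum = ∑ i : Fin n, v i := rfl
    rw [h2, h3] at h1
    rw [h1, neg_neg]
  constructor
  · intro hLI hc0
    have h0 : ∑ i : Fin n, (1 : F) • v i = 0 := by
      simp only [one_smul]
      rw [hsum, hc0, map_zero, neg_zero]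
    have := Fintype.linearIndependent_iff.1 hLI (fun _ => (1 : F)) h0 ⟨0, hnp.pos⟩
    exact one_ne_zero this
  · intro hc0
    rw [Fintype.linearIndependent_iff]
    intro c hcsum
    by_contra hex
    push_neg at hex
    obtain ⟨i0, hi0⟩ := hex
    -- the Frobenius as an F-linear endomorphism
    set T : Module.End F K :=
      { toFun := fun x => x ^ q
        map_add' := fun x y => by
          show (x + y) ^ q = x ^ q + y ^ q
          rw [hq, hpa]
          exact add_pow_expChar_pow x y p a
        map_smul' := fun c x => by
          simp only [RingHom.id_apply]
          rw [Algebra.smul_def, Algebra.smul_def, mul_pow, ← map_pow, FiniteField.pow_card] } with hT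
    have hT1 : ∀ x : K, T x = x ^ q := fun x => rfl
    have hTpow : ∀ (i : ℕ) (x : K), (T ^ i) x = x ^ q ^ i := by
      intro i
      induction i with
      | zero => intro x; simp
      | succ k ih =>
        intro x
        rw [pow_succ, Module.End.mul_apply, hT1, ih, ← pow_mul, ← pow_succ']
    have hmul' : ∀ g h : F[X], Polynomial.aeval T (g * h) r = Polynomial.aeval T g (Polynomial.aeval T h r) := by
      intro g h
      rw [map_mul]
      rfl
    have hXn : Polynomial.aeval T ((X : F[X]) ^ n - 1) r = 0 := by
      rw [map_sub, map_pow, aeval_X, map_one, LinearMap.sub_apply, Module.End.one_apply, hTpow, hrq, sub_self]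
    set g : F[X] := ∑ i : Fin n, C (c i) * X ^ (i : ℕ) with hg
    have hgc : ∀ j : Fin n, g.coeff (j : ℕ) = c j := by
      intro j
      rw [hg, finset_sum_coeff]
      simp only [coeff_C_mul, coeff_X_pow]
      rw [Finset.sum_eq_single j]
      · simp
      · intro b _ hbj
        have hne2 : ¬ ((j : ℕ) = (b : ℕ)) := fun h => hbj (Fin.ext h.symm)
        simp [hne2]
      · intro h; exact absurd (Finset.mem_univ j) h
    have hg0 : g ≠ 0 := fun h => hi0 (by rw [← hgc i0, h, coeff_zero])
    have hgdeg : g.natDegree < n := by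
      have h1 : g.natDegree ≤ n - 1 := by
        rw [hg]
        apply Polynomial.natDegree_sum_le_of_forall_le
        intro i _
        refine le_trans (natDegree_C_mul_le _ _) ?_
        rw [natDegree_X_pow]
        omega
      omega
    have hEg : Polynomial.aeval T g r = 0 := by
      have h1 : ∀ i : Fin n, (Polynomial.aeval T (C (c i) * X ^ (i : ℕ))) r = c i • v i := by
        intro i
        rw [map_mul, aeval_C, map_pow, aeval_X, Module.End.mul_apply, Module.algebraMap_end_apply, hTpow]
      rw [hg, map_sum, LinearMap.sum_apply]
      simp only [h1]
      exact hcsum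
    set e := EuclideanDomain.gcd g ((X : F[X]) ^ n - 1) with he
    have he0 : e ≠ 0 := by
      rw [he, Ne, EuclideanDomain.gcd_eq_zero_iff]
      rintro ⟨h1, -⟩
      exact hg0 h1
    have hEe : Polynomial.aeval T e r = 0 := by
      rw [he, EuclideanDomain.gcd_eq_gcd_ab, mul_comm g, mul_comm ((X : F[X]) ^ n - 1), map_add,
        LinearMap.add_apply, hmul', hmul', hEg, hXn, map_zero, map_zero, add_zero]
    have hednn : e.natDegree < n :=
      lt_of_le_of_lt (Polynomial.natDegree_le_of_dvd (EuclideanDomain.gcd_dvd_left _ _) hg0) hgdeg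
    have hedvd : e ∣ (X : F[X]) ^ n - 1 := EuclideanDomain.gcd_dvd_right _ _
    have hfac : cyclotomic n F * (X - 1) = (X : F[X]) ^ n - 1 := cyclotomic_prime_mul_X_sub_one F n
    have hΦirr := auxB_cyclotomic_irreducible p n hp hnp hne F horder
    have hΦmonic : (cyclotomic n F).Monic := cyclotomic.monic n F
    have hΦdeg : (cyclotomic n F).natDegree = n - 1 := by
      rw [natDegree_cyclotomic, Nat.totient_prime hnp]
    rcases hΦirr.isCoprime_or_dvd e with hcop | hdvd
    · -- e divides X - 1, so r^q = r, contradiction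
      have h1 : e ∣ (X - 1 : F[X]) := by
        apply hcop.symm.dvd_of_dvd_mul_left
        rw [hfac]
        exact hedvd
      obtain ⟨w, hw⟩ := h1
      have h2 : Polynomial.aeval T ((X : F[X]) - 1) r = 0 := by
        rw [hw, mul_comm, hmul', hEe, map_zero]
      rw [map_sub, aeval_X, map_one, LinearMap.sub_apply, Module.End.one_apply, hT1, sub_eq_zero] at h2
      have h3 : r ^ q ^ 1 = r := by rw [pow_one]; exact h2
      exact hfix 1 one_pos hn1 h3
    · -- cyclotomic divides e: the trace vanishes
      obtain ⟨w, hweq⟩ := hdvd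
      have hw0 : w ≠ 0 := by
        rintro rfl
        rw [mul_zero] at hweq
        exact he0 hweq
      have hwdeg : w.natDegree = 0 := by
        have h1 := Polynomial.natDegree_mul hΦmonic.ne_zero hw0
        rw [← hweq] at h1
        omega
      obtain ⟨w0, rfl⟩ := Polynomial.natDegree_eq_zero.1 hwdeg
      have hw00 : w0 ≠ 0 := by
        rintro rfl
        simp at hw0
      have hΦr : Polynomial.aeval T (cyclotomic n F) r = 0 := by
        have h1 : Polynomial.aeval T e r = w0 • Polynomial.aeval T (cyclotomic n F) r := by
          rw [hweq, mul_comm, map_mul, aeval_C, Module.End.mul_apply, Module.algebraMap_end_apply]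
        rw [hEe] at h1
        rcases smul_eq_zero.1 h1.symm with h | h
        · exact absurd h hw00
        · exact h
      have hsum0 : ∑ i : Fin n, v i = 0 := by
        rw [cyclotomic_prime F n, map_sum, LinearMap.sum_apply] at hΦr
        simp only [map_pow, aeval_X] at hΦr
        have h6 : ∑ i ∈ Finset.range n, r ^ q ^ i = 0 := by
          rw [← hΦr]
          exact Finset.sum_congr rfl fun i _ => (hTpow i r).symm
        rw [hv]
        exact (Fin.sum_univ_eq_sum_range (fun m => r ^ q ^ m) n).trans h6
      rw [hsum] at hsum0
      have h4 : f.coeff (n - 1) = 0 := by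
        have h5 := neg_eq_zero.1 hsum0
        exact (algebraMap F K).injective (by rw [h5, map_zero])
      exact hc0 h4
end

section
/- Let q be a prime power of characteristic p, and let n be a prime different from p such that q generates (ℤ/nℤ)^×. Let ε be a primitive n-th root of unity in an algebraic closure of F_q, and let α ∈ F_{q^n} with α ∉ F_q. Then for every i with 1 ≤ i ≤ n-1, the element ∑_{j=0}^{n-1} ε^{ij} α^{q^j} (computed in the algebraic closure) is nonzero. -/
private lemma sum_range_shift {R : Type*} [AddCommGroup R] (n : ℕ) (g : ℕ → R)
    (hg : g n = g 0) :
    ∑ j ∈ Finset.range n, g (j + 1) = ∑ j ∈ Finset.range n, g j := by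
  have h1 := Finset.sum_range_succ' g n
  have h2 := Finset.sum_range_succ g n
  rw [hg] at h2
  exact add_right_cancel (h1.symm.trans h2)

private lemma mem_range_of_pow_card {F K : Type*} [Field F] [Fintype F] [Field K] [Algebra F K]
    {β : K} (hβ : β ^ Fintype.card F = β) : β ∈ Set.range (algebraMap F K) := by
  classical
  by_contra h
  have hq : 1 < Fintype.card F := Fintype.one_lt_card
  set P : Polynomial K := Polynomial.X ^ Fintype.card F - Polynomial.X with hP
  have hPne : P ≠ 0 := FiniteField.X_pow_card_sub_X_ne_zero K hq
  have hdeg : P.natDegree = Fintype.card F := FiniteField.X_pow_card_sub_X_natDegree_eq K hq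
  have hroot : ∀ x : K, x ^ Fintype.card F = x → x ∈ P.roots := by
    intro x hx
    rw [Polynomial.mem_roots hPne]
    simp [Polynomial.IsRoot, hP, hx]
  set T : Finset K := insert β (Finset.univ.image (algebraMap F K)) with hT
  have hTsub : T ⊆ P.roots.toFinset := by
    intro x hx
    rw [Multiset.mem_toFinset]
    rw [hT, Finset.mem_insert] at hx
    rcases hx with rfl | hx
    · exact hroot _ hβ
    · obtain ⟨c, -, rfl⟩ := Finset.mem_image.mp hx
      apply hroot
      rw [← map_pow, FiniteField.pow_card]
  have hcardT : T.card = Fintype.card F + 1 := by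
    rw [hT, Finset.card_insert_of_notMem (by
        intro hmem
        obtain ⟨c, -, rfl⟩ := Finset.mem_image.mp hmem
        exact h ⟨c, rfl⟩),
      Finset.card_image_of_injective _ (algebraMap F K).injective, Finset.card_univ]
  have h1 := Finset.card_le_card hTsub
  have h2 : P.roots.toFinset.card ≤ Multiset.card P.roots := Multiset.toFinset_card_le _
  have h3 := P.card_roots'
  omega

/-- Let q be a prime power of characteristic p and n a prime ≠ p such that q generates
(ℤ/nℤ)^×. Let ε be a primitive n-th root of unity in an algebraic closure of F_q and
α ∈ F_{q^n} with α ∉ F_q. Then for all 1 ≤ i ≤ n-1, ∑_{j=0}^{n-1} ε^{ij} α^{q^j} ≠ 0. -/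
theorem stmt12 (p n : ℕ) (hp : p.Prime) (hnp : n.Prime) (hne : n ≠ p)
    (F K Ω : Type*) [Field F] [Fintype F] [CharP F p]
    [Field K] [Algebra F K] [Field Ω] [Algebra K Ω] [Algebra F Ω] [IsScalarTower F K Ω]
    [IsAlgClosed Ω] [Algebra.IsAlgebraic F Ω]
    (horder : orderOf ((Fintype.card F : ZMod n)) = n - 1)
    (hrank : Module.finrank F K = n)
    (ε : Ω) (hε : IsPrimitiveRoot ε n)
    (α : K) (hα : α ∉ Set.range (algebraMap F K)) :
    ∀ i : ℕ, 1 ≤ i → i ≤ n - 1 →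
      ∑ j ∈ Finset.range n, ε ^ (i * j) * (algebraMap K Ω α) ^ (Fintype.card F) ^ j ≠ 0 := by
  classical
  intro i hi1 hi2 hS
  haveI : Fact p.Prime := ⟨hp⟩
  haveI : Fact n.Prime := ⟨hnp⟩
  have hn2 : 2 ≤ n := hnp.two_le
  set q := Fintype.card F with hqdef
  have hq1 : 1 < q := Fintype.one_lt_card
  haveI : FiniteDimensional F K := Module.finite_of_finrank_pos (by rw [hrank]; omega)
  haveI : Finite K := Module.finite_of_finite (R := F)
  haveI : Fintype K := Fintype.ofFinite K
  have hcardK : Fintype.card K = q ^ n := by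
    rw [Module.card_eq_pow_finrank (K := F) (V := K), hrank]
  haveI hΩchar : CharP Ω p := charP_of_injective_algebraMap (algebraMap F Ω).injective p
  haveI hKchar : CharP K p := charP_of_injective_algebraMap (algebraMap F K).injective p
  haveI : ExpChar Ω p := .prime hp
  haveI : ExpChar K p := .prime hp
  obtain ⟨k, -, hqk⟩ := FiniteField.card F p
  rw [← hqdef] at hqk
  set A := algebraMap K Ω α with hA
  have hAq : A ^ q ^ n = A := by
    rw [hA, ← map_pow, ← hcardK, FiniteField.pow_card]
  have hε1 : ε ^ n = 1 := hε.pow_eq_one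
  let S : ℕ → Ω := fun m => ∑ j ∈ Finset.range n, ε ^ (m * j) * A ^ q ^ j
  have hSdef : ∀ m, S m = ∑ j ∈ Finset.range n, ε ^ (m * j) * A ^ q ^ j := fun _ => rfl
  have hSi : S i = 0 := (hSdef i).trans hS
  -- S only depends on the argument mod n
  have hSmod : ∀ m, S m = S (m % n) := by
    intro m
    rw [hSdef, hSdef]
    refine Finset.sum_congr rfl fun j _ => ?_
    congr 1
    conv_lhs => rw [← Nat.div_add_mod m n]
    rw [add_mul, pow_add, mul_assoc, pow_mul, hε1, one_pow, one_mul]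
  have hcongr : ∀ a b : ℕ, (a : ZMod n) = (b : ZMod n) → S a = S b := by
    intro a b hab
    rw [hSmod a, hSmod b, (ZMod.natCast_eq_natCast_iff' a b n).mp hab]
  -- Frobenius step
  have hfrob : ∀ (f : ℕ → Ω), (∑ j ∈ Finset.range n, f j) ^ q = ∑ j ∈ Finset.range n, f j ^ q := by
    intro f; rw [hqk]; exact sum_pow_char_pow (R := Ω) p _ _ _
  have hstep : ∀ m, S (m * q) = ε ^ (m * q) * S m ^ q := by
    intro m
    have hg : (fun j => ε ^ (m * q * j) * A ^ q ^ j) n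
        = (fun j => ε ^ (m * q * j) * A ^ q ^ j) 0 := by
      simp only [mul_zero, pow_zero, pow_one, one_mul]
      rw [show m * q * n = n * (m * q) by ring, pow_mul, hε1, one_pow, one_mul, hAq]
    calc S (m * q) = ∑ j ∈ Finset.range n, ε ^ (m * q * j) * A ^ q ^ j := hSdef _
      _ = ∑ j ∈ Finset.range n, ε ^ (m * q * (j + 1)) * A ^ q ^ (j + 1) :=
          (sum_range_shift n (fun j => ε ^ (m * q * j) * A ^ q ^ j) hg).symm
      _ = ε ^ (m * q) * S m ^ q := by
        rw [hSdef, hfrob, Finset.mul_sum]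
        refine Finset.sum_congr rfl fun j _ => ?_
        rw [mul_pow, ← pow_mul, ← pow_mul, ← pow_succ, ← mul_assoc, ← pow_add,
          show m * q + m * j * q = m * q * (j + 1) by ring]
  -- S vanishes on the orbit of i under multiplication by q
  have hvt : ∀ t : ℕ, S (i * q ^ t) = 0 := by
    intro t
    induction t with
    | zero => rw [pow_zero, mul_one]; exact hSi
    | succ t ih =>
      rw [show i * q ^ (t + 1) = i * q ^ t * q by ring, hstep, ih,
        zero_pow (by omega : q ≠ 0), mul_zero]
  -- hence S vanishes at every m not divisible by n
  have hvanish : ∀ m : ℕ, ¬ (n ∣ m) → S m = 0 := by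
    intro m hm
    have hiu : (i : ZMod n) ≠ 0 := by
      rw [Ne, ZMod.natCast_eq_zero_iff]
      intro hdvd
      have := Nat.le_of_dvd (by omega) hdvd
      omega
    have hmu : (m : ZMod n) ≠ 0 := by
      rw [Ne, ZMod.natCast_eq_zero_iff]; exact hm
    have hqne : (q : ZMod n) ≠ 0 := by
      intro h0
      have hqpow : (q : ZMod n) ^ (n - 1) = 1 := by
        rw [← horder]; exact pow_orderOf_eq_one _
      rw [h0, zero_pow (by omega : n - 1 ≠ 0)] at hqpow
      exact zero_ne_one hqpow
    set u : (ZMod n)ˣ := Units.mk0 _ hqne with hu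
    have huord : orderOf u = n - 1 := by
      rw [← orderOf_units]
      simpa [hu] using horder
    have htop : Subgroup.zpowers u = ⊤ := by
      apply Subgroup.eq_top_of_card_eq
      rw [Nat.card_zpowers, huord, Nat.card_eq_fintype_card, ZMod.card_units_eq_totient,
        Nat.totient_prime hnp]
    set w : (ZMod n)ˣ := Units.mk0 _ hmu * (Units.mk0 _ hiu)⁻¹ with hw
    have hwz : w ∈ Subgroup.zpowers u := htop ▸ Subgroup.mem_top w
    obtain ⟨t, ht⟩ := (isOfFinOrder_of_finite u).mem_powers_iff_mem_zpowers.mpr hwz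
    have hval : (q : ZMod n) ^ t = (m : ZMod n) * (i : ZMod n)⁻¹ := by
      have := congrArg (Units.val) ht
      simpa [hw, hu, Units.val_pow_eq_pow_val] using this
    have hcast : ((i * q ^ t : ℕ) : ZMod n) = ((m : ℕ) : ZMod n) := by
      push_cast
      rw [hval, mul_comm ((m : ZMod n)) _, ← mul_assoc, mul_inv_cancel₀ hiu, one_mul]
    exact (hcongr m (i * q ^ t) hcast.symm).trans (hvt t)
  -- geometric sums
  have hgeom : ∀ j ∈ Finset.range n,
      (∑ m ∈ Finset.range n, ε ^ (m * j)) = if j = 0 then (n : Ω) else 0 := by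
    intro j hj
    rw [Finset.mem_range] at hj
    by_cases h0 : j = 0
    · simp [h0]
    · rw [if_neg h0]
      have hne1 : ε ^ j ≠ 1 := hε.pow_ne_one_of_pos_of_lt h0 hj
      have hrw : (∑ m ∈ Finset.range n, ε ^ (m * j)) = ∑ m ∈ Finset.range n, (ε ^ j) ^ m := by
        refine Finset.sum_congr rfl fun m _ => ?_
        rw [← pow_mul, mul_comm]
      rw [hrw, geom_sum_eq hne1, ← pow_mul, mul_comm j n, pow_mul, hε1, one_pow,
        sub_self, zero_div]
  have htotal : (∑ m ∈ Finset.range n, S m) = (n : Ω) * A := by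
    calc ∑ m ∈ Finset.range n, S m
        = ∑ m ∈ Finset.range n, ∑ j ∈ Finset.range n, ε ^ (m * j) * A ^ q ^ j :=
          Finset.sum_congr rfl fun m _ => hSdef m
      _ = ∑ j ∈ Finset.range n, ∑ m ∈ Finset.range n, ε ^ (m * j) * A ^ q ^ j :=
          Finset.sum_comm
      _ = ∑ j ∈ Finset.range n, (∑ m ∈ Finset.range n, ε ^ (m * j)) * A ^ q ^ j := by
          refine Finset.sum_congr rfl fun j _ => ?_
          rw [Finset.sum_mul]
      _ = ∑ j ∈ Finset.range n, (if j = 0 then (n : Ω) else 0) * A ^ q ^ j := by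
          refine Finset.sum_congr rfl fun j hj => ?_
          rw [hgeom j hj]
      _ = (n : Ω) * A := by
          rw [Finset.sum_eq_single_of_mem 0 (Finset.mem_range.mpr (by omega))
            (fun j _ hj0 => by rw [if_neg hj0, zero_mul])]
          simp
  have hsum0 : (∑ m ∈ Finset.range n, S m) = S 0 := by
    apply Finset.sum_eq_single_of_mem 0 (Finset.mem_range.mpr (by omega))
    intro m hm hm0
    apply hvanish m
    intro hdvd
    rw [Finset.mem_range] at hm
    have := Nat.le_of_dvd (Nat.pos_of_ne_zero hm0) hdvd
    omega
  have hS0 : S 0 = (n : Ω) * A := hsum0.symm.trans htotal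
  -- the trace-like element lies in F
  have hβfix : (∑ j ∈ Finset.range n, α ^ q ^ j) ^ q = ∑ j ∈ Finset.range n, α ^ q ^ j := by
    have hsumpowK : (∑ j ∈ Finset.range n, α ^ q ^ j) ^ q
        = ∑ j ∈ Finset.range n, (α ^ q ^ j) ^ q := by
      rw [hqk]; exact sum_pow_char_pow (R := K) p _ _ _
    rw [hsumpowK]
    calc ∑ j ∈ Finset.range n, (α ^ q ^ j) ^ q
        = ∑ j ∈ Finset.range n, α ^ q ^ (j + 1) := by
          refine Finset.sum_congr rfl fun j _ => ?_
          rw [← pow_mul, ← pow_succ]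
      _ = ∑ j ∈ Finset.range n, α ^ q ^ j := by
          apply sum_range_shift n (fun j => α ^ q ^ j)
          simp only [pow_zero, pow_one]
          rw [← hcardK, FiniteField.pow_card]
  have hS0' : S 0 = algebraMap K Ω (∑ j ∈ Finset.range n, α ^ q ^ j) := by
    rw [hSdef 0, map_sum]
    refine Finset.sum_congr rfl fun j _ => ?_
    rw [zero_mul, pow_zero, one_mul, map_pow]
  have hβ : algebraMap K Ω (∑ j ∈ Finset.range n, α ^ q ^ j) = algebraMap K Ω ((n : K) * α) := by
    rw [← hS0', hS0, map_mul, map_natCast]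
  have hβK : (∑ j ∈ Finset.range n, α ^ q ^ j) = (n : K) * α :=
    (algebraMap K Ω).injective hβ
  have hnK : (n : K) ≠ 0 := by
    rw [Ne, CharP.cast_eq_zero_iff K p]
    intro hdvd
    exact hne ((Nat.prime_dvd_prime_iff_eq hp hnp).mp hdvd).symm
  rw [hqdef] at hβfix
  obtain ⟨b, hb⟩ := mem_range_of_pow_card hβfix
  apply hα
  refine ⟨(n : F)⁻¹ * b, ?_⟩
  rw [map_mul, map_inv₀, map_natCast, hb]
  rw [← hqdef] at *
  rw [hβK, inv_mul_cancel_left₀ hnK]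
end
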